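/- arXiv:2505.12271 — 6 statements merged into one kernel-verified Lean document; each statement's English description precedes it below -/
import Mathlib

section
/- Let L : ℝ[X] → ℝ be a linear functional and (P_k)_{k≥0} monic real polynomials with deg P_k = k such that L(P_j·P_k) = 0 for j ≠ k and L(P_k²) ≠ 0 for all k. Define the inversion coefficients a(n,l) := L(X^n·P_l)/L(P_l²) and the linearisation coefficients b(n,m,j) := L(P_n·P_m·P_j)/L(P_j²). Let α be a nonzero real number and set p_k(X) := α^k·P_k(X/α) (the monic degree-k polynomial obtained by rescaling). Then for all integers p, k ≥ 0 one has the identity in ℝ[X]: X^p·p_k(X) = Σ_{j=0}^{k+p} [ α^{p+k−j} · Σ_{l=max(j−k,0)}^{p} a(p,l)·b(l,k,j) ] · p_j(X). -/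
open Polynomial Finset
lemma expand_exists (P : ℕ → Polynomial ℝ)
    (hmonic : ∀ k, (P k).Monic) (hdeg : ∀ k, (P k).natDegree = k) :
    ∀ n (f : Polynomial ℝ), f.natDegree ≤ n →
      ∃ c : ℕ → ℝ, f = ∑ j ∈ Finset.range (n+1), c j • P j := by
  intro n
  induction n with
  | zero =>
    intro f hf
    have hP0 : P 0 = 1 := ((hmonic 0).natDegree_eq_zero).mp (hdeg 0)
    refine ⟨fun _ => f.coeff 0, ?_⟩
    simp [hP0, Polynomial.smul_eq_C_mul]
    exact Polynomial.eq_C_of_natDegree_le_zero hf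
  | succ n ih =>
    intro f hf
    set g := f - f.coeff (n+1) • P (n+1) with hgdef
    have hg : g.natDegree ≤ n := by
      rw [Polynomial.natDegree_le_iff_coeff_eq_zero]
      intro m hm
      simp only [hgdef, Polynomial.coeff_sub, Polynomial.coeff_smul, smul_eq_mul]
      rcases eq_or_lt_of_le (Nat.succ_le_of_lt hm) with h | h
      · have : (P (n+1)).coeff (n+1) = 1 := by
          have := (hmonic (n+1)).coeff_natDegree
          rwa [hdeg] at this
        rw [← h, this, mul_one, sub_self]
      · have e1 : f.coeff m = 0 := Polynomial.coeff_eq_zero_of_natDegree_lt (lt_of_le_of_lt hf h)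
        have e2 : (P (n+1)).coeff m = 0 :=
          Polynomial.coeff_eq_zero_of_natDegree_lt (by rw [hdeg]; exact h)
        rw [e1, e2]; ring
    obtain ⟨c, hc⟩ := ih g hg
    refine ⟨fun j => if j = n+1 then f.coeff (n+1) else c j, ?_⟩
    rw [Finset.sum_range_succ]
    simp only [if_pos rfl]
    have h2 : ∑ j ∈ Finset.range (n+1),
        (if j = n+1 then f.coeff (n+1) else c j) • P j = ∑ j ∈ Finset.range (n+1), c j • P j := by
      refine Finset.sum_congr rfl fun j hj => ?_
      rw [if_neg]
      simp at hj; omega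
    rw [h2, ← hc, hgdef]
    simp

lemma L_expand (L : Polynomial ℝ →ₗ[ℝ] ℝ) (P : ℕ → Polynomial ℝ)
    (horth : ∀ j k, j ≠ k → L (P j * P k) = 0)
    (N : ℕ) (c : ℕ → ℝ) (i : ℕ) :
    L ((∑ j ∈ Finset.range N, c j • P j) * P i) =
      (if i ∈ Finset.range N then c i else 0) * L (P i * P i) := by
  rw [Finset.sum_mul]
  simp only [smul_mul_assoc]
  rw [map_sum]
  simp only [LinearMap.map_smul, smul_eq_mul]
  by_cases hi : i ∈ Finset.range N
  · rw [if_pos hi]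
    exact Finset.sum_eq_single_of_mem i hi (fun j _ hji => by rw [horth j i hji, mul_zero])
  · rw [if_neg hi, zero_mul]
    apply Finset.sum_eq_zero (fun j hj => ?_)
    rw [horth j i (by intro h; exact hi (h ▸ hj))]
    ring

lemma coeff_formula (L : Polynomial ℝ →ₗ[ℝ] ℝ) (P : ℕ → Polynomial ℝ)
    (horth : ∀ j k, j ≠ k → L (P j * P k) = 0)
    (hnz : ∀ k, L (P k * P k) ≠ 0)
    (N : ℕ) (c : ℕ → ℝ) (f : Polynomial ℝ)
    (hf : f = ∑ j ∈ Finset.range N, c j • P j) (i : ℕ) (hi : i ∈ Finset.range N) :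
    c i = L (f * P i) / L (P i * P i) := by
  rw [hf, L_expand L P horth, if_pos hi, mul_div_assoc, div_self (hnz i), mul_one]

lemma unscaled (L : Polynomial ℝ →ₗ[ℝ] ℝ) (P : ℕ → Polynomial ℝ)
    (hmonic : ∀ k, (P k).Monic) (hdeg : ∀ k, (P k).natDegree = k)
    (horth : ∀ j k, j ≠ k → L (P j * P k) = 0)
    (hnz : ∀ k, L (P k * P k) ≠ 0)
    (a : ℕ → ℕ → ℝ)
    (ha : ∀ n l, a n l = L (Polynomial.X ^ n * P l) / L (P l * P l))
    (b : ℕ → ℕ → ℕ → ℝ)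
    (hb : ∀ n m j, b n m j = L (P n * P m * P j) / L (P j * P j))
    (pp k : ℕ) :
    Polynomial.X ^ pp * P k =
      ∑ j ∈ Finset.range (k + pp + 1),
        (∑ l ∈ Finset.Icc (j - k) pp, a pp l * b l k j) • P j := by
  -- expansion of X^pp
  obtain ⟨c, hc⟩ := expand_exists P hmonic hdeg pp (Polynomial.X ^ pp)
    (Polynomial.natDegree_X_pow_le pp)
  have hcval : ∀ l ∈ Finset.range (pp + 1), c l = a pp l := fun l hl => by
    rw [ha, coeff_formula L P horth hnz (pp+1) c _ hc l hl]
  -- expansion of products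
  have hprod : ∀ l, P l * P k = ∑ j ∈ Finset.range (l + k + 1), b l k j • P j := by
    intro l
    obtain ⟨d, hd⟩ := expand_exists P hmonic hdeg (l + k) (P l * P k)
      (by rw [(hmonic l).natDegree_mul (hmonic k), hdeg, hdeg])
    rw [hd]
    refine Finset.sum_congr rfl fun j hj => ?_
    rw [hb, ← coeff_formula L P horth hnz (l+k+1) d _ hd j hj]
  -- b vanishes above degree
  have hbz : ∀ l j, l + k < j → b l k j = 0 := by
    intro l j hlj
    obtain ⟨d, hd⟩ := expand_exists P hmonic hdeg (l + k) (P l * P k)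
      (by rw [(hmonic l).natDegree_mul (hmonic k), hdeg, hdeg])
    rw [hb, hd, L_expand L P horth, if_neg (by simp; omega), zero_mul, zero_div]
  calc Polynomial.X ^ pp * P k
      = (∑ l ∈ Finset.range (pp + 1), c l • P l) * P k := by rw [← hc]
    _ = ∑ l ∈ Finset.range (pp + 1), a pp l • (P l * P k) := by
        rw [Finset.sum_mul]
        exact Finset.sum_congr rfl fun l hl => by rw [hcval l hl, smul_mul_assoc]
    _ = ∑ l ∈ Finset.range (pp + 1), ∑ j ∈ Finset.range (k + pp + 1),
          (a pp l * b l k j) • P j := by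
        refine Finset.sum_congr rfl fun l hl => ?_
        simp only [Finset.mem_range] at hl
        rw [hprod l, Finset.smul_sum]
        simp only [smul_smul]
        exact Finset.sum_subset (Finset.range_subset_range.2 (by omega))
          (fun j _ hj => by rw [hbz l j (by simp at hj; omega), mul_zero, zero_smul])
    _ = ∑ j ∈ Finset.range (k + pp + 1),
          (∑ l ∈ Finset.Icc (j - k) pp, a pp l * b l k j) • P j := by
        rw [Finset.sum_comm]
        refine Finset.sum_congr rfl fun j hj => ?_
        rw [Finset.sum_smul]
        rw [← Finset.sum_subset (show Finset.Icc (j-k) pp ⊆ Finset.range (pp+1) by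
              intro l hl; simp at hl ⊢; omega)
            (fun l hl hl2 => by
              rw [hbz l j (by simp at hl hl2; omega), mul_zero, zero_smul])]

/-- Scaling lemma for planar orthogonal polynomials: if `P k` are monic
orthogonal polynomials for a linear functional `L` on `ℝ[X]`, with inversion coefficients
`a` and linearisation coefficients `b`, and `p k (X) = α ^ k • P k (X / α)`, then
`X ^ p * p k = ∑_{j=0}^{k+p} (α ^ (p+k-j) * ∑_{l=max(j-k,0)}^{p} a p l * b l k j) • p j`. -/
theorem scaling_lemma
    (L : Polynomial ℝ →ₗ[ℝ] ℝ) (P : ℕ → Polynomial ℝ)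
    (hmonic : ∀ k, (P k).Monic) (hdeg : ∀ k, (P k).natDegree = k)
    (horth : ∀ j k, j ≠ k → L (P j * P k) = 0)
    (hnz : ∀ k, L (P k * P k) ≠ 0)
    (α : ℝ) (hα : α ≠ 0)
    (p : ℕ → Polynomial ℝ)
    (hp : ∀ k, p k = α ^ k • (P k).comp (Polynomial.C α⁻¹ * Polynomial.X))
    (a : ℕ → ℕ → ℝ)
    (ha : ∀ n l, a n l = L (Polynomial.X ^ n * P l) / L (P l * P l))
    (b : ℕ → ℕ → ℕ → ℝ)
    (hb : ∀ n m j, b n m j = L (P n * P m * P j) / L (P j * P j))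
    (pp k : ℕ) :
    Polynomial.X ^ pp * p k =
      ∑ j ∈ Finset.range (k + pp + 1),
        (α ^ (pp + k - j) * ∑ l ∈ Finset.Icc (j - k) pp, a pp l * b l k j) • p j := by
  set q : Polynomial ℝ := Polynomial.C α⁻¹ * Polynomial.X with hq
  have E := unscaled L P hmonic hdeg horth hnz a ha b hb pp k
  have Ec := congrArg (fun f : Polynomial ℝ => (α:ℝ)^(pp+k) • f.comp q) E
  simp only [Polynomial.mul_comp, Polynomial.pow_comp, Polynomial.X_comp,
    Polynomial.sum_comp, Polynomial.smul_comp, Finset.smul_sum] at Ec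
  -- LHS of Ec
  have hql : q ^ pp = (α⁻¹ ^ pp) • Polynomial.X ^ pp := by
    rw [hq, mul_pow, ← Polynomial.C_pow, Polynomial.smul_eq_C_mul]
  rw [hql] at Ec
  have hLHS : (α:ℝ)^(pp+k) • ((α⁻¹ ^ pp) • Polynomial.X ^ pp * (P k).comp q)
      = Polynomial.X ^ pp * p k := by
    rw [hp k, smul_mul_assoc, smul_smul, mul_smul_comm]
    congr 1
    rw [pow_add]
    field_simp
    rw [one_div_pow, mul_one_div_cancel (pow_ne_zero _ hα)]
  rw [hLHS] at Ec
  rw [Ec]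
  refine Finset.sum_congr rfl fun j hj => ?_
  simp only [Finset.mem_range] at hj
  rw [hp j, smul_smul, smul_smul]
  congr 1
  have hje : pp + k - j + j = pp + k := by omega
  calc α ^ (pp + k) * ∑ l ∈ Finset.Icc (j - k) pp, a pp l * b l k j
      = α ^ (pp + k - j) * α ^ j * ∑ l ∈ Finset.Icc (j - k) pp, a pp l * b l k j := by
        rw [← pow_add, hje]
    _ = α ^ (pp + k - j) * (∑ l ∈ Finset.Icc (j - k) pp, a pp l * b l k j) * α ^ j := by ring
end

section
/- Let ω : ℂ → [0,∞) be measurable with ∫_ℂ |z|^m ω(z) dA(z) < ∞ for every m ∈ ℕ, and let (p_k)_{k≥0} be monic polynomials with real coefficients, deg p_k = k, satisfying ∫_ℂ p_j(z)·conj(p_k(z))·ω(z) dA(z) = h_k·δ_{jk} with h_k > 0 and a three-term recurrence z·p_k(z) = p_{k+1}(z) + b_k·p_k(z) + c_k·p_{k−1}(z) (p_{−1} := 0). Define A(p,j,k) by z^p·p_k(z) = Σ_{j=0}^{k+p} A(p,j,k)·p_j(z). Assume h_{2l+1} − c_{2l+1}·h_{2l} ≠ 0 for all l, set λ_l := (h_{2l+2}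 − c_{2l+2}·h_{2l+1})/(h_{2l+1} − c_{2l+1}·h_{2l}), μ(k,j) := Π_{l=j}^{k−1} λ_l, r_k := 2·(h_{2k+1} − c_{2k+1}·h_{2k}), and define q_{2k+1}(z) := p_{2k+1}(z), q_{2k}(z) := Σ_{j=0}^{k} μ(k,j)·p_{2j}(z). Assume the q's are skew-orthogonal with respect to ⟨f,g⟩_s := ∫_ℂ (f(z)·conj(g(z)) − g(z)·conj(f(z)))·(conj(z) − z)·ω(z) dA(z), i.e. ⟨q_{2j},q_{2k}⟩_s = ⟨q_{2j+1},q_{2k+1}⟩_s = 0 and ⟨q_{2j+1},q_{2k}⟩_s = r_k·δ_{jk}. Then for all N ≥ 1 and integers p ≥ 0: ∫_ℂ z^{p}·(conj(z) − z)·Σ_{k=0}^{N−1} (q_{2k+1}(z)·q_{2k}(conj(z)) − q_{2k}(z)·q_{2k+1}(conj(z)))/r_k · ω(z) dA(z) = (1/2)·Σ_{k=0}^{2N−1} A(p,k,k) − (1/2)·Σ_{j=0}^{N−1} μ(N,j)·A(p,2N,2j). -/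
open Polynomial Finset MeasureTheory

/-- The skew-symmetric form `⟨f,g⟩_s = ∫_ℂ (f(z) conj(g(z)) - g(z) conj(f(z))) (conj z - z) ω(z) dA(z)`,
where `dA` is Lebesgue measure divided by `π`. -/
noncomputable def skewProd (ω : ℂ → ℝ) (f g : Polynomial ℝ) : ℂ :=
  (1 / (Real.pi : ℂ)) * ∫ z : ℂ,
    (Polynomial.aeval z f * (starRingEnd ℂ) (Polynomial.aeval z g)
      - Polynomial.aeval z g * (starRingEnd ℂ) (Polynomial.aeval z f)) *
    ((starRingEnd ℂ) z - z) * (ω z : ℂ)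


lemma aeval_conj (f : Polynomial ℝ) (z : ℂ) :
    Polynomial.aeval ((starRingEnd ℂ) z) f = (starRingEnd ℂ) (Polynomial.aeval z f) := by
  have := Polynomial.aeval_algHom_apply (Complex.conjAe.toAlgHom) z f
  simpa using this

lemma norm_aeval_le (f : Polynomial ℝ) (z : ℂ) : ‖(Polynomial.aeval z f : ℂ)‖ ≤
    ∑ i ∈ Finset.range (f.natDegree + 1), |f.coeff i| * ‖z‖ ^ i := by
  rw [Polynomial.aeval_eq_sum_range]
  refine (norm_sum_le _ _).trans ?_
  apply Finset.sum_le_sum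
  intro i _
  rw [norm_smul]
  simp [map_pow]

lemma integrable_poly_pair (ω : ℂ → ℝ) (hω_meas : Measurable ω) (hω_pos : ∀ z, 0 ≤ ω z)
    (hmom : ∀ m : ℕ, Integrable (fun z : ℂ => ‖z‖ ^ m * ω z))
    (f g : Polynomial ℝ) :
    Integrable (fun z : ℂ =>
      Polynomial.aeval z f * Polynomial.aeval ((starRingEnd ℂ) z) g * (ω z : ℂ)) := by
  set df := f.natDegree + 1
  set dg := g.natDegree + 1
  have hbint : Integrable (fun z : ℂ => ∑ i ∈ Finset.range df, ∑ j ∈ Finset.range dg,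
      |f.coeff i| * |g.coeff j| * (‖z‖ ^ (i + j) * ω z)) := by
    apply integrable_finset_sum
    intro i _
    apply integrable_finset_sum
    intro j _
    exact (hmom (i + j)).const_mul _
  refine Integrable.mono' hbint ?_ ?_
  · apply AEStronglyMeasurable.mul
    · apply AEStronglyMeasurable.mul
      · exact f.continuous_aeval.aestronglyMeasurable
      · exact (g.continuous_aeval.comp Complex.continuous_conj).aestronglyMeasurable
    · exact (Complex.measurable_ofReal.comp hω_meas).aestronglyMeasurable
  · filter_upwards with z
    have h1 := norm_aeval_le f z
    have h2 := norm_aeval_le g ((starRingEnd ℂ) z)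
    have habs : ‖(starRingEnd ℂ) z‖ = ‖z‖ := Complex.norm_conj z
    rw [habs] at h2
    have hnn1 : (0:ℝ) ≤ ∑ i ∈ Finset.range df, |f.coeff i| * ‖z‖ ^ i := by positivity
    calc ‖Polynomial.aeval z f * Polynomial.aeval ((starRingEnd ℂ) z) g * (ω z : ℂ)‖
        = ‖(Polynomial.aeval z f : ℂ)‖ * ‖(Polynomial.aeval ((starRingEnd ℂ) z) g : ℂ)‖ * ω z := by
          rw [norm_mul, norm_mul]
          simp [abs_of_nonneg (hω_pos z)]
      _ ≤ (∑ i ∈ Finset.range df, |f.coeff i| * ‖z‖ ^ i) *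
            (∑ j ∈ Finset.range dg, |g.coeff j| * ‖z‖ ^ j) * ω z := by
          apply mul_le_mul_of_nonneg_right _ (hω_pos z)
          exact mul_le_mul h1 h2 (norm_nonneg _) hnn1
      _ = ∑ i ∈ Finset.range df, ∑ j ∈ Finset.range dg,
            |f.coeff i| * |g.coeff j| * (‖z‖ ^ (i + j) * ω z) := by
          rw [Finset.sum_mul_sum, Finset.sum_mul]
          refine Finset.sum_congr rfl fun i _ => ?_
          rw [Finset.sum_mul]
          exact Finset.sum_congr rfl fun j _ => by ring

/-- The sesquilinear-type pairing `M(f,g) = (1/π)∫ f(z) g(z̄) ω(z)`. -/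
noncomputable def MP (ω : ℂ → ℝ) (f g : Polynomial ℝ) : ℂ :=
  (1 / (Real.pi : ℂ)) * ∫ z : ℂ,
    Polynomial.aeval z f * Polynomial.aeval ((starRingEnd ℂ) z) g * (ω z : ℂ)

section MPlem
variable (ω : ℂ → ℝ) (hω_meas : Measurable ω) (hω_pos : ∀ z, 0 ≤ ω z)
    (hmom : ∀ m : ℕ, Integrable (fun z : ℂ => ‖z‖ ^ m * ω z))


lemma MP_zero_left (g : Polynomial ℝ) : MP ω 0 g = 0 := by
  unfold MP
  have : (fun z : ℂ => Polynomial.aeval z (0 : Polynomial ℝ)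
      * Polynomial.aeval ((starRingEnd ℂ) z) g * (ω z : ℂ)) = fun _ => 0 := by
    funext z; simp
  rw [this, integral_zero, mul_zero]

lemma MP_zero_right (f : Polynomial ℝ) : MP ω f 0 = 0 := by
  unfold MP
  have : (fun z : ℂ => Polynomial.aeval z f
      * Polynomial.aeval ((starRingEnd ℂ) z) (0 : Polynomial ℝ) * (ω z : ℂ)) = fun _ => 0 := by
    funext z; simp
  rw [this, integral_zero, mul_zero]

include hω_meas hω_pos hmom in
lemma MP_add_left (f₁ f₂ g : Polynomial ℝ) : MP ω (f₁ + f₂) g = MP ω f₁ g + MP ω f₂ g := by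
  unfold MP
  rw [← mul_add, ← integral_add (integrable_poly_pair ω hω_meas hω_pos hmom f₁ g)
    (integrable_poly_pair ω hω_meas hω_pos hmom f₂ g)]
  congr 1
  apply integral_congr_ae
  filter_upwards with z
  simp [map_add]; ring

include hω_meas hω_pos hmom in
lemma MP_add_right (f g₁ g₂ : Polynomial ℝ) : MP ω f (g₁ + g₂) = MP ω f g₁ + MP ω f g₂ := by
  unfold MP
  rw [← mul_add, ← integral_add (integrable_poly_pair ω hω_meas hω_pos hmom f g₁)
    (integrable_poly_pair ω hω_meas hω_pos hmom f g₂)]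
  congr 1
  apply integral_congr_ae
  filter_upwards with z
  simp [map_add]; ring

lemma MP_Cmul_left (a : ℝ) (f g : Polynomial ℝ) : MP ω (C a * f) g = (a : ℂ) * MP ω f g := by
  unfold MP
  have : (fun z : ℂ => Polynomial.aeval z (C a * f)
      * Polynomial.aeval ((starRingEnd ℂ) z) g * (ω z : ℂ))
      = fun z : ℂ => (a : ℂ) * (Polynomial.aeval z f
      * Polynomial.aeval ((starRingEnd ℂ) z) g * (ω z : ℂ)) := by
    funext z; simp [map_mul]; ring
  rw [this, integral_const_mul]; ring

lemma MP_Cmul_right (a : ℝ) (f g : Polynomial ℝ) : MP ω f (C a * g) = (a : ℂ) * MP ω f g := by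
  unfold MP
  have : (fun z : ℂ => Polynomial.aeval z f
      * Polynomial.aeval ((starRingEnd ℂ) z) (C a * g) * (ω z : ℂ))
      = fun z : ℂ => (a : ℂ) * (Polynomial.aeval z f
      * Polynomial.aeval ((starRingEnd ℂ) z) g * (ω z : ℂ)) := by
    funext z; simp [map_mul]; ring
  rw [this, integral_const_mul]; ring

include hω_meas hω_pos hmom in
lemma MP_sum_left (s : Finset ℕ) (cf : ℕ → ℝ) (u : ℕ → Polynomial ℝ) (g : Polynomial ℝ) :
    MP ω (∑ j ∈ s, C (cf j) * u j) g = ∑ j ∈ s, (cf j : ℂ) * MP ω (u j) g := by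
  classical
  induction s using Finset.induction with
  | empty => simp [MP_zero_left]
  | insert _ _ hnot ih =>
      rw [Finset.sum_insert hnot, MP_add_left ω hω_meas hω_pos hmom,
        MP_Cmul_left ω, ih, Finset.sum_insert hnot]

include hω_meas hω_pos hmom in
lemma MP_sum_right (s : Finset ℕ) (cg : ℕ → ℝ) (u : ℕ → Polynomial ℝ) (f : Polynomial ℝ) :
    MP ω f (∑ j ∈ s, C (cg j) * u j) = ∑ j ∈ s, (cg j : ℂ) * MP ω f (u j) := by
  classical
  induction s using Finset.induction with
  | empty => simp [MP_zero_right]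
  | insert _ _ hnot ih =>
      rw [Finset.sum_insert hnot, MP_add_right ω hω_meas hω_pos hmom,
        MP_Cmul_right ω, ih, Finset.sum_insert hnot]

end MPlem


section Slem
variable (ω : ℂ → ℝ) (hω_meas : Measurable ω) (hω_pos : ∀ z, 0 ≤ ω z)
    (hmom : ∀ m : ℕ, Integrable (fun z : ℂ => ‖z‖ ^ m * ω z))

include hω_meas hω_pos hmom in
lemma skewProd_eq (f g : Polynomial ℝ) : skewProd ω f g =
    MP ω f (X * g) - MP ω (X * f) g - MP ω g (X * f) + MP ω (X * g) f := by
  have hint := integrable_poly_pair ω hω_meas hω_pos hmom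
  unfold skewProd MP
  have hpt : (fun z : ℂ =>
      (Polynomial.aeval z f * (starRingEnd ℂ) (Polynomial.aeval z g)
        - Polynomial.aeval z g * (starRingEnd ℂ) (Polynomial.aeval z f)) *
      ((starRingEnd ℂ) z - z) * (ω z : ℂ))
      = fun z : ℂ =>
        (Polynomial.aeval z f * Polynomial.aeval ((starRingEnd ℂ) z) (X * g) * (ω z : ℂ)
          - Polynomial.aeval z (X * f) * Polynomial.aeval ((starRingEnd ℂ) z) g * (ω z : ℂ))
        - (Polynomial.aeval z g * Polynomial.aeval ((starRingEnd ℂ) z) (X * f) * (ω z : ℂ)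
          - Polynomial.aeval z (X * g) * Polynomial.aeval ((starRingEnd ℂ) z) f * (ω z : ℂ)) := by
    funext z
    simp only [map_mul, aeval_X, ← aeval_conj]
    ring
  have I1 : Integrable (fun z : ℂ =>
      Polynomial.aeval z f * Polynomial.aeval ((starRingEnd ℂ) z) (X * g) * (ω z : ℂ)
        - Polynomial.aeval z (X * f) * Polynomial.aeval ((starRingEnd ℂ) z) g * (ω z : ℂ)) :=
    (hint f (X*g)).sub (hint (X*f) g)
  have I2 : Integrable (fun z : ℂ =>
      Polynomial.aeval z g * Polynomial.aeval ((starRingEnd ℂ) z) (X * f) * (ω z : ℂ)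
        - Polynomial.aeval z (X * g) * Polynomial.aeval ((starRingEnd ℂ) z) f * (ω z : ℂ)) :=
    (hint g (X*f)).sub (hint (X*g) f)
  rw [hpt, integral_sub I1 I2, integral_sub (hint f (X*g)) (hint (X*f) g),
    integral_sub (hint g (X*f)) (hint (X*g) f)]
  ring

lemma skewProd_antisymm (f g : Polynomial ℝ) : skewProd ω g f = - skewProd ω f g := by
  unfold skewProd
  rw [← mul_neg, ← integral_neg]
  congr 1
  apply integral_congr_ae
  filter_upwards with z
  ring

include hω_meas hω_pos hmom in
lemma skewProd_Cmul_left (a : ℝ) (f g : Polynomial ℝ) :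
    skewProd ω (C a * f) g = (a : ℂ) * skewProd ω f g := by
  have hXc : X * (C a * f) = C a * (X * f) := by ring
  rw [skewProd_eq ω hω_meas hω_pos hmom, skewProd_eq ω hω_meas hω_pos hmom, hXc,
    MP_Cmul_left, MP_Cmul_left, MP_Cmul_right, MP_Cmul_right]
  ring

include hω_meas hω_pos hmom in
lemma skewProd_zero_left (g : Polynomial ℝ) : skewProd ω 0 g = 0 := by
  rw [skewProd_eq ω hω_meas hω_pos hmom]
  simp [MP_zero_left, MP_zero_right]

include hω_meas hω_pos hmom in
lemma skewProd_add_left (f₁ f₂ g : Polynomial ℝ) :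
    skewProd ω (f₁ + f₂) g = skewProd ω f₁ g + skewProd ω f₂ g := by
  have hX : X * (f₁ + f₂) = X * f₁ + X * f₂ := by ring
  rw [skewProd_eq ω hω_meas hω_pos hmom, skewProd_eq ω hω_meas hω_pos hmom,
    skewProd_eq ω hω_meas hω_pos hmom, hX, MP_add_left ω hω_meas hω_pos hmom,
    MP_add_left ω hω_meas hω_pos hmom, MP_add_right ω hω_meas hω_pos hmom,
    MP_add_right ω hω_meas hω_pos hmom]
  ring

include hω_meas hω_pos hmom in
lemma skewProd_sub_left (f₁ f₂ g : Polynomial ℝ) :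
    skewProd ω (f₁ - f₂) g = skewProd ω f₁ g - skewProd ω f₂ g := by
  have h1 : f₁ = (f₁ - f₂) + f₂ := by ring
  have := skewProd_add_left ω hω_meas hω_pos hmom (f₁ - f₂) f₂ g
  rw [← h1] at this
  linear_combination -this

include hω_meas hω_pos hmom in
lemma skewProd_sum_left (s : Finset ℕ) (cf : ℕ → ℝ) (u : ℕ → Polynomial ℝ) (g : Polynomial ℝ) :
    skewProd ω (∑ j ∈ s, C (cf j) * u j) g = ∑ j ∈ s, (cf j : ℂ) * skewProd ω (u j) g := by
  classical
  induction s using Finset.induction with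
  | empty => simp [skewProd_zero_left ω hω_meas hω_pos hmom]
  | insert _ _ hnot ih =>
      rw [Finset.sum_insert hnot, skewProd_add_left ω hω_meas hω_pos hmom,
        skewProd_Cmul_left ω hω_meas hω_pos hmom, ih, Finset.sum_insert hnot]

end Slem

lemma expand_poly (p : ℕ → Polynomial ℝ) (hmonic : ∀ k, (p k).Monic)
    (hdeg : ∀ k, (p k).natDegree = k) :
    ∀ (n : ℕ) (f : Polynomial ℝ), f.natDegree ≤ n →
      ∃ cf : ℕ → ℝ, f = ∑ i ∈ Finset.range (n + 1), C (cf i) * p i := by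
  intro n
  induction n with
  | zero =>
      intro f hf
      refine ⟨fun _ => f.coeff 0, ?_⟩
      have hc : (p 0).coeff 0 = 1 := by
        have := (hmonic 0).coeff_natDegree
        rwa [hdeg 0] at this
      have hp0 : p 0 = 1 := by
        rw [Polynomial.eq_C_of_natDegree_le_zero (le_of_eq (hdeg 0)), hc, map_one]
      rw [Finset.sum_range_one, hp0, mul_one]
      exact Polynomial.eq_C_of_natDegree_le_zero hf
  | succ n ih =>
      intro f hf
      set a := f.coeff (n + 1) with ha
      have hgdeg : (f - C a * p (n + 1)).natDegree ≤ n := by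
        rw [Polynomial.natDegree_le_iff_coeff_eq_zero]
        intro m hm
        rcases eq_or_lt_of_le (Nat.succ_le_of_lt hm) with hm1 | hm2
        · have hc : (p (n + 1)).coeff (n + 1) = 1 := by
            have := (hmonic (n + 1)).coeff_natDegree
            rwa [hdeg (n + 1)] at this
          rw [Polynomial.coeff_sub, Polynomial.coeff_C_mul, ← hm1, hc, mul_one, ha, sub_self]
        · rw [Polynomial.coeff_sub, Polynomial.coeff_C_mul,
            Polynomial.coeff_eq_zero_of_natDegree_lt (lt_of_le_of_lt hf hm2),
            Polynomial.coeff_eq_zero_of_natDegree_lt (by rw [hdeg]; exact hm2)]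
          ring
      obtain ⟨cg, hcg⟩ := ih _ hgdeg
      refine ⟨fun i => if i = n + 1 then a else cg i, ?_⟩
      show f = ∑ i ∈ Finset.range (n + 1 + 1), C (if i = n + 1 then a else cg i) * p i
      rw [Finset.sum_range_succ, if_pos rfl]
      have hs : ∑ i ∈ Finset.range (n + 1), C (if i = n + 1 then a else cg i) * p i
          = ∑ i ∈ Finset.range (n + 1), C (cg i) * p i :=
        Finset.sum_congr rfl fun i hi => by
          rw [if_neg (Nat.ne_of_lt (Finset.mem_range.1 hi))]
      rw [hs, ← hcg]
      ring


section Sym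
variable (ω : ℂ → ℝ) (hω_meas : Measurable ω) (hω_pos : ∀ z, 0 ≤ ω z)
    (hmom : ∀ m : ℕ, Integrable (fun z : ℂ => ‖z‖ ^ m * ω z))

include hω_meas hω_pos hmom in
lemma MP_symm (p : ℕ → Polynomial ℝ) (hmonic : ∀ k, (p k).Monic)
    (hdeg : ∀ k, (p k).natDegree = k) (h : ℕ → ℝ)
    (hMPpp : ∀ j k : ℕ, MP ω (p j) (p k) = if j = k then (h k : ℂ) else 0)
    (f g : Polynomial ℝ) : MP ω f g = MP ω g f := by
  obtain ⟨cf, hf⟩ := expand_poly p hmonic hdeg f.natDegree f le_rfl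
  obtain ⟨cg, hg⟩ := expand_poly p hmonic hdeg g.natDegree g le_rfl
  rw [hf, hg, MP_sum_left ω hω_meas hω_pos hmom, MP_sum_left ω hω_meas hω_pos hmom]
  simp only [MP_sum_right ω hω_meas hω_pos hmom, Finset.mul_sum]
  rw [Finset.sum_comm]
  refine Finset.sum_congr rfl fun j _ => Finset.sum_congr rfl fun i _ => ?_
  rw [hMPpp i j, hMPpp j i]
  by_cases hij : i = j
  · subst hij; rw [if_pos rfl]; ring
  · rw [if_neg hij, if_neg (Ne.symm hij)]; ring

include hω_meas hω_pos hmom in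
lemma skewProd_2B (p : ℕ → Polynomial ℝ) (hmonic : ∀ k, (p k).Monic)
    (hdeg : ∀ k, (p k).natDegree = k) (h : ℕ → ℝ)
    (hMPpp : ∀ j k : ℕ, MP ω (p j) (p k) = if j = k then (h k : ℂ) else 0)
    (f g : Polynomial ℝ) :
    skewProd ω f g = 2 * (MP ω f (X * g) - MP ω (X * f) g) := by
  rw [skewProd_eq ω hω_meas hω_pos hmom,
    MP_symm ω hω_meas hω_pos hmom p hmonic hdeg h hMPpp g (X * f),
    MP_symm ω hω_meas hω_pos hmom p hmonic hdeg h hMPpp (X * g) f]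
  ring

lemma mom_point (f g : Polynomial ℝ) (pp : ℕ) : (fun z : ℂ =>
      z ^ pp * ((starRingEnd ℂ) z - z) *
        (Polynomial.aeval z f * Polynomial.aeval ((starRingEnd ℂ) z) g
          - Polynomial.aeval z g * Polynomial.aeval ((starRingEnd ℂ) z) f) * (ω z : ℂ))
    = fun z : ℂ =>
      Polynomial.aeval z (X ^ pp * f) * Polynomial.aeval ((starRingEnd ℂ) z) (X * g) * (ω z : ℂ)
      - Polynomial.aeval z (X * (X ^ pp * f)) * Polynomial.aeval ((starRingEnd ℂ) z) g * (ω z : ℂ)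
      - Polynomial.aeval z (X ^ pp * g) * Polynomial.aeval ((starRingEnd ℂ) z) (X * f) * (ω z : ℂ)
      + Polynomial.aeval z (X * (X ^ pp * g)) * Polynomial.aeval ((starRingEnd ℂ) z) f * (ω z : ℂ)
    := by
  funext z
  simp only [map_mul, map_pow, aeval_X]
  ring

include hω_meas hω_pos hmom in
lemma integrable_mom (f g : Polynomial ℝ) (pp : ℕ) :
    Integrable (fun z : ℂ =>
      z ^ pp * ((starRingEnd ℂ) z - z) *
        (Polynomial.aeval z f * Polynomial.aeval ((starRingEnd ℂ) z) g
          - Polynomial.aeval z g * Polynomial.aeval ((starRingEnd ℂ) z) f) * (ω z : ℂ)) := by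
  have hint := integrable_poly_pair ω hω_meas hω_pos hmom
  rw [mom_point ω f g pp]
  exact (((hint (X^pp*f) (X*g)).sub (hint (X*(X^pp*f)) g)).sub (hint (X^pp*g) (X*f))).add
    (hint (X*(X^pp*g)) f)

include hω_meas hω_pos hmom in
lemma momK (f g : Polynomial ℝ) (pp : ℕ) :
    (1 / (Real.pi : ℂ)) * ∫ z : ℂ, z ^ pp * ((starRingEnd ℂ) z - z) *
        (Polynomial.aeval z f * Polynomial.aeval ((starRingEnd ℂ) z) g
          - Polynomial.aeval z g * Polynomial.aeval ((starRingEnd ℂ) z) f) * (ω z : ℂ)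
    = MP ω (X ^ pp * f) (X * g) - MP ω (X * (X ^ pp * f)) g
      - MP ω (X ^ pp * g) (X * f) + MP ω (X * (X ^ pp * g)) f := by
  have hint := integrable_poly_pair ω hω_meas hω_pos hmom
  unfold MP
  rw [mom_point ω f g pp]
  have I1 : Integrable (fun z : ℂ =>
      Polynomial.aeval z (X ^ pp * f) * Polynomial.aeval ((starRingEnd ℂ) z) (X * g) * (ω z : ℂ)
      - Polynomial.aeval z (X * (X ^ pp * f)) * Polynomial.aeval ((starRingEnd ℂ) z) g * (ω z : ℂ)) :=
    (hint _ _).sub (hint _ _)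
  have I2 : Integrable (fun z : ℂ =>
      Polynomial.aeval z (X ^ pp * f) * Polynomial.aeval ((starRingEnd ℂ) z) (X * g) * (ω z : ℂ)
      - Polynomial.aeval z (X * (X ^ pp * f)) * Polynomial.aeval ((starRingEnd ℂ) z) g * (ω z : ℂ)
      - Polynomial.aeval z (X ^ pp * g) * Polynomial.aeval ((starRingEnd ℂ) z) (X * f) * (ω z : ℂ)) :=
    I1.sub (hint _ _)
  rw [integral_add I2 (hint _ _), integral_sub I1 (hint _ _),
    integral_sub (hint _ _) (hint _ _)]
  ring

include hω_meas hω_pos hmom in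
lemma momK2 (p : ℕ → Polynomial ℝ) (hmonic : ∀ k, (p k).Monic)
    (hdeg : ∀ k, (p k).natDegree = k) (h : ℕ → ℝ)
    (hMPpp : ∀ j k : ℕ, MP ω (p j) (p k) = if j = k then (h k : ℂ) else 0)
    (f g : Polynomial ℝ) (pp : ℕ) :
    (1 / (Real.pi : ℂ)) * ∫ z : ℂ, z ^ pp * ((starRingEnd ℂ) z - z) *
        (Polynomial.aeval z f * Polynomial.aeval ((starRingEnd ℂ) z) g
          - Polynomial.aeval z g * Polynomial.aeval ((starRingEnd ℂ) z) f) * (ω z : ℂ)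
    = (1/2 : ℂ) * skewProd ω (X ^ pp * f) g - (1/2 : ℂ) * skewProd ω (X ^ pp * g) f := by
  rw [momK ω hω_meas hω_pos hmom f g pp,
    skewProd_2B ω hω_meas hω_pos hmom p hmonic hdeg h hMPpp (X ^ pp * f) g,
    skewProd_2B ω hω_meas hω_pos hmom p hmonic hdeg h hMPpp (X ^ pp * g) f]
  have e1 : X * (X ^ pp * f) = X * X ^ pp * f := by ring
  have e2 : X * (X ^ pp * g) = X * X ^ pp * g := by ring
  ring

end Sym

lemma sum_range_odd_even (g : ℕ → ℝ) : ∀ n : ℕ, ∑ i ∈ Finset.range (2 * n + 1), g i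
    = g 0 + ∑ k ∈ Finset.range n, (g (2 * k + 1) + g (2 * k + 2)) := by
  intro n
  induction n with
  | zero => simp
  | succ n ih =>
      have e : 2 * (n + 1) + 1 = (2 * n + 1) + 1 + 1 := by ring
      rw [e, Finset.sum_range_succ, Finset.sum_range_succ, ih, Finset.sum_range_succ]
      have e1 : 2 * n + 1 + 1 = 2 * n + 2 := by omega
      rw [e1]
      ring


/-- Holomorphic spectral moments of planar symplectic ensembles: with monic
planar orthogonal polynomials `p k` (norms `h k`, three-term recurrence with coefficients
`b`, `c`), expansion coefficients `A`, and skew-orthogonal polynomials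
`q_{2k+1} = p_{2k+1}`, `q_{2k} = ∑_{j≤k} μ k j • p_{2j}` with skew-norms `r k`, the
holomorphic spectral moment of the symplectic ensemble equals
`(1/2) ∑_{k<2N} A p k k - (1/2) ∑_{j<N} μ N j * A p (2N) (2j)`. -/
theorem holomorphic_spectral_moments_symplectic
    (ω : ℂ → ℝ) (hω_meas : Measurable ω) (hω_pos : ∀ z, 0 ≤ ω z)
    (hmom : ∀ m : ℕ, Integrable (fun z : ℂ => ‖z‖ ^ m * ω z))
    (p : ℕ → Polynomial ℝ)
    (hmonic : ∀ k, (p k).Monic) (hdeg : ∀ k, (p k).natDegree = k)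
    (h : ℕ → ℝ) (hpos : ∀ k, 0 < h k)
    (horth : ∀ j k : ℕ,
      (1 / (Real.pi : ℂ)) * ∫ z : ℂ,
        (Polynomial.aeval z (p j)) * (starRingEnd ℂ) (Polynomial.aeval z (p k)) * (ω z : ℂ)
      = if j = k then (h k : ℂ) else 0)
    (b c : ℕ → ℝ)
    (hrec : ∀ k : ℕ, (Polynomial.X : Polynomial ℝ) * p k
      = p (k + 1) + Polynomial.C (b k) * p k
        + (if k = 0 then 0 else Polynomial.C (c k) * p (k - 1)))
    (A : ℕ → ℕ → ℕ → ℝ)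
    (hA : ∀ q k : ℕ, (Polynomial.X : Polynomial ℝ) ^ q * p k
      = ∑ j ∈ Finset.range (k + q + 1), Polynomial.C (A q j k) * p j)
    (hA0 : ∀ q j k : ℕ, k + q < j → A q j k = 0)
    (hden : ∀ l : ℕ, h (2 * l + 1) - c (2 * l + 1) * h (2 * l) ≠ 0)
    (lam : ℕ → ℝ)
    (hlam : ∀ l : ℕ, lam l = (h (2 * l + 2) - c (2 * l + 2) * h (2 * l + 1)) /
      (h (2 * l + 1) - c (2 * l + 1) * h (2 * l)))
    (μ : ℕ → ℕ → ℝ) (hμ : ∀ k j : ℕ, μ k j = ∏ l ∈ Finset.Ico j k, lam l)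
    (r : ℕ → ℝ) (hr : ∀ k : ℕ, r k = 2 * (h (2 * k + 1) - c (2 * k + 1) * h (2 * k)))
    (q : ℕ → Polynomial ℝ)
    (hqodd : ∀ k : ℕ, q (2 * k + 1) = p (2 * k + 1))
    (hqeven : ∀ k : ℕ, q (2 * k) = ∑ j ∈ Finset.range (k + 1), Polynomial.C (μ k j) * p (2 * j))
    (hskew_ee : ∀ j k : ℕ, skewProd ω (q (2 * j)) (q (2 * k)) = 0)
    (hskew_oo : ∀ j k : ℕ, skewProd ω (q (2 * j + 1)) (q (2 * k + 1)) = 0)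
    (hskew_oe : ∀ j k : ℕ, skewProd ω (q (2 * j + 1)) (q (2 * k))
      = if j = k then (r k : ℂ) else 0)
    (N : ℕ) (hN : 1 ≤ N) (pp : ℕ) :
    (1 / (Real.pi : ℂ)) * ∫ z : ℂ,
        z ^ pp * ((starRingEnd ℂ) z - z) *
          (∑ k ∈ Finset.range N,
            (Polynomial.aeval z (q (2 * k + 1)) * Polynomial.aeval ((starRingEnd ℂ) z) (q (2 * k))
              - Polynomial.aeval z (q (2 * k)) *
                  Polynomial.aeval ((starRingEnd ℂ) z) (q (2 * k + 1))) / (r k : ℂ)) *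
          (ω z : ℂ)
      = (((1 : ℝ) / 2 * ∑ k ∈ Finset.range (2 * N), A pp k k
          - 1 / 2 * ∑ j ∈ Finset.range N, μ N j * A pp (2 * N) (2 * j) : ℝ) : ℂ) := by
  classical
  have hMPpp : ∀ j k : ℕ, MP ω (p j) (p k) = if j = k then (h k : ℂ) else 0 := by
    intro j k
    have hfun : (fun z : ℂ => Polynomial.aeval z (p j)
        * Polynomial.aeval ((starRingEnd ℂ) z) (p k) * (ω z : ℂ))
        = fun z : ℂ => Polynomial.aeval z (p j)
          * (starRingEnd ℂ) (Polynomial.aeval z (p k)) * (ω z : ℂ) := by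
      funext z; rw [aeval_conj]
    unfold MP
    rw [hfun]
    exact horth j k
  have hrk0 : ∀ k, r k ≠ 0 := fun k => by
    rw [hr k]; exact mul_ne_zero two_ne_zero (hden k)
  have hμsucc : ∀ k j : ℕ, j ≤ k → μ (k + 1) j = μ k j * lam k := by
    intro k j hj
    rw [hμ, hμ, Finset.prod_Ico_succ_top hj]
  have hμdiag : ∀ k, μ k k = 1 := fun k => by rw [hμ]; simp
  -- p even in terms of q even
  have hpq : ∀ i : ℕ, p (2 * i)
      = q (2 * i) - (if i = 0 then 0 else C (lam (i - 1)) * q (2 * (i - 1))) := by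
    intro i
    cases i with
    | zero =>
        rw [if_pos rfl, sub_zero, hqeven 0]
        simp [hμdiag 0]
    | succ t =>
        rw [if_neg (Nat.succ_ne_zero t)]
        have ht : (t + 1 : ℕ) - 1 = t := rfl
        rw [ht, hqeven (t + 1), hqeven t, Finset.sum_range_succ, hμdiag, Finset.mul_sum]
        have hc : ∀ j ∈ Finset.range (t + 1),
            C (μ (t + 1) j) * p (2 * j) = C (lam t) * (C (μ t j) * p (2 * j)) := by
          intro j hj
          rw [hμsucc t j (Nat.lt_succ_iff.1 (Finset.mem_range.1 hj)), map_mul]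
          ring
        rw [Finset.sum_congr rfl hc]
        simp only [map_one, one_mul]
        ring
  -- skew values
  have Sq_eo : ∀ m k : ℕ, skewProd ω (q (2 * m)) (q (2 * k + 1))
      = if m = k then (-(r k) : ℂ) else 0 := by
    intro m k
    rw [skewProd_antisymm ω (q (2 * k + 1)) (q (2 * m)), hskew_oe k m]
    by_cases hmk : m = k
    · subst hmk; simp
    · rw [if_neg (Ne.symm hmk), if_neg hmk, neg_zero]
  have Spq_even : ∀ i k : ℕ, skewProd ω (p i) (q (2 * k))
      = if i = 2 * k + 1 then (r k : ℂ) else 0 := by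
    intro i k
    rcases Nat.even_or_odd i with ⟨m, hm⟩ | ⟨m, hm⟩
    · have h2 : i = 2 * m := by omega
      subst h2
      rw [hpq m, skewProd_sub_left ω hω_meas hω_pos hmom, hskew_ee m k,
        if_neg (show ¬(2 * m = 2 * k + 1) from by omega)]
      by_cases hm0 : m = 0
      · rw [if_pos hm0, skewProd_zero_left ω hω_meas hω_pos hmom]; ring
      · rw [if_neg hm0, skewProd_Cmul_left ω hω_meas hω_pos hmom,
          hskew_ee (m - 1) k]; ring
    · have h2 : i = 2 * m + 1 := by omega
      subst h2
      rw [← hqodd m, hskew_oe m k]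
      split_ifs <;> first | rfl | omega
  have Spq_odd : ∀ i k : ℕ, skewProd ω (p i) (q (2 * k + 1))
      = if i = 2 * k then (-(r k) : ℂ)
        else if i = 2 * k + 2 then ((lam k * r k : ℝ) : ℂ) else 0 := by
    intro i k
    rcases Nat.even_or_odd i with ⟨m, hm⟩ | ⟨m, hm⟩
    · have h2 : i = 2 * m := by omega
      subst h2
      rw [hpq m, skewProd_sub_left ω hω_meas hω_pos hmom, Sq_eo m k]
      by_cases hm0 : m = 0
      · rw [if_pos hm0, skewProd_zero_left ω hω_meas hω_pos hmom, sub_zero]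
        split_ifs <;> first | rfl | omega
      · rw [if_neg hm0, skewProd_Cmul_left ω hω_meas hω_pos hmom, Sq_eo (m - 1) k]
        by_cases hmk2 : m - 1 = k
        · rw [hmk2]
          split_ifs <;> first | omega | (push_cast; ring)
        · split_ifs <;> first | omega | (push_cast; ring)
    · have h2 : i = 2 * m + 1 := by omega
      subst h2
      rw [← hqodd m, hskew_oo m k]
      split_ifs <;> first | rfl | omega
  -- value of S(X^pp q_{2k+1}, q_{2k})
  have Sval1 : ∀ k : ℕ, skewProd ω (X ^ pp * q (2 * k + 1)) (q (2 * k))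
      = ((A pp (2 * k + 1) (2 * k + 1) * r k : ℝ) : ℂ) := by
    intro k
    rw [hqodd k, hA pp (2 * k + 1), skewProd_sum_left ω hω_meas hω_pos hmom]
    rw [Finset.sum_eq_single_of_mem (2 * k + 1) (Finset.mem_range.2 (by omega))
      (fun j _ hj => by rw [Spq_even j k, if_neg hj, mul_zero])]
    rw [Spq_even (2 * k + 1) k, if_pos rfl]
    push_cast
    ring
  -- inner sum for S2
  have hinner : ∀ k j : ℕ, skewProd ω (X ^ pp * p (2 * j)) (q (2 * k + 1))
      = ((-(r k) * A pp (2 * k) (2 * j) + lam k * r k * A pp (2 * k + 2) (2 * j) : ℝ) : ℂ) := by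
    intro k j
    rw [hA pp (2 * j), skewProd_sum_left ω hω_meas hω_pos hmom]
    have hsub : ∑ i ∈ Finset.range (2 * j + pp + 1),
          (A pp i (2 * j) : ℂ) * skewProd ω (p i) (q (2 * k + 1))
        = ∑ i ∈ Finset.range (2 * j + pp + 1 + (2 * k + 3)),
          (A pp i (2 * j) : ℂ) * skewProd ω (p i) (q (2 * k + 1)) := by
      apply Finset.sum_subset (Finset.range_subset_range.2 (by omega))
      intro i _ hi
      rw [hA0 pp i (2 * j) (by simp only [Finset.mem_range] at hi; omega)]
      simp
    rw [hsub, Finset.sum_eq_add_of_mem (2 * k) (2 * k + 2)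
      (Finset.mem_range.2 (by omega)) (Finset.mem_range.2 (by omega)) (by omega)
      (fun i _ hii => by
        rw [Spq_odd i k, if_neg hii.1, if_neg hii.2, mul_zero])]
    rw [Spq_odd (2 * k) k, Spq_odd (2 * k + 2) k, if_pos rfl, if_neg (by omega), if_pos rfl]
    push_cast
    ring
  have Sval2 : ∀ k : ℕ, skewProd ω (X ^ pp * q (2 * k)) (q (2 * k + 1))
      = (((∑ j ∈ Finset.range (k + 1), μ k j *
          (-(r k) * A pp (2 * k) (2 * j) + lam k * r k * A pp (2 * k + 2) (2 * j))) : ℝ) : ℂ) := by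
    intro k
    rw [hqeven k, Finset.mul_sum]
    rw [Finset.sum_congr rfl (fun j _ => by
      show X ^ pp * (C (μ k j) * p (2 * j)) = C (μ k j) * (X ^ pp * p (2 * j))
      ring)]
    rw [skewProd_sum_left ω hω_meas hω_pos hmom, Complex.ofReal_sum]
    exact Finset.sum_congr rfl fun j _ => by rw [hinner k j]; push_cast; ring
  -- the diagonal partial sums
  set FF : ℕ → ℝ := fun k => ∑ j ∈ Finset.range (k + 1), μ k j * A pp (2 * k) (2 * j) with hFF
  -- main per-term computation
  have hterm : ∀ k ∈ Finset.range N,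
      (1 / (Real.pi : ℂ)) * ∫ z : ℂ, ((r k : ℂ))⁻¹ *
        (z ^ pp * ((starRingEnd ℂ) z - z) *
          (Polynomial.aeval z (q (2 * k + 1)) * Polynomial.aeval ((starRingEnd ℂ) z) (q (2 * k))
            - Polynomial.aeval z (q (2 * k)) *
                Polynomial.aeval ((starRingEnd ℂ) z) (q (2 * k + 1))) * (ω z : ℂ))
      = ((1 / 2 * (A pp (2 * k + 1) (2 * k + 1) + FF k - FF (k + 1)
          + A pp (2 * k + 2) (2 * k + 2)) : ℝ) : ℂ) := by
    intro k _
    rw [integral_const_mul, mul_left_comm,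
      momK2 ω hω_meas hω_pos hmom p hmonic hdeg h hMPpp (q (2 * k + 1)) (q (2 * k)) pp,
      Sval1 k, Sval2 k]
    have hS2 : (∑ j ∈ Finset.range (k + 1), μ k j *
          (-(r k) * A pp (2 * k) (2 * j) + lam k * r k * A pp (2 * k + 2) (2 * j)))
        = r k * (FF (k + 1) - A pp (2 * k + 2) (2 * k + 2) - FF k) := by
      have hFk1 : FF (k + 1) = (∑ j ∈ Finset.range (k + 1),
          μ k j * lam k * A pp (2 * k + 2) (2 * j)) + A pp (2 * k + 2) (2 * k + 2) := by
        rw [hFF]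
        simp only
        have e : 2 * (k + 1) = 2 * k + 2 := by ring
        rw [Finset.sum_range_succ, e, hμdiag, one_mul]
        congr 1
        exact Finset.sum_congr rfl fun j hj => by
          rw [hμsucc k j (Nat.lt_succ_iff.1 (Finset.mem_range.1 hj))]
      rw [hFk1, hFF]
      simp only
      rw [show r k * ((∑ j ∈ Finset.range (k + 1), μ k j * lam k * A pp (2 * k + 2) (2 * j)
            + A pp (2 * k + 2) (2 * k + 2)) - A pp (2 * k + 2) (2 * k + 2)
            - ∑ j ∈ Finset.range (k + 1), μ k j * A pp (2 * k) (2 * j))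
          = r k * (∑ j ∈ Finset.range (k + 1), μ k j * lam k * A pp (2 * k + 2) (2 * j))
            - r k * (∑ j ∈ Finset.range (k + 1), μ k j * A pp (2 * k) (2 * j)) from by ring,
        Finset.mul_sum, Finset.mul_sum, ← Finset.sum_sub_distrib]
      exact Finset.sum_congr rfl fun j _ => by ring
    rw [hS2]
    have hrkC : (r k : ℂ) ≠ 0 := Complex.ofReal_ne_zero.2 (hrk0 k)
    push_cast
    field_simp
    ring
  -- decompose the integral
  have hbig : (fun z : ℂ =>
      z ^ pp * ((starRingEnd ℂ) z - z) *
        (∑ k ∈ Finset.range N,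
          (Polynomial.aeval z (q (2 * k + 1)) * Polynomial.aeval ((starRingEnd ℂ) z) (q (2 * k))
            - Polynomial.aeval z (q (2 * k)) *
                Polynomial.aeval ((starRingEnd ℂ) z) (q (2 * k + 1))) / (r k : ℂ)) *
        (ω z : ℂ))
      = fun z : ℂ => ∑ k ∈ Finset.range N, ((r k : ℂ))⁻¹ *
        (z ^ pp * ((starRingEnd ℂ) z - z) *
          (Polynomial.aeval z (q (2 * k + 1)) * Polynomial.aeval ((starRingEnd ℂ) z) (q (2 * k))
            - Polynomial.aeval z (q (2 * k)) *
                Polynomial.aeval ((starRingEnd ℂ) z) (q (2 * k + 1))) * (ω z : ℂ)) := by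
    funext z
    rw [Finset.mul_sum, Finset.sum_mul]
    refine Finset.sum_congr rfl fun k _ => ?_
    rw [div_eq_mul_inv]
    ring
  rw [hbig, integral_finset_sum _ (fun k _ =>
    (integrable_mom ω hω_meas hω_pos hmom (q (2 * k + 1)) (q (2 * k)) pp).const_mul _),
    Finset.mul_sum, Finset.sum_congr rfl hterm, ← Complex.ofReal_sum]
  congr 1
  -- remaining real identity
  have hdiagsum := sum_range_odd_even (fun i => A pp i i) N
  have hFF0 : FF 0 = A pp 0 0 := by
    rw [hFF]
    simp [hμdiag 0]
  have hFFN : FF N = (∑ j ∈ Finset.range N, μ N j * A pp (2 * N) (2 * j))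
      + A pp (2 * N) (2 * N) := by
    rw [hFF]
    simp only
    rw [Finset.sum_range_succ, hμdiag, one_mul]
  have htel : ∑ k ∈ Finset.range N, (FF k - FF (k + 1)) = FF 0 - FF N :=
    Finset.sum_range_sub' FF N
  have hsplit : ∑ k ∈ Finset.range N, (1 / 2 * (A pp (2 * k + 1) (2 * k + 1) + FF k - FF (k + 1)
        + A pp (2 * k + 2) (2 * k + 2)))
      = 1 / 2 * ((∑ k ∈ Finset.range N,
          (A pp (2 * k + 1) (2 * k + 1) + A pp (2 * k + 2) (2 * k + 2)))
        + (FF 0 - FF N)) := by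
    rw [← htel, mul_add, Finset.mul_sum, Finset.mul_sum, ← Finset.sum_add_distrib]
    apply Finset.sum_congr rfl
    intro k _
    ring
  have hdd : ∑ k ∈ Finset.range N,
      (A pp (2 * k + 1) (2 * k + 1) + A pp (2 * k + 2) (2 * k + 2))
      = ∑ i ∈ Finset.range (2 * N), A pp i i + A pp (2 * N) (2 * N) - A pp 0 0 := by
    have h1 := hdiagsum
    rw [Finset.sum_range_succ] at h1
    linarith
  rw [hsplit, hFF0, hFFN, hdd]
  ring
end

section
/- Let α > 0, let ω_ℝ : ℝ → [0,∞) be measurable with ∫_ℝ |x|^m ω_ℝ(x) dx < ∞ for all m ∈ ℕ, and let (P_k)_{k≥0} be monic real polynomials with deg P_k = k satisfying ∫_ℝ P_j(x)·P_k(x)·ω_ℝ(x) dx = ĥ_k·δ_{jk} with ĥ_k > 0. Let ω : ℂ → [0,∞) be measurable with ∫_ℂ |z|^m ω(z) dA(z) < ∞ for all m, and suppose the rescaled polynomials p_k(z) := α^k·P_k(z/α) satisfy ∫_ℂ p_j(z)·conj(p_k(z))·ω(z) dA(z) = h_k·δ_{jk} with h_k > 0. Then for all N ≥ 1 and all integers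 p ≥ 0: ∫_ℂ z^{p} · (Σ_{k=0}^{N−1} p_k(z)·conj(p_k(z))/h_k) · ω(z) dA(z) = α^p · ∫_ℝ x^{p} · (Σ_{k=0}^{N−1} P_k(x)²/ĥ_k) · ω_ℝ(x) dx. -/
open Polynomial Finset MeasureTheory

private lemma expand_basis {R : Type*} [Field R] (P : ℕ → Polynomial R)
    (hmonic : ∀ k, (P k).Monic) (hdeg : ∀ k, (P k).natDegree = k) :
    ∀ (n : ℕ) (q : Polynomial R), q.natDegree ≤ n →
      ∃ c : ℕ → R, q = ∑ j ∈ Finset.range (n + 1), c j • P j := by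
  intro n
  induction n with
  | zero =>
    intro q hq
    refine ⟨fun _ => q.coeff 0, ?_⟩
    have hP0 : P 0 = 1 := (Polynomial.Monic.natDegree_eq_zero (hmonic 0)).mp (hdeg 0)
    have hqC : q = Polynomial.C (q.coeff 0) := Polynomial.eq_C_of_natDegree_le_zero hq
    simp [hP0, Polynomial.smul_eq_C_mul]
    exact hqC
  | succ n ih =>
    intro q hq
    set a := q.coeff (n + 1) with ha
    have hr : (q - Polynomial.C a * P (n + 1)).natDegree ≤ n := by
      rw [Polynomial.natDegree_le_iff_coeff_eq_zero]
      intro m hm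
      rcases eq_or_lt_of_le (Nat.succ_le_of_lt hm) with hm' | hm'
      · rw [Polynomial.coeff_sub, Polynomial.coeff_C_mul, ← hm']
        have : (P (n + 1)).coeff (n + 1) = 1 := by
          have := (hmonic (n + 1)).coeff_natDegree
          rwa [hdeg (n + 1)] at this
        rw [this, mul_one, ← ha, sub_self]
      · rw [Polynomial.coeff_sub, Polynomial.coeff_C_mul]
        have h1 : q.coeff m = 0 :=
          Polynomial.coeff_eq_zero_of_natDegree_lt (lt_of_le_of_lt hq hm')
        have h2 : (P (n + 1)).coeff m = 0 := by
          apply Polynomial.coeff_eq_zero_of_natDegree_lt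
          rw [hdeg (n + 1)]; exact hm'
        rw [h1, h2, mul_zero, sub_zero]
    obtain ⟨c, hc⟩ := ih _ hr
    refine ⟨fun j => if j = n + 1 then a else c j, ?_⟩
    rw [Finset.sum_range_succ]
    have h1 : (fun j => if j = n + 1 then a else c j) (n + 1) = a := by simp
    have hsum : ∑ j ∈ Finset.range (n + 1), (fun j => if j = n + 1 then a else c j) j • P j
        = ∑ j ∈ Finset.range (n + 1), c j • P j := by
      apply Finset.sum_congr rfl
      intro j hj
      have hj' : j ≠ n + 1 := by have := Finset.mem_range.mp hj; omega
      simp [hj']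
    rw [h1, hsum, ← hc, Polynomial.smul_eq_C_mul]
    ring

private lemma integC (ω : ℂ → ℝ) (hω_meas : Measurable ω) (hω_pos : ∀ z, 0 ≤ ω z)
    (hmom : ∀ m : ℕ, Integrable (fun z : ℂ => ‖z‖ ^ m * ω z))
    (q r : Polynomial ℝ) :
    Integrable (fun z : ℂ =>
      (Polynomial.aeval z q) * (starRingEnd ℂ) (Polynomial.aeval z r) * (ω z : ℂ)) := by
  have hc1 : Continuous fun z : ℂ => (Polynomial.aeval z q : ℂ) := q.continuous_aeval
  have hc2 : Continuous fun z : ℂ => (starRingEnd ℂ) (Polynomial.aeval z r : ℂ) :=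
    continuous_star.comp r.continuous_aeval
  have hmeas : AEStronglyMeasurable
      (fun z : ℂ => (Polynomial.aeval z q) * (starRingEnd ℂ) (Polynomial.aeval z r) * (ω z : ℂ))
      volume := by
    apply AEStronglyMeasurable.mul
    · exact (hc1.mul hc2).aestronglyMeasurable
    · exact (Complex.measurable_ofReal.comp hω_meas).aestronglyMeasurable
  set dq := q.natDegree
  set dr := r.natDegree
  have hg : Integrable (fun z : ℂ =>
      ∑ i ∈ Finset.range (dq + 1), ∑ j ∈ Finset.range (dr + 1),
        (|q.coeff i| * |r.coeff j|) * (‖z‖ ^ (i + j) * ω z)) := by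
    apply integrable_finset_sum
    intro i _
    apply integrable_finset_sum
    intro j _
    exact (hmom (i + j)).const_mul _
  apply hg.mono hmeas
  filter_upwards with z
  have hb1 : ‖Polynomial.aeval z q‖
      ≤ ∑ i ∈ Finset.range (dq + 1), |q.coeff i| * ‖z‖ ^ i := by
    rw [Polynomial.aeval_eq_sum_range]
    refine le_trans (norm_sum_le _ _) ?_
    apply Finset.sum_le_sum
    intro i _
    apply le_of_eq
    rw [norm_smul, norm_pow, Real.norm_eq_abs]
  have hb2 : ‖Polynomial.aeval z r‖
      ≤ ∑ j ∈ Finset.range (dr + 1), |r.coeff j| * ‖z‖ ^ j := by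
    rw [Polynomial.aeval_eq_sum_range]
    refine le_trans (norm_sum_le _ _) ?_
    apply Finset.sum_le_sum
    intro j _
    apply le_of_eq
    rw [norm_smul, norm_pow, Real.norm_eq_abs]
  have hsum_eq : (∑ i ∈ Finset.range (dq + 1), |q.coeff i| * ‖z‖ ^ i)
        * (∑ j ∈ Finset.range (dr + 1), |r.coeff j| * ‖z‖ ^ j) * ω z
      = ∑ i ∈ Finset.range (dq + 1), ∑ j ∈ Finset.range (dr + 1),
        (|q.coeff i| * |r.coeff j|) * (‖z‖ ^ (i + j) * ω z) := by
    rw [Finset.sum_mul_sum, Finset.sum_mul]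
    apply Finset.sum_congr rfl
    intro i _
    rw [Finset.sum_mul]
    apply Finset.sum_congr rfl
    intro j _
    rw [pow_add]
    ring
  have hnn : ∀ i j : ℕ, 0 ≤ (|q.coeff i| * |r.coeff j|) * (‖z‖ ^ (i + j) * ω z) := by
    intro i j
    have := hω_pos z
    positivity
  calc ‖Polynomial.aeval z q * (starRingEnd ℂ) (Polynomial.aeval z r) * (ω z : ℂ)‖
      = ‖Polynomial.aeval z q‖ * ‖Polynomial.aeval z r‖ * ω z := by
        rw [norm_mul, norm_mul]
        simp [Complex.norm_real, Real.norm_eq_abs, abs_of_nonneg (hω_pos z)]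
    _ ≤ (∑ i ∈ Finset.range (dq + 1), |q.coeff i| * ‖z‖ ^ i)
        * (∑ j ∈ Finset.range (dr + 1), |r.coeff j| * ‖z‖ ^ j) * ω z := by
        apply mul_le_mul_of_nonneg_right _ (hω_pos z)
        apply mul_le_mul hb1 hb2 (norm_nonneg _)
        exact le_trans (norm_nonneg _) hb1
    _ = ∑ i ∈ Finset.range (dq + 1), ∑ j ∈ Finset.range (dr + 1),
        (|q.coeff i| * |r.coeff j|) * (‖z‖ ^ (i + j) * ω z) := hsum_eq
    _ ≤ ‖∑ i ∈ Finset.range (dq + 1), ∑ j ∈ Finset.range (dr + 1),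
        (|q.coeff i| * |r.coeff j|) * (‖z‖ ^ (i + j) * ω z)‖ := le_abs_self _

private lemma integR (ωR : ℝ → ℝ) (hωR_meas : Measurable ωR) (hωR_pos : ∀ x, 0 ≤ ωR x)
    (hmomR : ∀ m : ℕ, Integrable (fun x : ℝ => |x| ^ m * ωR x))
    (q r : Polynomial ℝ) :
    Integrable (fun x : ℝ =>
      Polynomial.eval x q * Polynomial.eval x r * ωR x) := by
  have hc1 : Continuous fun x : ℝ => Polynomial.eval x q := q.continuous
  have hc2 : Continuous fun x : ℝ => Polynomial.eval x r := r.continuous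
  have hmeas : AEStronglyMeasurable
      (fun x : ℝ => Polynomial.eval x q * Polynomial.eval x r * ωR x) volume :=
    ((hc1.mul hc2).measurable.mul hωR_meas).aestronglyMeasurable
  set dq := q.natDegree
  set dr := r.natDegree
  have hg : Integrable (fun x : ℝ =>
      ∑ i ∈ Finset.range (dq + 1), ∑ j ∈ Finset.range (dr + 1),
        (|q.coeff i| * |r.coeff j|) * (|x| ^ (i + j) * ωR x)) := by
    apply integrable_finset_sum
    intro i _
    apply integrable_finset_sum
    intro j _
    exact (hmomR (i + j)).const_mul _
  apply hg.mono hmeas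
  filter_upwards with x
  have hb1 : |Polynomial.eval x q| ≤ ∑ i ∈ Finset.range (dq + 1), |q.coeff i| * |x| ^ i := by
    rw [Polynomial.eval_eq_sum_range]
    refine le_trans (Finset.abs_sum_le_sum_abs _ _) ?_
    apply Finset.sum_le_sum
    intro i _
    rw [abs_mul, abs_pow]
  have hb2 : |Polynomial.eval x r| ≤ ∑ j ∈ Finset.range (dr + 1), |r.coeff j| * |x| ^ j := by
    rw [Polynomial.eval_eq_sum_range]
    refine le_trans (Finset.abs_sum_le_sum_abs _ _) ?_
    apply Finset.sum_le_sum
    intro j _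
    rw [abs_mul, abs_pow]
  have hsum_eq : (∑ i ∈ Finset.range (dq + 1), |q.coeff i| * |x| ^ i)
        * (∑ j ∈ Finset.range (dr + 1), |r.coeff j| * |x| ^ j) * ωR x
      = ∑ i ∈ Finset.range (dq + 1), ∑ j ∈ Finset.range (dr + 1),
        (|q.coeff i| * |r.coeff j|) * (|x| ^ (i + j) * ωR x) := by
    rw [Finset.sum_mul_sum, Finset.sum_mul]
    apply Finset.sum_congr rfl
    intro i _
    rw [Finset.sum_mul]
    apply Finset.sum_congr rfl
    intro j _
    rw [pow_add]
    ring
  calc ‖Polynomial.eval x q * Polynomial.eval x r * ωR x‖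
      = |Polynomial.eval x q| * |Polynomial.eval x r| * ωR x := by
        rw [Real.norm_eq_abs, abs_mul, abs_mul, abs_of_nonneg (hωR_pos x)]
    _ ≤ (∑ i ∈ Finset.range (dq + 1), |q.coeff i| * |x| ^ i)
        * (∑ j ∈ Finset.range (dr + 1), |r.coeff j| * |x| ^ j) * ωR x := by
        apply mul_le_mul_of_nonneg_right _ (hωR_pos x)
        apply mul_le_mul hb1 hb2 (abs_nonneg _)
        exact le_trans (abs_nonneg _) hb1
    _ ≤ ‖∑ i ∈ Finset.range (dq + 1), ∑ j ∈ Finset.range (dr + 1),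
        (|q.coeff i| * |r.coeff j|) * (|x| ^ (i + j) * ωR x)‖ := by
        rw [hsum_eq]; exact le_abs_self _

/-- Relation to Hermitian ensembles: if the planar orthogonal polynomials for
the weight `ω` on `ℂ` are rescalings `p_k(z) = α^k P_k(z/α)` of orthogonal polynomials `P_k`
for a weight `ω_ℝ` on `ℝ`, then the holomorphic spectral moment of the random normal matrix
ensemble equals `α^p` times the spectral moment of the Hermitian unitary ensemble.
Here `dA` is Lebesgue measure divided by `π`. -/
theorem holomorphic_moment_eq_hermitian_moment
    (α : ℝ) (hα : 0 < α)
    (ωR : ℝ → ℝ) (hωR_meas : Measurable ωR) (hωR_pos : ∀ x, 0 ≤ ωR x)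
    (hmomR : ∀ m : ℕ, Integrable (fun x : ℝ => |x| ^ m * ωR x))
    (P : ℕ → Polynomial ℝ)
    (hmonic : ∀ k, (P k).Monic) (hdeg : ∀ k, (P k).natDegree = k)
    (hh : ℕ → ℝ) (hhpos : ∀ k, 0 < hh k)
    (horthR : ∀ j k : ℕ,
      (∫ x : ℝ, Polynomial.eval x (P j) * Polynomial.eval x (P k) * ωR x)
      = if j = k then hh k else 0)
    (ω : ℂ → ℝ) (hω_meas : Measurable ω) (hω_pos : ∀ z, 0 ≤ ω z)
    (hmom : ∀ m : ℕ, Integrable (fun z : ℂ => ‖z‖ ^ m * ω z))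
    (p : ℕ → Polynomial ℝ)
    (hp : ∀ k, p k = α ^ k • (P k).comp (Polynomial.C α⁻¹ * Polynomial.X))
    (h : ℕ → ℝ) (hpos : ∀ k, 0 < h k)
    (horth : ∀ j k : ℕ,
      (1 / (Real.pi : ℂ)) * ∫ z : ℂ,
        (Polynomial.aeval z (p j)) * (starRingEnd ℂ) (Polynomial.aeval z (p k)) * (ω z : ℂ)
      = if j = k then (h k : ℂ) else 0)
    (N : ℕ) (hN : 1 ≤ N) (pp : ℕ) :
    (1 / (Real.pi : ℂ)) * ∫ z : ℂ,
        z ^ pp *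
          (∑ k ∈ Finset.range N,
            Polynomial.aeval z (p k) * (starRingEnd ℂ) (Polynomial.aeval z (p k)) / (h k : ℂ)) *
          (ω z : ℂ)
      = ((α ^ pp * ∫ x : ℝ, x ^ pp *
            (∑ k ∈ Finset.range N, (Polynomial.eval x (P k)) ^ 2 / hh k) * ωR x : ℝ) : ℂ) := by
  have hα0 : α ≠ 0 := ne_of_gt hα
  -- expansion coefficients of X^pp * P k in the basis P
  have hdegXP : ∀ k : ℕ, ((Polynomial.X : Polynomial ℝ) ^ pp * P k).natDegree ≤ pp + k := by
    intro k
    refine le_trans Polynomial.natDegree_mul_le ?_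
    simp [Polynomial.natDegree_X_pow, hdeg k]
  choose e hE using fun k =>
    expand_basis P hmonic hdeg (pp + k) ((Polynomial.X : Polynomial ℝ) ^ pp * P k) (hdegXP k)
  -- transported expansion on the complex side
  have hD : ∀ k : ℕ, (Polynomial.X : Polynomial ℝ) ^ pp * p k
      = ∑ j ∈ Finset.range (pp + k + 1), (α ^ (pp + k) * α⁻¹ ^ j * e k j) • p j := by
    intro k
    have hstep : ∀ j : ℕ, (P j).comp (Polynomial.C α⁻¹ * Polynomial.X) = (α⁻¹ ^ j) • p j := by
      intro j
      rw [hp j, smul_smul, inv_pow, inv_mul_cancel₀ (pow_ne_zero j hα0), one_smul]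
    symm
    calc ∑ j ∈ Finset.range (pp + k + 1), (α ^ (pp + k) * α⁻¹ ^ j * e k j) • p j
        = α ^ (pp + k) • ∑ j ∈ Finset.range (pp + k + 1),
            e k j • (P j).comp (Polynomial.C α⁻¹ * Polynomial.X) := by
          rw [Finset.smul_sum]
          apply Finset.sum_congr rfl
          intro j _
          rw [hstep j, smul_smul, smul_smul, mul_right_comm]
      _ = α ^ (pp + k) • (((Polynomial.X : Polynomial ℝ) ^ pp * P k).comp
            (Polynomial.C α⁻¹ * Polynomial.X)) := by
          congr 1
          rw [hE k]
          rw [Polynomial.comp, Polynomial.eval₂_finset_sum]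
          apply Finset.sum_congr rfl
          intro j _
          rw [← Polynomial.comp, Polynomial.smul_comp]
      _ = (Polynomial.X : Polynomial ℝ) ^ pp * p k := by
          rw [Polynomial.mul_comp, Polynomial.pow_comp, Polynomial.X_comp, hp k]
          rw [mul_pow, Polynomial.smul_eq_C_mul, Polynomial.smul_eq_C_mul]
          have hc : Polynomial.C (α ^ (pp + k)) * Polynomial.C (α⁻¹ ^ pp)
              = Polynomial.C (α ^ k) := by
            rw [← Polynomial.C_mul]
            congr 1
            rw [pow_add, mul_comm (α ^ pp) (α ^ k), mul_assoc, inv_pow,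
              mul_inv_cancel₀ (pow_ne_zero pp hα0), mul_one]
          calc Polynomial.C (α ^ (pp + k)) * ((Polynomial.C α⁻¹) ^ pp * Polynomial.X ^ pp *
                  (P k).comp (Polynomial.C α⁻¹ * Polynomial.X))
              = (Polynomial.C (α ^ (pp + k)) * Polynomial.C (α⁻¹ ^ pp)) *
                  (Polynomial.X ^ pp * (P k).comp (Polynomial.C α⁻¹ * Polynomial.X)) := by
                rw [← Polynomial.C_pow]; ring
            _ = Polynomial.C (α ^ k) * (Polynomial.X ^ pp *
                  (P k).comp (Polynomial.C α⁻¹ * Polynomial.X)) := by rw [hc]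
            _ = Polynomial.X ^ pp * (Polynomial.C (α ^ k) *
                  (P k).comp (Polynomial.C α⁻¹ * Polynomial.X)) := by ring
  -- complex pairing
  have pairC : ∀ (M : ℕ) (c : ℕ → ℝ) (q : Polynomial ℝ),
      q = (∑ j ∈ Finset.range M, c j • p j) → ∀ k : ℕ, k < M →
      (1 / (Real.pi : ℂ)) * ∫ z : ℂ,
        (Polynomial.aeval z q) * (starRingEnd ℂ) (Polynomial.aeval z (p k)) * (ω z : ℂ)
      = (c k : ℂ) * (h k : ℂ) := by
    intro M c q hq k hk
    have hfun : (fun z : ℂ => (Polynomial.aeval z q)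
          * (starRingEnd ℂ) (Polynomial.aeval z (p k)) * (ω z : ℂ))
        = fun z : ℂ => ∑ j ∈ Finset.range M, (c j : ℂ) *
            ((Polynomial.aeval z (p j)) * (starRingEnd ℂ) (Polynomial.aeval z (p k)) * (ω z : ℂ)) := by
      funext z
      rw [hq, map_sum, Finset.sum_mul, Finset.sum_mul]
      apply Finset.sum_congr rfl
      intro j _
      rw [_root_.map_smul, Complex.real_smul]
      ring
    rw [hfun, integral_finset_sum _ (fun j _ =>
      (integC ω hω_meas hω_pos hmom (p j) (p k)).const_mul _), Finset.mul_sum]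
    have hterm : ∀ j : ℕ, (1 / (Real.pi : ℂ)) * ∫ z : ℂ, (c j : ℂ) *
          ((Polynomial.aeval z (p j)) * (starRingEnd ℂ) (Polynomial.aeval z (p k)) * (ω z : ℂ))
        = (c j : ℂ) * (if j = k then (h k : ℂ) else 0) := by
      intro j
      rw [integral_const_mul, ← horth j k]
      ring
    rw [Finset.sum_congr rfl (fun j _ => hterm j)]
    simp only [mul_ite, mul_zero]
    rw [Finset.sum_ite_eq' (Finset.range M) k fun j => (c j : ℂ) * (h k : ℂ),
      if_pos (Finset.mem_range.mpr hk)]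
  -- real pairing
  have pairR : ∀ (M : ℕ) (c : ℕ → ℝ) (q : Polynomial ℝ),
      q = (∑ j ∈ Finset.range M, c j • P j) → ∀ k : ℕ, k < M →
      (∫ x : ℝ, Polynomial.eval x q * Polynomial.eval x (P k) * ωR x) = c k * hh k := by
    intro M c q hq k hk
    have hfun : (fun x : ℝ => Polynomial.eval x q * Polynomial.eval x (P k) * ωR x)
        = fun x : ℝ => ∑ j ∈ Finset.range M, c j *
            (Polynomial.eval x (P j) * Polynomial.eval x (P k) * ωR x) := by
      funext x
      rw [hq, Polynomial.eval_finset_sum, Finset.sum_mul, Finset.sum_mul]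
      apply Finset.sum_congr rfl
      intro j _
      rw [Polynomial.eval_smul, smul_eq_mul]
      ring
    rw [hfun, integral_finset_sum _ (fun j _ =>
      (integR ωR hωR_meas hωR_pos hmomR (P j) (P k)).const_mul _)]
    have hterm : ∀ j : ℕ, (∫ x : ℝ, c j *
          (Polynomial.eval x (P j) * Polynomial.eval x (P k) * ωR x))
        = c j * (if j = k then hh k else 0) := by
      intro j
      rw [integral_const_mul, horthR j k]
    rw [Finset.sum_congr rfl (fun j _ => hterm j)]
    simp only [mul_ite, mul_zero]
    rw [Finset.sum_ite_eq' (Finset.range M) k fun j => c j * hh k,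
      if_pos (Finset.mem_range.mpr hk)]
  -- LHS computation
  have hLHSpt : (fun z : ℂ => z ^ pp *
        (∑ k ∈ Finset.range N,
          Polynomial.aeval z (p k) * (starRingEnd ℂ) (Polynomial.aeval z (p k)) / (h k : ℂ)) *
        (ω z : ℂ))
      = fun z : ℂ => ∑ k ∈ Finset.range N, ((h k : ℂ))⁻¹ *
          ((Polynomial.aeval z ((Polynomial.X : Polynomial ℝ) ^ pp * p k))
            * (starRingEnd ℂ) (Polynomial.aeval z (p k)) * (ω z : ℂ)) := by
    funext z
    rw [Finset.mul_sum, Finset.sum_mul]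
    apply Finset.sum_congr rfl
    intro k _
    rw [map_mul, map_pow, Polynomial.aeval_X, div_eq_mul_inv]
    ring
  have hLHS : (1 / (Real.pi : ℂ)) * ∫ z : ℂ,
        z ^ pp *
          (∑ k ∈ Finset.range N,
            Polynomial.aeval z (p k) * (starRingEnd ℂ) (Polynomial.aeval z (p k)) / (h k : ℂ)) *
          (ω z : ℂ)
      = ∑ k ∈ Finset.range N, ((α ^ pp * e k k : ℝ) : ℂ) := by
    rw [hLHSpt, integral_finset_sum _ (fun k _ =>
      (integC ω hω_meas hω_pos hmom ((Polynomial.X : Polynomial ℝ) ^ pp * p k) (p k)).const_mul _),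
      Finset.mul_sum]
    apply Finset.sum_congr rfl
    intro k _
    rw [integral_const_mul]
    have hpair := pairC (pp + k + 1) (fun j => α ^ (pp + k) * α⁻¹ ^ j * e k j)
      ((Polynomial.X : Polynomial ℝ) ^ pp * p k) (hD k) k (by omega)
    have hck : α ^ (pp + k) * α⁻¹ ^ k * e k k = α ^ pp * e k k := by
      rw [pow_add, mul_assoc (α ^ pp) (α ^ k), inv_pow,
        mul_inv_cancel₀ (pow_ne_zero k hα0), mul_one]
    have hh0 : (h k : ℂ) ≠ 0 := by
      exact_mod_cast ne_of_gt (hpos k)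
    rw [mul_left_comm, hpair]
    rw [mul_comm ((((fun j => α ^ (pp + k) * α⁻¹ ^ j * e k j) k : ℝ)) : ℂ) ((h k : ℂ)),
      inv_mul_cancel_left₀ hh0]
    exact_mod_cast hck
  -- RHS computation
  have hRHSpt : (fun x : ℝ => x ^ pp *
        (∑ k ∈ Finset.range N, (Polynomial.eval x (P k)) ^ 2 / hh k) * ωR x)
      = fun x : ℝ => ∑ k ∈ Finset.range N, (hh k)⁻¹ *
          (Polynomial.eval x ((Polynomial.X : Polynomial ℝ) ^ pp * P k)
            * Polynomial.eval x (P k) * ωR x) := by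
    funext x
    rw [Finset.mul_sum, Finset.sum_mul]
    apply Finset.sum_congr rfl
    intro k _
    rw [Polynomial.eval_mul, Polynomial.eval_pow, Polynomial.eval_X, div_eq_mul_inv]
    ring
  have hRHS : (∫ x : ℝ, x ^ pp *
        (∑ k ∈ Finset.range N, (Polynomial.eval x (P k)) ^ 2 / hh k) * ωR x)
      = ∑ k ∈ Finset.range N, e k k := by
    rw [hRHSpt, integral_finset_sum _ (fun k _ =>
      (integR ωR hωR_meas hωR_pos hmomR ((Polynomial.X : Polynomial ℝ) ^ pp * P k) (P k)).const_mul _)]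
    apply Finset.sum_congr rfl
    intro k _
    rw [integral_const_mul]
    have hpair := pairR (pp + k + 1) (e k)
      ((Polynomial.X : Polynomial ℝ) ^ pp * P k) (hE k) k (by omega)
    rw [hpair, mul_comm (e k k) (hh k), inv_mul_cancel_left₀ (ne_of_gt (hhpos k))]
  rw [hLHS, hRHS]
  push_cast [Finset.mul_sum]
  rfl
end

section
/- Let τ > 0 and define the planar Hermite polynomials p_k(z) := τ^{k/2}·He_k(z/√τ), where He_k is the probabilists' Hermite polynomial (He_0 = 1, He_1(x) = x, He_{k+1}(x) = x·He_k(x) − k·He_{k−1}(x)). Then for all integers p, k ≥ 0 and all z ∈ ℂ: z^p·p_k(z) = Σ_{j=0}^{k+p} A_τ(p,j,k)·p_j(z). -/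
open Finset

/-- `1/n!` for an integer `n`, with the convention that `1/n! = 0` for negative `n`. -/
noncomputable def invfac (n : ℤ) : ℝ := if 0 ≤ n then ((n.toNat).factorial : ℝ)⁻¹ else 0

/-- Binomial coefficient `binom(n, m)` for `n : ℕ`, `m : ℤ`, zero for `m < 0` or `m > n`. -/
noncomputable def zbinom (n : ℕ) (m : ℤ) : ℝ :=
  if 0 ≤ m ∧ m ≤ (n : ℤ) then (n.choose m.toNat : ℝ) else 0

/-- The Hermite expansion coefficients `A_τ(p, j, k)`:
`A_τ(p,j,k) = τ^{(p+k−j)/2} ∑_{l=0}^{⌊p/2⌋} [p!/(2^l l! ((p−k+j)/2−l)!)] binom(k, (p+k−j)/2−l)`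
if `|j−k| ≤ p` and `j−k ≡ p (mod 2)` and `j ≥ 0`, and `0` otherwise. -/
noncomputable def Aher (τ : ℝ) (p : ℕ) (j : ℤ) (k : ℕ) : ℝ :=
  if 0 ≤ j ∧ |j - (k : ℤ)| ≤ (p : ℤ) ∧ (j - (k : ℤ)) % 2 = (p : ℤ) % 2 then
    τ ^ ((((p : ℤ) + k - j) / 2).toNat) *
      ∑ l ∈ Finset.range (p / 2 + 1),
        (p.factorial : ℝ) * ((2 : ℝ) ^ l * (l.factorial : ℝ))⁻¹ *
          invfac (((p : ℤ) - k + j) / 2 - l) *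
          zbinom k (((p : ℤ) + k - j) / 2 - l)
  else 0

/-- The probabilists' Hermite polynomial `He_k`, as a function on `ℂ`:
`He_0 = 1`, `He_1(x) = x`, `He_{k+2}(x) = x He_{k+1}(x) − (k+1) He_k(x)`. -/
noncomputable def He : ℕ → ℂ → ℂ
  | 0, _ => 1
  | 1, x => x
  | (k + 2), x => x * He (k + 1) x - (k + 1) * He k x

lemma invfac_neg {n : ℤ} (h : n < 0) : invfac n = 0 := by
  simp [invfac, not_le.mpr h]

lemma zbinom_neg {k : ℕ} {m : ℤ} (h : m < 0) : zbinom k m = 0 := by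
  simp [zbinom]; intro h'; omega

lemma zbinom_gt {k : ℕ} {m : ℤ} (h : (k:ℤ) < m) : zbinom k m = 0 := by
  simp [zbinom]; intro h'; omega

lemma invfac_pred (n : ℤ) : invfac (n - 1) = (n : ℝ) * invfac n := by
  rcases lt_trichotomy n 0 with h|h|h
  · rw [invfac_neg h, invfac_neg (by omega), mul_zero]
  · subst h
    rw [invfac_neg (by norm_num)]
    norm_num
  · unfold invfac
    rw [if_pos (by omega), if_pos (by omega)]
    have h1 : n.toNat = (n-1).toNat + 1 := by omega
    have h2 : (((n-1).toNat : ℤ)) = n - 1 := by omega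
    have hn : ((n-1).toNat : ℝ) = (n:ℝ) - 1 := by exact_mod_cast congrArg (Int.cast : ℤ → ℝ) h2
    rw [h1, Nat.factorial_succ]
    push_cast
    rw [hn]
    have hfac : ((n-1).toNat.factorial : ℝ) ≠ 0 := by positivity
    have hnne : (n:ℝ) ≠ 0 := by
      have : (1:ℝ) ≤ (n:ℝ) := by exact_mod_cast h
      linarith
    field_simp
    simp [hnne]

lemma zbinom_mul (k : ℕ) (r : ℤ) : (r : ℝ) * zbinom k r = ((k:ℝ) - r + 1) * zbinom k (r-1) := by
  rcases lt_trichotomy r 0 with h|h|h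
  · rw [zbinom_neg h, zbinom_neg (by omega : r - 1 < 0), mul_zero, mul_zero]
  · subst h
    rw [zbinom_neg (show (0:ℤ)-1 < 0 by norm_num)]
    norm_num
  · rcases le_or_gt r (k:ℤ) with h2|h2
    · unfold zbinom
      rw [if_pos ⟨by omega, h2⟩, if_pos ⟨by omega, by omega⟩]
      have h3 : r.toNat = (r-1).toNat + 1 := by omega
      have key := Nat.choose_succ_right_eq k (r-1).toNat
      rw [← h3] at key
      have h5 : (k - (r-1).toNat : ℕ) = ((k:ℤ) - r + 1).toNat := by omega
      have key' : (k.choose r.toNat : ℝ) * (r.toNat : ℝ) = (k.choose (r-1).toNat : ℝ) * (((k:ℤ) - r + 1).toNat : ℝ) := by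
        rw [← h5]; exact_mod_cast congrArg (Nat.cast : ℕ → ℝ) key
      have hr : ((r.toNat : ℕ) : ℝ) = (r : ℝ) := by exact_mod_cast congrArg (Int.cast : ℤ → ℝ) (Int.toNat_of_nonneg (by omega : 0 ≤ r))
      have hc : ((((k:ℤ) - r + 1).toNat : ℕ) : ℝ) = (k:ℝ) - r + 1 := by
        have : ((((k:ℤ) - r + 1).toNat : ℕ) : ℤ) = (k:ℤ) - r + 1 := by omega
        exact_mod_cast congrArg (Int.cast : ℤ → ℝ) this
      rw [hr, hc] at key'
      linarith [key']
    · by_cases h3 : (k:ℤ) < r - 1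
      · rw [zbinom_gt h2, zbinom_gt h3, mul_zero, mul_zero]
      · rw [zbinom_gt h2]
        have hc : (k:ℝ) - r + 1 = 0 := by
          have : ((k:ℤ)) - r + 1 = 0 := by omega
          exact_mod_cast congrArg (Int.cast : ℤ → ℝ) this
        rw [hc]; simp

noncomputable def Cc (p : ℕ) (m : ℤ) (k : ℕ) : ℝ :=
  ∑ l ∈ Finset.range (p + 1),
    (p.factorial : ℝ) * ((2:ℝ)^l * (l.factorial : ℝ))⁻¹ * invfac ((p:ℤ) - m - l) * zbinom k (m - (l:ℤ))

lemma Cc_zero_of_big (p k : ℕ) (m : ℤ) (h : (p:ℤ) + k < 2*m) : Cc p m k = 0 := by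
  apply Finset.sum_eq_zero; intro l hl
  by_cases h1 : (p:ℤ) - m - l < 0
  · rw [invfac_neg h1, mul_zero, zero_mul]
  · rw [zbinom_gt (by omega : (k:ℤ) < m - l), mul_zero]

lemma Cc_zero_of_neg (p k : ℕ) (m : ℤ) (h : m < 0) : Cc p m k = 0 := by
  apply Finset.sum_eq_zero; intro l hl
  rw [zbinom_neg (by omega : m - (l:ℤ) < 0), mul_zero]

lemma Cc_rec (p k : ℕ) (m : ℤ) :
    Cc (p+1) m k = Cc p m k + ((k:ℝ) + p + 2 - 2*m) * Cc p (m-1) k := by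
  have hx : ∀ l : ℕ, invfac ((p:ℤ) - m - l) = ((p:ℝ)+1-m-l) * invfac ((p:ℤ)+1-m-l) := by
    intro l
    have h := invfac_pred ((p:ℤ)+1-m-l)
    rw [show (p:ℤ)+1-m-l-1 = (p:ℤ)-m-l by ring] at h
    rw [h]; push_cast; ring
  have hy : ∀ l : ℕ, ((m:ℝ) - l) * zbinom k (m - l) = ((k:ℝ) - m + l + 1) * zbinom k (m-1-l) := by
    intro l
    have h := zbinom_mul k (m - l)
    rw [show m - (l:ℤ) - 1 = m - 1 - l by ring] at h
    push_cast at h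
    convert h using 2 <;> push_cast <;> ring
  have hg : ∀ l : ℕ, (2*((l:ℝ)+1)) * ((2:ℝ)^(l+1) * ((l+1).factorial : ℝ))⁻¹
      = ((2:ℝ)^l * (l.factorial:ℝ))⁻¹ := by
    intro l
    rw [pow_succ, Nat.factorial_succ]
    have h1 : ((2:ℝ)^l) ≠ 0 := by positivity
    have h2 : ((l.factorial : ℝ)) ≠ 0 := by positivity
    push_cast
    field_simp
  -- split
  have hsplit : Cc (p+1) m k =
      (∑ l ∈ Finset.range (p+2),
        (p.factorial : ℝ) * ((2:ℝ)^l * (l.factorial : ℝ))⁻¹ * invfac ((p:ℤ) - m - l) * zbinom k (m - (l:ℤ)))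
      + (∑ l ∈ Finset.range (p+2),
        (p.factorial : ℝ) * ((2:ℝ)^l * (l.factorial : ℝ))⁻¹ *
          (((k:ℝ) - m + l + 1) * (invfac ((p:ℤ)+1 - m - l) * zbinom k (m - 1 - (l:ℤ)))))
      + (∑ l ∈ Finset.range (p+2),
        (p.factorial : ℝ) * ((2*(l:ℝ)) * ((2:ℝ)^l * (l.factorial : ℝ))⁻¹) *
          invfac ((p:ℤ)+1 - m - l) * zbinom k (m - (l:ℤ))) := by
    rw [Cc, ← Finset.sum_add_distrib, ← Finset.sum_add_distrib]
    refine Finset.sum_congr rfl fun l _ => ?_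
    have hfac : (((p+1).factorial : ℕ) : ℝ) = ((p:ℝ)+1) * (p.factorial : ℝ) := by
      rw [Nat.factorial_succ]; push_cast; ring
    have e1 : ((p+1:ℕ):ℤ) - m - (l:ℤ) = (p:ℤ)+1-m-l := by push_cast; ring
    rw [e1, hfac, hx l]
    linear_combination ((p.factorial : ℝ) * ((2:ℝ)^l * (l.factorial : ℝ))⁻¹ *
      invfac ((p:ℤ)+1-m-l)) * (hy l)
  rw [hsplit]
  -- S1 = Cc p m k
  have h1 : (∑ l ∈ Finset.range (p+2),
        (p.factorial : ℝ) * ((2:ℝ)^l * (l.factorial : ℝ))⁻¹ * invfac ((p:ℤ) - m - l) * zbinom k (m - (l:ℤ)))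
      = Cc p m k := by
    rw [Finset.sum_range_succ, Cc]
    by_cases hm : m < 0
    · rw [zbinom_neg (by push_cast; omega : m - ((p+1:ℕ):ℤ) < 0), mul_zero, add_zero]
    · rw [invfac_neg (by push_cast; omega : (p:ℤ) - m - ((p+1:ℕ):ℤ) < 0), mul_zero, zero_mul, add_zero]
  -- S3 reindex
  have h3 : (∑ l ∈ Finset.range (p+2),
        (p.factorial : ℝ) * ((2*(l:ℝ)) * ((2:ℝ)^l * (l.factorial : ℝ))⁻¹) *
          invfac ((p:ℤ)+1 - m - l) * zbinom k (m - (l:ℤ)))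
      = ∑ l ∈ Finset.range (p+1),
        (p.factorial : ℝ) * ((2:ℝ)^l * (l.factorial : ℝ))⁻¹ *
          (((p:ℝ)+1-m-l) * (invfac ((p:ℤ)+1 - m - l) * zbinom k (m - 1 - (l:ℤ)))) := by
    rw [Finset.sum_range_succ']
    simp only [Nat.cast_zero, mul_zero, zero_mul, add_zero]
    refine Finset.sum_congr rfl fun l _ => ?_
    have e1 : (p:ℤ)+1 - m - ((l+1:ℕ):ℤ) = (p:ℤ) - m - l := by push_cast; ring
    have e2 : m - ((l+1:ℕ):ℤ) = m - 1 - (l:ℤ) := by push_cast; ring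
    rw [e1, e2, hx l]
    push_cast
    rw [hg l]
    ring
  -- S2 drop last
  have h2 : (∑ l ∈ Finset.range (p+2),
        (p.factorial : ℝ) * ((2:ℝ)^l * (l.factorial : ℝ))⁻¹ *
          (((k:ℝ) - m + l + 1) * (invfac ((p:ℤ)+1 - m - l) * zbinom k (m - 1 - (l:ℤ)))))
      = ∑ l ∈ Finset.range (p+1),
        (p.factorial : ℝ) * ((2:ℝ)^l * (l.factorial : ℝ))⁻¹ *
          (((k:ℝ) - m + l + 1) * (invfac ((p:ℤ)+1 - m - l) * zbinom k (m - 1 - (l:ℤ)))) := by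
    rw [Finset.sum_range_succ]
    by_cases hm : m ≤ 0
    · rw [zbinom_neg (by push_cast; omega : m - 1 - ((p+1:ℕ):ℤ) < 0)]
      simp
    · rw [invfac_neg (by push_cast; omega : (p:ℤ)+1 - m - ((p+1:ℕ):ℤ) < 0)]
      simp
  rw [h1, h2, h3, add_assoc]
  congr 1
  rw [Cc, Finset.mul_sum, ← Finset.sum_add_distrib]
  refine Finset.sum_congr rfl fun l _ => ?_
  have e1 : (p:ℤ) - (m-1) - (l:ℤ) = (p:ℤ)+1-m-l := by ring
  have e2 : m - 1 - (l:ℤ) = (m-1) - (l:ℤ) := by ring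
  rw [e1, e2]
  ring

lemma Cc_zero_of_lt (p k : ℕ) (m : ℤ) (h : (p:ℤ) < m) : Cc p m k = 0 := by
  apply Finset.sum_eq_zero; intro l hl
  rw [invfac_neg (by omega : (p:ℤ) - m - (l:ℤ) < 0), mul_zero, zero_mul]

lemma Aher_eq_Cc (τ : ℝ) (p k : ℕ) (j : ℤ) (h0 : 0 ≤ j) (h1 : j - (k:ℤ) ≤ (p:ℤ))
    (h2 : (j - (k:ℤ)) % 2 = (p:ℤ) % 2) :
    Aher τ p j k = τ ^ ((((p:ℤ)+(k:ℤ)-j)/2).toNat) * Cc p (((p:ℤ)+(k:ℤ)-j)/2) k := by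
  set M : ℤ := ((p:ℤ)+(k:ℤ)-j)/2 with hMdef
  have h2M : 2*M = (p:ℤ)+(k:ℤ)-j := by omega
  by_cases h3 : -(p:ℤ) ≤ j - (k:ℤ)
  · rw [Aher, if_pos ⟨h0, abs_le.mpr ⟨h3, h1⟩, h2⟩]
    congr 1
    have e : ∀ l : ℕ, ((p:ℤ)-(k:ℤ)+j)/2 - (l:ℤ) = (p:ℤ) - M - l := by intro l; omega
    have e' : ∀ l : ℕ, ((p:ℤ)+(k:ℤ)-j)/2 - (l:ℤ) = M - l := by intro l; omega
    rw [Cc]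
    calc (∑ l ∈ Finset.range (p/2+1),
          (p.factorial : ℝ) * ((2 : ℝ) ^ l * (l.factorial : ℝ))⁻¹ *
            invfac (((p:ℤ) - (k:ℤ) + j) / 2 - l) * zbinom k (((p:ℤ) + (k:ℤ) - j) / 2 - l))
        = ∑ l ∈ Finset.range (p/2+1),
          (p.factorial : ℝ) * ((2:ℝ)^l * (l.factorial : ℝ))⁻¹ * invfac ((p:ℤ) - M - l) *
            zbinom k (M - (l:ℤ)) := by
          refine Finset.sum_congr rfl fun l _ => ?_
          rw [e l, e' l]
      _ = ∑ l ∈ Finset.range (p+1),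
          (p.factorial : ℝ) * ((2:ℝ)^l * (l.factorial : ℝ))⁻¹ * invfac ((p:ℤ) - M - l) *
            zbinom k (M - (l:ℤ)) := by
          refine Finset.sum_subset (Finset.range_subset_range.mpr (by omega : p/2+1 ≤ p+1))
            (fun l hl hl' => ?_)
          rw [Finset.mem_range] at hl hl'
          by_cases hA : (p:ℤ) - M - l < 0
          · rw [invfac_neg hA, mul_zero, zero_mul]
          · by_cases hB : M - (l:ℤ) < 0
            · rw [zbinom_neg hB, mul_zero]
            · exfalso; omega
  · rw [Aher, if_neg (by rintro ⟨_, habs, _⟩; rw [abs_le] at habs; omega)]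
    rw [Cc_zero_of_lt p k M (by omega), mul_zero]

lemma Aher_zero_of_gt (τ : ℝ) (p k : ℕ) (j : ℤ) (h : (k:ℤ)+(p:ℤ) < j) : Aher τ p j k = 0 := by
  rw [Aher, if_neg (by rintro ⟨_, habs, _⟩; rw [abs_le] at habs; omega)]

lemma Aher_base (τ : ℝ) (k : ℕ) (j : ℤ) : Aher τ 0 j k = if j = (k:ℤ) then 1 else 0 := by
  by_cases h : j = (k:ℤ)
  · subst h
    rw [Aher, if_pos ⟨by positivity, by simp, by norm_num⟩, if_pos rfl]
    norm_num [invfac, zbinom]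
  · rw [Aher, if_neg (by rintro ⟨_, habs, _⟩; rw [abs_le] at habs; omega), if_neg h]

lemma Aher_rec (τ : ℝ) (p k : ℕ) (j : ℤ) (h0 : 0 ≤ j) (h1 : j ≤ (k:ℤ) + p + 1) :
    Aher τ (p+1) j k = Aher τ p (j-1) k + τ * ((j:ℝ)+1) * Aher τ p (j+1) k := by
  by_cases hpar : (j - (k:ℤ)) % 2 = ((p:ℤ)+1) % 2
  · set M : ℤ := ((p:ℤ)+1+(k:ℤ)-j)/2 with hMdef
    have h2M : 2*M = (p:ℤ)+1+(k:ℤ)-j := by omega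
    have hM0 : 0 ≤ M := by omega
    have L : Aher τ (p+1) j k = τ ^ M.toNat * Cc (p+1) M k := by
      have h := Aher_eq_Cc τ (p+1) k j h0 (by push_cast; omega) (by push_cast; omega)
      rw [show (((p+1:ℕ):ℤ)+(k:ℤ)-j)/2 = M by push_cast; omega] at h
      exact h
    have T1 : Aher τ p (j-1) k = τ ^ M.toNat * Cc p M k := by
      by_cases hj : 1 ≤ j
      · have h := Aher_eq_Cc τ p k (j-1) (by omega) (by omega) (by omega)
        rw [show ((p:ℤ)+(k:ℤ)-(j-1))/2 = M by omega] at h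
        exact h
      · have hj0 : j = 0 := by omega
        rw [hj0]
        rw [show (0:ℤ)-1 = -1 by ring]
        rw [Aher, if_neg (by rintro ⟨hh, _, _⟩; omega)]
        rw [Cc_zero_of_big p k M (by omega), mul_zero]
    have T2 : τ * ((j:ℝ)+1) * Aher τ p (j+1) k
        = τ ^ M.toNat * (((k:ℝ)+(p:ℝ)+2-2*(M:ℝ)) * Cc p (M-1) k) := by
      by_cases hj : j + 1 - (k:ℤ) ≤ (p:ℤ)
      · have hM1 : 1 ≤ M := by omega
        have h := Aher_eq_Cc τ p k (j+1) (by omega) (by omega) (by omega)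
        rw [show ((p:ℤ)+(k:ℤ)-(j+1))/2 = M - 1 by omega] at h
        rw [h]
        have hpow : τ ^ M.toNat = τ * τ ^ ((M-1).toNat) := by
          rw [show M.toNat = (M-1).toNat + 1 by omega, pow_succ]; ring
        rw [hpow]
        have hcoef : ((j:ℝ)+1) = (k:ℝ)+(p:ℝ)+2-2*(M:ℝ) := by
          have : j + 1 = (k:ℤ) + (p:ℤ) + 2 - 2*M := by omega
          exact_mod_cast congrArg (Int.cast : ℤ → ℝ) this
        rw [hcoef]; ring
      · have hj2 : j = (k:ℤ) + p + 1 := by omega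
        have hM : M = 0 := by omega
        rw [Aher_zero_of_gt τ p k (j+1) (by omega)]
        rw [Cc_zero_of_neg p k (M-1) (by omega)]
        ring
    rw [L, Cc_rec, mul_add, T1, T2]
  · have z1 : Aher τ (p+1) j k = 0 := by
      rw [Aher, if_neg]
      rintro ⟨_, _, hh⟩
      push_cast at hh
      omega
    have z2 : Aher τ p (j-1) k = 0 := by
      rw [Aher, if_neg]
      rintro ⟨_, _, hh⟩
      omega
    have z3 : Aher τ p (j+1) k = 0 := by
      rw [Aher, if_neg]
      rintro ⟨_, _, hh⟩
      omega
    rw [z1, z2, z3]; ring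

noncomputable def Pher (τ : ℝ) (z : ℂ) (j : ℕ) : ℂ :=
  (Real.sqrt τ : ℂ) ^ j * He j (z / (Real.sqrt τ : ℂ))

lemma zP (τ : ℝ) (hτ : 0 < τ) (z : ℂ) (j : ℕ) :
    z * Pher τ z j = Pher τ z (j+1) + (τ:ℂ) * (j:ℂ) * Pher τ z (j-1) := by
  have hs0 : Real.sqrt τ ≠ 0 := ne_of_gt (Real.sqrt_pos.mpr hτ)
  have hs : ((Real.sqrt τ : ℝ) : ℂ) ≠ 0 := by exact_mod_cast hs0
  have hs2 : ((Real.sqrt τ : ℝ) : ℂ)^2 = (τ:ℂ) := by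
    rw [← Complex.ofReal_pow, Real.sq_sqrt hτ.le]
  have e : ((Real.sqrt τ : ℝ) : ℂ) * (z / ((Real.sqrt τ : ℝ) : ℂ)) = z := by
    field_simp
  rcases j with _ | j
  · simp only [Pher, He, Nat.cast_zero, mul_zero, zero_mul, add_zero, pow_zero, pow_one,
      one_mul, mul_one]
    rw [pow_one]
    exact e.symm
  · simp only [Pher, Nat.add_sub_cancel]
    rw [show j + 1 + 1 = j + 2 from rfl]
    rw [show He (j+2) (z / ((Real.sqrt τ : ℝ) : ℂ))
        = (z / ((Real.sqrt τ : ℝ) : ℂ)) * He (j+1) (z / ((Real.sqrt τ : ℝ) : ℂ))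
          - ((j:ℂ)+1) * He j (z / ((Real.sqrt τ : ℝ) : ℂ)) from by rw [He]]
    push_cast
    have hpow2 : ((Real.sqrt τ : ℝ) : ℂ)^(j+2) = (τ:ℂ) * ((Real.sqrt τ : ℝ) : ℂ)^j := by
      rw [pow_add, hs2]; ring
    rw [hpow2]
    have hpow1 : ((Real.sqrt τ : ℝ) : ℂ)^(j+1) = ((Real.sqrt τ : ℝ) : ℂ)^j * ((Real.sqrt τ : ℝ) : ℂ) := by
      rw [pow_succ]
    rw [hpow1]
    linear_combination (-(((Real.sqrt τ : ℝ):ℂ))^j * He (j+1) (z/((Real.sqrt τ : ℝ):ℂ)) * ((Real.sqrt τ : ℝ):ℂ)) * e + ((z/((Real.sqrt τ : ℝ):ℂ)) * (((Real.sqrt τ : ℝ):ℂ))^j * He (j+1) (z/((Real.sqrt τ : ℝ):ℂ))) * hs2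

lemma Aher_neg (τ : ℝ) (p k : ℕ) (j : ℤ) (h : j < 0) : Aher τ p j k = 0 := by
  rw [Aher, if_neg (by rintro ⟨h0, _, _⟩; omega)]

theorem planar_aux (τ : ℝ) (hτ : 0 < τ) (p k : ℕ) (z : ℂ) :
    z ^ p * Pher τ z k
      = ∑ j ∈ Finset.range (k + p + 1), (Aher τ p (j : ℤ) k : ℂ) * Pher τ z j := by
  induction p with
  | zero =>
    rw [pow_zero, one_mul, Finset.sum_eq_single k]
    · rw [Aher_base, if_pos rfl]; simp
    · intro j _ hjk
      rw [Aher_base, if_neg (by exact_mod_cast hjk)]; simp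
    · intro hk
      exfalso; apply hk; rw [Finset.mem_range]; omega
  | succ p ih =>
    have step : z ^ (p+1) * Pher τ z k = z * (z^p * Pher τ z k) := by ring
    rw [step, ih, Finset.mul_sum]
    have expand : ∀ j ∈ Finset.range (k+p+1),
        z * ((Aher τ p (j:ℤ) k : ℂ) * Pher τ z j)
        = (Aher τ p (j:ℤ) k : ℂ) * Pher τ z (j+1)
          + (τ:ℂ) * (j:ℂ) * (Aher τ p (j:ℤ) k : ℂ) * Pher τ z (j-1) := by
      intro j _
      rw [show z * ((Aher τ p (j:ℤ) k : ℂ) * Pher τ z j)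
          = (Aher τ p (j:ℤ) k : ℂ) * (z * Pher τ z j) by ring, zP τ hτ z j]
      ring
    have hU : (∑ j ∈ Finset.range (k+p+2), (Aher τ p ((j:ℤ)-1) k : ℂ) * Pher τ z j)
        = ∑ j ∈ Finset.range (k+p+1), (Aher τ p (j:ℤ) k : ℂ) * Pher τ z (j+1) := by
      rw [Finset.sum_range_succ']
      have h0 : (Aher τ p (((0:ℕ):ℤ)-1) k : ℂ) * Pher τ z 0 = 0 := by
        rw [Aher_neg τ p k _ (by norm_num)]; simp
      rw [h0, add_zero]
      refine Finset.sum_congr rfl fun j _ => ?_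
      rw [show (((j+1:ℕ)):ℤ)-1 = (j:ℤ) by push_cast; ring]
    have hV : (∑ j ∈ Finset.range (k+p+2), (τ:ℂ) * ((j:ℂ)+1) * (Aher τ p ((j:ℤ)+1) k : ℂ) * Pher τ z j)
        = ∑ j ∈ Finset.range (k+p+1), (τ:ℂ) * (j:ℂ) * (Aher τ p (j:ℤ) k : ℂ) * Pher τ z (j-1) := by
      rw [show k+p+2 = (k+p+1)+1 by ring, Finset.sum_range_succ, Finset.sum_range_succ]
      rw [Aher_zero_of_gt τ p k (((k+p:ℕ):ℤ)+1) (by push_cast; omega)]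
      rw [Aher_zero_of_gt τ p k (((k+p+1:ℕ):ℤ)+1) (by push_cast; omega)]
      push_cast
      rw [mul_zero, zero_mul, mul_zero, zero_mul, add_zero, add_zero]
      rw [Finset.sum_range_succ']
      have h0 : (τ:ℂ) * ((0:ℕ):ℂ) * (Aher τ p ((0:ℕ):ℤ) k : ℂ) * Pher τ z (0-1) = 0 := by
        simp
      rw [h0, add_zero]
      refine Finset.sum_congr rfl fun j _ => ?_
      rw [show ((j+1:ℕ)) - 1 = j by omega]
      push_cast
      ring
    rw [Finset.sum_congr rfl expand, Finset.sum_add_distrib, ← hU, ← hV,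
      ← Finset.sum_add_distrib]
    rw [show k+(p+1)+1 = k+p+2 by ring]
    refine Finset.sum_congr rfl fun j hj => ?_
    rw [Finset.mem_range] at hj
    have hrec := Aher_rec τ p k (j:ℤ) (by positivity) (by exact_mod_cast by omega : (j:ℤ) ≤ (k:ℤ)+p+1)
    rw [hrec]
    push_cast
    ring

/-- The planar Hermite polynomials `p_k(z) = τ^{k/2} He_k(z/√τ)` satisfy
`z^p p_k(z) = ∑_{j=0}^{k+p} A_τ(p,j,k) p_j(z)`. -/
theorem planar_hermite_expansion (τ : ℝ) (hτ : 0 < τ) (p k : ℕ) (z : ℂ) :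
    z ^ p * ((Real.sqrt τ : ℂ) ^ k * He k (z / (Real.sqrt τ : ℂ))) =
      ∑ j ∈ Finset.range (k + p + 1),
        (Aher τ p (j : ℤ) k : ℂ) * ((Real.sqrt τ : ℂ) ^ j * He j (z / (Real.sqrt τ : ℂ))) := by
  simpa only [Pher] using planar_aux τ hτ p k z
end

section
/- Let τ ∈ (0,1) and let p1, p2 ≥ 0 be integers with p1 ≡ p2 (mod 2). Then lim_{N→∞} M_τ(p1,p2,N) / N^{(p1+p2)/2 + 1} = C1(p1,p2). -/
open Finset Filter Asymptotics

/-- `I_p = {−p, −p+2, …, p−2, p}`, the integers between `−p` and `p` with the parity of `p`. -/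
noncomputable def Ip (p : ℕ) : Finset ℤ :=
  (Finset.Icc (-(p : ℤ)) (p : ℤ)).filter fun r => r % 2 = (p : ℤ) % 2

/-- The spectral moment `M_τ(p1, p2, N)` of the complex elliptic Ginibre ensemble. -/
noncomputable def Mell (τ : ℝ) (p1 p2 N : ℕ) : ℝ :=
  ∑ k ∈ Finset.range N,
    ∑ r ∈ (Ip (min p1 p2)).filter (fun r => r ≤ (k : ℤ)),
      ((((k : ℤ) - r).toNat.factorial : ℝ) / (k.factorial : ℝ)) *
        Aher τ p1 ((k : ℤ) - r) k * Aher τ p2 ((k : ℤ) - r) k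

/-- The leading moment coefficient `C1(p1, p2)` of the elliptic law. -/
noncomputable def C1 (τ : ℝ) (p1 p2 : ℕ) : ℝ :=
  (((p1 + p2) / 2 + 1 : ℕ) : ℝ)⁻¹ *
    ∑ r ∈ Ip (min p1 p2),
      τ ^ (((((p1 : ℤ) + p2) / 2) + r).toNat) *
        zbinom p1 (((p1 : ℤ) + r) / 2) * zbinom p2 (((p2 : ℤ) + r) / 2)

lemma descFac_div_pow (m : ℕ) :
    Tendsto (fun k : ℕ => (k.descFactorial m : ℝ) / (k : ℝ) ^ m) atTop (nhds 1) := by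
  induction m with
  | zero => simpa using tendsto_const_nhds
  | succ m ih =>
    have h0 : Tendsto (fun k : ℕ => (m : ℝ) / (k : ℝ)) atTop (nhds 0) :=
      tendsto_const_nhds.div_atTop tendsto_natCast_atTop_atTop
    have h1 : Tendsto (fun k : ℕ => 1 - (m : ℝ) / (k : ℝ)) atTop (nhds 1) := by
      simpa using tendsto_const_nhds.sub h0
    have h2 := ih.mul h1
    rw [mul_one] at h2
    apply h2.congr'
    filter_upwards [eventually_ge_atTop (m + 1)] with k hk
    have hk0 : (k : ℝ) ≠ 0 := by
      have : (0:ℕ) < k := by omega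
      positivity
    rw [Nat.descFactorial_succ, Nat.cast_mul, Nat.cast_sub (by omega : m ≤ k)]
    field_simp
    ring

lemma choose_div_pow (m : ℕ) :
    Tendsto (fun k : ℕ => (k.choose m : ℝ) / (k : ℝ) ^ m) atTop (nhds ((m.factorial : ℝ)⁻¹)) := by
  have h := (descFac_div_pow m).div_const (m.factorial : ℝ)
  rw [one_div] at h
  apply h.congr
  intro k
  have hm : (m.factorial : ℝ) ≠ 0 := by positivity
  rw [Nat.descFactorial_eq_factorial_mul_choose, Nat.cast_mul]
  field_simp

lemma inv_pow_tendsto (e : ℕ) (he : e ≠ 0) :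
    Tendsto (fun k : ℕ => ((k : ℝ) ^ e)⁻¹) atTop (nhds 0) :=
  ((tendsto_pow_atTop he).comp tendsto_natCast_atTop_atTop).inv_tendsto_atTop

lemma choose_div_pow' {m a : ℕ} (h : m ≤ a) :
    Tendsto (fun k : ℕ => (k.choose m : ℝ) / (k : ℝ) ^ a) atTop
      (nhds (if m = a then (m.factorial : ℝ)⁻¹ else 0)) := by
  rcases eq_or_lt_of_le h with rfl | hlt
  · simpa using choose_div_pow m
  · have h2 := (choose_div_pow m).mul (inv_pow_tendsto (a - m) (by omega))
    rw [mul_zero] at h2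
    rw [if_neg (by omega)]
    apply h2.congr'
    filter_upwards [eventually_ge_atTop 1] with k hk
    have hk0 : (k : ℝ) ≠ 0 := by
      have : (0:ℕ) < k := hk
      positivity
    have hpa : (k:ℝ)^a = (k:ℝ)^m * (k:ℝ)^(a-m) := by rw [← pow_add]; congr 1; omega
    field_simp [hpa]
    rw [hpa]; ring

lemma fac_ratio (r : ℤ) :
    Tendsto (fun k : ℕ => ((((k : ℤ) - r).toNat.factorial : ℝ) / (k.factorial : ℝ)) * (k : ℝ) ^ r)
      atTop (nhds 1) := by
  rcases le_or_gt 0 r with hr | hr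
  · lift r to ℕ using hr
    have h := (descFac_div_pow r).inv₀ one_ne_zero
    rw [inv_one] at h
    apply h.congr'
    filter_upwards [eventually_ge_atTop (r + 1)] with k hk
    have hkr : r ≤ k := by omega
    have h1 : ((k : ℤ) - r).toNat = k - r := by omega
    have h2 : (k - r).factorial * k.descFactorial r = k.factorial :=
      Nat.factorial_mul_descFactorial hkr
    have hd0 : (k.descFactorial r : ℝ) ≠ 0 := by
      have := Nat.descFactorial_eq_zero_iff_lt (n := k) (k := r)
      simp only [Nat.cast_ne_zero]
      omega
    have hk0 : (k : ℝ) ≠ 0 := by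
      have : (0:ℕ) < k := by omega
      positivity
    have hf : (k.factorial:ℝ) ≠ 0 := by positivity
    rw [h1, zpow_natCast, inv_div]
    field_simp
    push_cast [← h2]
    ring
  · set s : ℕ := (-r).toNat with hs
    have hrs : r = -(s : ℤ) := by omega
    have hc : Tendsto (fun k : ℕ => ((k : ℝ) + s) / (k : ℝ)) atTop (nhds 1) := by
      have h0 : Tendsto (fun k : ℕ => (s : ℝ) / (k : ℝ)) atTop (nhds 0) :=
        tendsto_const_nhds.div_atTop tendsto_natCast_atTop_atTop
      have h1 := (tendsto_const_nhds (x := (1:ℝ))).add h0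
      rw [add_zero] at h1
      apply h1.congr'
      filter_upwards [eventually_ge_atTop 1] with k hk
      have hk0 : (k : ℝ) ≠ 0 := by
        have : (0:ℕ) < k := hk
        positivity
      field_simp
    have hshift : Tendsto (fun k : ℕ => ((k + s).descFactorial s : ℝ) / ((k + s : ℕ) : ℝ) ^ s)
        atTop (nhds 1) :=
      (descFac_div_pow s).comp (tendsto_add_atTop_nat s)
    have hpow : Tendsto (fun k : ℕ => (((k : ℝ) + s) / (k : ℝ)) ^ s) atTop (nhds 1) := by
      have := hc.pow s
      rwa [one_pow] at this
    have h := hshift.mul hpow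
    rw [mul_one] at h
    apply h.congr'
    filter_upwards [eventually_ge_atTop 1] with k hk
    have hk0 : (k : ℝ) ≠ 0 := by
      have : (0:ℕ) < k := hk
      positivity
    have h1 : ((k : ℤ) - r).toNat = k + s := by omega
    have h2 : k.factorial * (k + s).descFactorial s = (k + s).factorial := by
      have := Nat.factorial_mul_descFactorial (show s ≤ k + s by omega)
      simpa using this
    have h3 : ((k + s).factorial : ℝ) = (k.factorial : ℝ) * ((k + s).descFactorial s : ℝ) := by
      push_cast [← h2]; ring
    have hf : (k.factorial : ℝ) ≠ 0 := by positivity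
    have hks : ((k : ℝ) + (s:ℝ)) ≠ 0 := by positivity
    rw [h1, hrs, zpow_neg, zpow_natCast, h3, div_pow]
    push_cast
    field_simp

lemma sum_pow_div (d : ℕ) :
    Tendsto (fun N : ℕ => (∑ k ∈ range N, (k : ℝ) ^ d) / (N : ℝ) ^ (d + 1))
      atTop (nhds (1 / (d + 1))) := by
  induction d using Nat.strong_induction_on with
  | _ d ih =>
  -- key identity
  have key : ∀ N : ℕ, (N : ℝ) ^ (d + 1) =
      ((d:ℝ) + 1) * (∑ k ∈ range N, (k : ℝ) ^ d) +
        ∑ j ∈ range d, ((d + 1).choose j : ℝ) * ∑ k ∈ range N, (k : ℝ) ^ j := by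
    intro N
    have tele : ∑ k ∈ range N, (((k : ℝ) + 1) ^ (d + 1) - (k : ℝ) ^ (d + 1))
        = (N : ℝ) ^ (d + 1) := by
      have := Finset.sum_range_sub (f := fun k : ℕ => (k : ℝ) ^ (d + 1)) N
      simpa using this
    have expand : ∀ k : ℕ, ((k : ℝ) + 1) ^ (d + 1) - (k : ℝ) ^ (d + 1)
        = ∑ j ∈ range (d + 1), ((d + 1).choose j : ℝ) * (k : ℝ) ^ j := by
      intro k
      have h := add_pow (k : ℝ) 1 (d + 1)
      simp only [one_pow, mul_one] at h
      rw [h, Finset.sum_range_succ]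
      simp [mul_comm]
    calc (N : ℝ) ^ (d + 1) = ∑ k ∈ range N, (((k : ℝ) + 1) ^ (d + 1) - (k : ℝ) ^ (d + 1)) :=
          tele.symm
      _ = ∑ k ∈ range N, ∑ j ∈ range (d + 1), ((d + 1).choose j : ℝ) * (k : ℝ) ^ j := by
          exact Finset.sum_congr rfl fun k _ => expand k
      _ = ∑ j ∈ range (d + 1), ((d + 1).choose j : ℝ) * ∑ k ∈ range N, (k : ℝ) ^ j := by
          rw [Finset.sum_comm]
          exact Finset.sum_congr rfl fun j _ => by rw [Finset.mul_sum]
      _ = ((d:ℝ) + 1) * (∑ k ∈ range N, (k : ℝ) ^ d) +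
            ∑ j ∈ range d, ((d + 1).choose j : ℝ) * ∑ k ∈ range N, (k : ℝ) ^ j := by
          rw [Finset.sum_range_succ, Nat.choose_succ_self_right]
          push_cast
          ring
  -- each lower-order term tends to 0
  have hlow : ∀ j, j < d → Tendsto
      (fun N : ℕ => (∑ k ∈ range N, (k : ℝ) ^ j) / (N : ℝ) ^ (d + 1)) atTop (nhds 0) := by
    intro j hj
    have h1 := (ih j hj).mul (inv_pow_tendsto (d - j) (by omega))
    rw [mul_zero] at h1
    apply h1.congr'
    filter_upwards [eventually_ge_atTop 1] with N hN
    have hN0 : (N : ℝ) ≠ 0 := by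
      have : (0:ℕ) < N := hN
      positivity
    have hpa : (N:ℝ)^(d+1) = (N:ℝ)^(j+1) * (N:ℝ)^(d-j) := by
      rw [← pow_add]; congr 1; omega
    field_simp [hpa]
    rw [hpa]; ring
  have hsum : Tendsto (fun N : ℕ =>
      ∑ j ∈ range d, ((d + 1).choose j : ℝ) *
        ((∑ k ∈ range N, (k : ℝ) ^ j) / (N : ℝ) ^ (d + 1))) atTop (nhds 0) := by
    have := tendsto_finset_sum (range d)
      (fun j hj => (hlow j (Finset.mem_range.mp hj)).const_mul (((d + 1).choose j : ℝ)))
    simpa using this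
  have hmain := ((tendsto_const_nhds (x := (1:ℝ))).sub hsum).div_const ((d:ℝ) + 1)
  rw [sub_zero] at hmain
  have hfin : Tendsto (fun N : ℕ =>
      (1 - ∑ j ∈ range d, ((d + 1).choose j : ℝ) *
        ((∑ k ∈ range N, (k : ℝ) ^ j) / (N : ℝ) ^ (d + 1))) / ((d:ℝ) + 1))
      atTop (nhds (1 / ((d:ℝ) + 1))) := hmain
  have : (1 : ℝ) / ((d:ℝ) + 1) = 1 / ((d:ℕ) + 1 : ℝ) := by norm_num
  apply hfin.congr'
  filter_upwards [eventually_ge_atTop 1] with N hN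
  have hN0 : (N : ℝ) ≠ 0 := by
    have : (0:ℕ) < N := hN
    positivity
  have hNp : ((N : ℝ) ^ (d + 1)) ≠ 0 := by positivity
  have hd1 : ((d:ℝ) + 1) ≠ 0 := by positivity
  have hs : ∑ j ∈ range d, ((d + 1).choose j : ℝ) *
      ((∑ k ∈ range N, (k : ℝ) ^ j) / (N : ℝ) ^ (d + 1))
      = (∑ j ∈ range d, ((d + 1).choose j : ℝ) * ∑ k ∈ range N, (k : ℝ) ^ j)
        / (N : ℝ) ^ (d + 1) := by
    rw [Finset.sum_div]
    exact Finset.sum_congr rfl fun j _ => (mul_div_assoc _ _ _).symm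
  have hSd : ∑ k ∈ range N, (k : ℝ) ^ d =
      ((N : ℝ) ^ (d + 1) - ∑ j ∈ range d, ((d + 1).choose j : ℝ) * ∑ k ∈ range N, (k : ℝ) ^ j)
        / ((d : ℝ) + 1) := by
    rw [eq_div_iff hd1]
    linarith [key N]
  rw [hs, hSd]
  field_simp

lemma sum_div_pow_succ (u : ℕ → ℝ) (c : ℝ) (d : ℕ)
    (h : Tendsto (fun k : ℕ => u k / (k : ℝ) ^ d) atTop (nhds c)) :
    Tendsto (fun N : ℕ => (∑ k ∈ range N, u k) / (N : ℝ) ^ (d + 1))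
      atTop (nhds (c / ((d : ℝ) + 1))) := by
  have hP := sum_pow_div d
  -- Σ k^d → atTop
  have hg_top : Tendsto (fun N : ℕ => ∑ k ∈ range N, (k : ℝ) ^ d) atTop atTop := by
    have h1 : Tendsto (fun N : ℕ => ((∑ k ∈ range N, (k : ℝ) ^ d) / (N : ℝ) ^ (d + 1)) *
        (N : ℝ) ^ (d + 1)) atTop atTop := by
      apply Tendsto.pos_mul_atTop (by positivity : (0:ℝ) < 1 / ((d:ℝ) + 1)) hP
      exact (tendsto_pow_atTop (by omega : d + 1 ≠ 0)).comp tendsto_natCast_atTop_atTop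
    apply h1.congr'
    filter_upwards [eventually_ge_atTop 1] with N hN
    have hN0 : ((N : ℝ) ^ (d + 1)) ≠ 0 := by
      have : (0:ℕ) < N := hN
      positivity
    rw [div_mul_cancel₀ _ hN0]
  -- e := u - c * k^d is o(k^d)
  have he : (fun k : ℕ => u k - c * (k : ℝ) ^ d) =o[atTop] fun k : ℕ => (k : ℝ) ^ d := by
    rw [isLittleO_iff_tendsto']
    · have h2 := h.sub (tendsto_const_nhds (x := c))
      rw [sub_self] at h2
      apply h2.congr'
      filter_upwards [eventually_ge_atTop 1] with k hk
      have hk0 : ((k : ℝ) ^ d) ≠ 0 := by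
        have : (0:ℕ) < k := hk
        positivity
      field_simp
    · filter_upwards [eventually_ge_atTop 1] with k hk hk0
      have : (0:ℕ) < k := hk
      have : ((k : ℝ) ^ d) ≠ 0 := by positivity
      exact absurd hk0 this
  have hsum_e := he.sum_range (fun i => by positivity) hg_top
  -- Σ g = O(N^(d+1))
  have hgO : (fun N : ℕ => ∑ k ∈ range N, (k : ℝ) ^ d) =O[atTop]
      fun N : ℕ => (N : ℝ) ^ (d + 1) := by
    apply Asymptotics.isBigO_of_div_tendsto_nhds _ _ hP
    filter_upwards [eventually_ge_atTop 1] with N hN hN0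
    have : (0:ℕ) < N := hN
    have : ((N : ℝ) ^ (d + 1)) ≠ 0 := by positivity
    exact absurd hN0 this
  have hE : Tendsto (fun N : ℕ => (∑ k ∈ range N, (u k - c * (k : ℝ) ^ d)) / (N : ℝ) ^ (d + 1))
      atTop (nhds 0) := (hsum_e.trans_isBigO hgO).tendsto_div_nhds_zero
  have hC : Tendsto (fun N : ℕ => c * ((∑ k ∈ range N, (k : ℝ) ^ d) / (N : ℝ) ^ (d + 1)))
      atTop (nhds (c * (1 / ((d:ℝ) + 1)))) := hP.const_mul c
  have hfin := hE.add hC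
  rw [zero_add] at hfin
  have : c * (1 / ((d:ℝ) + 1)) = c / ((d:ℝ) + 1) := by ring
  rw [this] at hfin
  apply hfin.congr
  intro N
  rw [Finset.sum_sub_distrib, ← Finset.mul_sum, sub_div, mul_div_assoc]
  ring

lemma Aher_ratio (τ : ℝ) (p : ℕ) (r : ℤ) (hr1 : -(p:ℤ) ≤ r) (hr2 : r ≤ (p:ℤ))
    (hpar : r % 2 = (p:ℤ) % 2) :
    Tendsto (fun k : ℕ => Aher τ p ((k:ℤ) - r) k / (k : ℝ) ^ ((((p:ℤ)+r)/2).toNat))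
      atTop (nhds (τ ^ ((((p:ℤ)+r)/2).toNat) * (p.choose ((((p:ℤ)+r)/2).toNat) : ℝ))) := by
  set a : ℕ := (((p:ℤ)+r)/2).toNat with ha
  set b : ℕ := (((p:ℤ)-r)/2).toNat with hb
  have hab : a + b = p := by omega
  have hterm : ∀ l : ℕ, Tendsto (fun k : ℕ =>
      ((p.factorial : ℝ) * ((2:ℝ)^l * (l.factorial : ℝ))⁻¹ * invfac ((b:ℤ) - l)) *
        zbinom k ((a:ℤ) - l) / (k:ℝ)^a) atTop
      (nhds (if l = 0 then (p.choose a : ℝ) else 0)) := by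
    intro l
    rcases le_or_gt l a with hla | hla
    · have hz := choose_div_pow' (show a - l ≤ a by omega)
      have h2 := hz.const_mul
        ((p.factorial : ℝ) * ((2:ℝ)^l * (l.factorial : ℝ))⁻¹ * invfac ((b:ℤ) - l))
      have hlim : ((p.factorial : ℝ) * ((2:ℝ)^l * (l.factorial : ℝ))⁻¹ * invfac ((b:ℤ) - l)) *
          (if a - l = a then ((a-l).factorial : ℝ)⁻¹ else 0)
          = (if l = 0 then (p.choose a : ℝ) else 0) := by
        rcases Nat.eq_zero_or_pos l with rfl | hl0
        · have hinv : invfac ((b:ℤ)) = ((b.factorial : ℝ))⁻¹ := by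
            rw [invfac, if_pos (by omega : (0:ℤ) ≤ (b:ℤ))]
            rfl
          have hc : p.choose a * a.factorial * b.factorial = p.factorial := by
            have := Nat.choose_mul_factorial_mul_factorial (show a ≤ p by omega)
            rwa [show p - a = b by omega] at this
          have hfa : (a.factorial : ℝ) ≠ 0 := by positivity
          have hfb : (b.factorial : ℝ) ≠ 0 := by positivity
          simp only [Nat.sub_zero, if_pos rfl, if_true, Nat.cast_zero, sub_zero, pow_zero,
            Nat.factorial_zero, Nat.cast_one, one_mul, mul_one, hinv]
          rw [← hc]
          push_cast
          field_simp
        · rw [if_neg (by omega), if_neg (by omega), mul_zero]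
      rw [hlim] at h2
      apply h2.congr'
      filter_upwards [eventually_ge_atTop a] with k hk
      have hzb : zbinom k ((a:ℤ) - l) = (k.choose (a - l) : ℝ) := by
        rw [zbinom, if_pos ⟨by omega, by omega⟩]
        congr 2
        omega
      rw [hzb, mul_div_assoc]
    · have hzb : ∀ k : ℕ, zbinom k ((a:ℤ) - l) = 0 := by
        intro k
        rw [zbinom, if_neg]
        intro hcon
        omega
      have : (fun k : ℕ =>
          ((p.factorial : ℝ) * ((2:ℝ)^l * (l.factorial : ℝ))⁻¹ * invfac ((b:ℤ) - l)) *
            zbinom k ((a:ℤ) - l) / (k:ℝ)^a) = fun _ : ℕ => (0:ℝ) := by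
        funext k
        rw [hzb k, mul_zero, zero_div]
      rw [this, if_neg (by omega)]
      exact tendsto_const_nhds
  have hsum := tendsto_finset_sum (Finset.range (p/2+1)) (fun l _ => hterm l)
  have hval : ∑ l ∈ Finset.range (p/2+1), (if l = 0 then (p.choose a:ℝ) else 0)
      = (p.choose a : ℝ) := by
    rw [Finset.sum_ite_eq' (Finset.range (p/2+1)) 0 (fun _ => (p.choose a : ℝ))]
    rw [if_pos (Finset.mem_range.mpr (by omega))]
  rw [hval] at hsum
  have h := hsum.const_mul (τ ^ a)
  apply h.congr'
  filter_upwards [eventually_ge_atTop p] with k hk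
  have hcond : (0:ℤ) ≤ (k:ℤ) - r ∧ |((k:ℤ)-r) - k| ≤ (p:ℤ) ∧
      (((k:ℤ)-r) - k) % 2 = (p:ℤ) % 2 := by
    refine ⟨by omega, ?_, by omega⟩
    rw [abs_le]
    constructor <;> omega
  rw [Aher, if_pos hcond]
  have e1 : ((p:ℤ) + k - ((k:ℤ)-r))/2 = (a:ℤ) := by omega
  have e2 : ((p:ℤ) - k + ((k:ℤ)-r))/2 = (b:ℤ) := by omega
  rw [e1, e2, Int.toNat_natCast]
  rw [mul_div_assoc, Finset.sum_div]

lemma summand_ratio (τ : ℝ) (p1 p2 : ℕ) (hpar : p1 % 2 = p2 % 2) (r : ℤ)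
    (hr1 : -((min p1 p2 : ℕ) : ℤ) ≤ r) (hr2 : r ≤ ((min p1 p2 : ℕ) : ℤ))
    (hrp : r % 2 = ((min p1 p2 : ℕ) : ℤ) % 2) :
    Tendsto (fun k : ℕ => ((((k:ℤ) - r).toNat.factorial : ℝ) / (k.factorial : ℝ)) *
        Aher τ p1 ((k:ℤ) - r) k * Aher τ p2 ((k:ℤ) - r) k / (k:ℝ) ^ ((p1+p2)/2))
      atTop (nhds ((τ ^ ((((p1:ℤ)+r)/2).toNat) * (p1.choose ((((p1:ℤ)+r)/2).toNat) : ℝ)) *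
        (τ ^ ((((p2:ℤ)+r)/2).toNat) * (p2.choose ((((p2:ℤ)+r)/2).toNat) : ℝ)))) := by
  have hmm : min p1 p2 = p1 ∨ min p1 p2 = p2 := by omega
  have hq1 : r % 2 = (p1:ℤ) % 2 := by omega
  have hq2 : r % 2 = (p2:ℤ) % 2 := by omega
  have hb1 : -(p1:ℤ) ≤ r ∧ r ≤ (p1:ℤ) := by omega
  have hb2 : -(p2:ℤ) ≤ r ∧ r ≤ (p2:ℤ) := by omega
  have hA1 := Aher_ratio τ p1 r hb1.1 hb1.2 hq1
  have hA2 := Aher_ratio τ p2 r hb2.1 hb2.2 hq2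
  have hF := fac_ratio r
  have h := (hF.mul hA1).mul hA2
  rw [one_mul] at h
  apply h.congr'
  filter_upwards [eventually_ge_atTop 1] with k hk
  have hk0 : (k:ℝ) ≠ 0 := by
    have : (0:ℕ) < k := hk
    positivity
  have hpow : (((k:ℝ) ^ ((p1+p2)/2 : ℕ)))⁻¹ =
      (k:ℝ) ^ (r : ℤ) * (((k:ℝ) ^ ((((p1:ℤ)+r)/2).toNat)))⁻¹ *
        (((k:ℝ) ^ ((((p2:ℤ)+r)/2).toNat)))⁻¹ := by
    rw [← zpow_natCast (k:ℝ) ((p1+p2)/2), ← zpow_natCast (k:ℝ) ((((p1:ℤ)+r)/2).toNat),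
      ← zpow_natCast (k:ℝ) ((((p2:ℤ)+r)/2).toNat), ← zpow_neg, ← zpow_neg, ← zpow_neg,
      ← zpow_add₀ hk0, ← zpow_add₀ hk0]
    congr 1
    omega
  rw [div_eq_mul_inv _ ((k:ℝ) ^ ((p1+p2)/2 : ℕ)), hpow,
    div_eq_mul_inv (Aher τ p1 ((k:ℤ) - r) k), div_eq_mul_inv (Aher τ p2 ((k:ℤ) - r) k)]
  ring

/-- For `τ ∈ (0,1)` and `p1 ≡ p2 (mod 2)`, the spectral moments of the complex
elliptic Ginibre ensemble satisfy `M_τ(p1,p2,N) / N^{(p1+p2)/2+1} → C1(p1,p2)` as `N → ∞`. -/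
theorem elliptic_moment_limit (τ : ℝ) (hτ0 : 0 < τ) (hτ1 : τ < 1)
    (p1 p2 : ℕ) (hpar : p1 % 2 = p2 % 2) :
    Tendsto (fun N : ℕ => Mell τ p1 p2 N / (N : ℝ) ^ ((p1 + p2) / 2 + 1))
      atTop (nhds (C1 τ p1 p2)) := by
  set m : ℕ := min p1 p2 with hm
  set d : ℕ := (p1 + p2) / 2 with hd
  set b : ℕ → ℝ := fun k =>
    ∑ r ∈ (Ip m).filter (fun r => r ≤ (k : ℤ)),
      ((((k : ℤ) - r).toNat.factorial : ℝ) / (k.factorial : ℝ)) *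
        Aher τ p1 ((k : ℤ) - r) k * Aher τ p2 ((k : ℤ) - r) k with hbdef
  have hmem : ∀ r ∈ Ip m, -((m:ℕ):ℤ) ≤ r ∧ r ≤ ((m:ℕ):ℤ) ∧ r % 2 = ((m:ℕ):ℤ) % 2 := by
    intro r hr
    simp only [Ip, Finset.mem_filter, Finset.mem_Icc] at hr
    exact ⟨hr.1.1, hr.1.2, hr.2⟩
  -- limit of b k / k^d
  have hb : Tendsto (fun k : ℕ => b k / (k:ℝ) ^ d) atTop
      (nhds (∑ r ∈ Ip m, (τ ^ ((((p1:ℤ)+r)/2).toNat) * (p1.choose ((((p1:ℤ)+r)/2).toNat) : ℝ)) *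
        (τ ^ ((((p2:ℤ)+r)/2).toNat) * (p2.choose ((((p2:ℤ)+r)/2).toNat) : ℝ)))) := by
    have hsum := tendsto_finset_sum (Ip m) (fun r hr =>
      summand_ratio τ p1 p2 hpar r (hmem r hr).1 (hmem r hr).2.1 (hmem r hr).2.2)
    apply hsum.congr'
    filter_upwards [eventually_ge_atTop m] with k hk
    have hfilter : (Ip m).filter (fun r => r ≤ (k : ℤ)) = Ip m := by
      apply Finset.filter_true_of_mem
      intro r hr
      have := (hmem r hr).2.1
      omega
    rw [hbdef]
    simp only
    rw [hfilter, Finset.sum_div]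
  have hmain := sum_div_pow_succ b _ d hb
  have heq : Mell τ p1 p2 = fun N => ∑ k ∈ Finset.range N, b k := by
    funext N
    rfl
  rw [show (fun N : ℕ => Mell τ p1 p2 N / (N : ℝ) ^ ((p1 + p2) / 2 + 1)) =
      (fun N : ℕ => (∑ k ∈ Finset.range N, b k) / (N : ℝ) ^ (d + 1)) from by
    funext N
    rw [heq]]
  convert hmain using 2
  -- C1 = (Σ c_r) / (d + 1)
  rw [C1, eq_div_iff (by positivity : ((d:ℝ) + 1) ≠ 0)]
  have hcast : (((p1 + p2) / 2 + 1 : ℕ) : ℝ) = (d:ℝ) + 1 := by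
    push_cast [hd]
    ring
  rw [hcast, mul_comm, ← mul_assoc, mul_inv_cancel₀ (by positivity : ((d:ℝ) + 1) ≠ 0), one_mul]
  refine Finset.sum_congr rfl fun r hr => ?_
  obtain ⟨h1, h2, h3⟩ := hmem r hr
  have hz1 : zbinom p1 (((p1:ℤ) + r) / 2) = (p1.choose ((((p1:ℤ)+r)/2).toNat) : ℝ) := by
    rw [zbinom, if_pos ⟨by omega, by omega⟩]
  have hz2 : zbinom p2 (((p2:ℤ) + r) / 2) = (p2.choose ((((p2:ℤ)+r)/2).toNat) : ℝ) := by
    rw [zbinom, if_pos ⟨by omega, by omega⟩]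
  have hexp : ((((p1:ℤ) + p2) / 2) + r).toNat
      = (((p1:ℤ)+r)/2).toNat + (((p2:ℤ)+r)/2).toNat := by omega
  rw [hz1, hz2, hexp, pow_add]
  ring
end

section
/- Let τ ∈ (0,1) and let p1, p2 ≥ 0 be integers with p1 ≡ p2 (mod 2), and set s := (p1+p2)/2. Then there exists a constant K > 0 such that for all N ≥ 1: |M_τ(p1,p2,N) − C1(p1,p2)·N^{s+1} − C2(p1,p2)·N^{s}| ≤ K·N^{s−1}. -/
open Finset Filter

/-- The subleading moment coefficient `C2(p1, p2)`. -/
noncomputable def C2 (τ : ℝ) (p1 p2 : ℕ) : ℝ :=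
  - ∑ r ∈ Ip (min p1 p2),
      τ ^ (((((p1 : ℤ) + p2) / 2) + r).toNat) *
        zbinom p1 (((p1 : ℤ) + r) / 2) * zbinom p2 (((p2 : ℤ) + r) / 2) * ((r : ℝ) / 2)

open Polynomial in
/-- product polynomial -/
noncomputable def PP (r : ℤ) (a b : ℕ) : Polynomial ℝ :=
  (∏ i ∈ Finset.range a, (X - C ((r : ℝ) + i))) * (∏ i ∈ Finset.range b, (X - C (i : ℝ)))

namespace EllAux
open Polynomial

lemma PP_monic (r : ℤ) (a b : ℕ) : (PP r a b).Monic :=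
  ((monic_prod_of_monic _ _ fun i _ => monic_X_sub_C _).mul
    (monic_prod_of_monic _ _ fun i _ => monic_X_sub_C _))

lemma PP_natDegree (r : ℤ) (a b : ℕ) : (PP r a b).natDegree = a + b := by
  rw [PP, Polynomial.Monic.natDegree_mul (monic_prod_of_monic _ _ fun i _ => monic_X_sub_C _)
    (monic_prod_of_monic _ _ fun i _ => monic_X_sub_C _),
    natDegree_prod_of_monic _ _ (fun i _ => monic_X_sub_C _),
    natDegree_prod_of_monic _ _ (fun i _ => monic_X_sub_C _)]
  have e1 : ∀ (c : ℝ), (X - C c).natDegree = 1 := fun c => natDegree_X_sub_C c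
  simp only [e1, Finset.sum_const, Finset.card_range, smul_eq_mul, mul_one]

lemma PP_coeff_top (r : ℤ) (a b : ℕ) : (PP r a b).coeff (a + b) = 1 := by
  have := (PP_monic r a b).coeff_natDegree
  rwa [PP_natDegree] at this

lemma PP_coeff_gt (r : ℤ) (a b d : ℕ) (h : a + b < d) : (PP r a b).coeff d = 0 := by
  apply coeff_eq_zero_of_natDegree_lt; rw [PP_natDegree]; exact h

lemma sum_range_cast (n : ℕ) : ∑ i ∈ Finset.range n, (i : ℝ) = n * ((n : ℝ) - 1) / 2 := by
  induction n with
  | zero => simp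
  | succ n ih => rw [Finset.sum_range_succ, ih]; push_cast; ring

lemma PP_nextCoeff (r : ℤ) (a b : ℕ) (h : 0 < a + b) :
    (PP r a b).coeff (a + b - 1)
      = -((a : ℝ) * (r : ℝ) + (a : ℝ) * ((a : ℝ) - 1) / 2 + (b : ℝ) * ((b : ℝ) - 1) / 2) := by
  have h1 : (PP r a b).nextCoeff =
      -((a : ℝ) * (r : ℝ) + (a : ℝ) * ((a : ℝ) - 1) / 2 + (b : ℝ) * ((b : ℝ) - 1) / 2) := by
    rw [PP, Monic.nextCoeff_mul (monic_prod_of_monic _ _ fun i _ => monic_X_sub_C _)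
      (monic_prod_of_monic _ _ fun i _ => monic_X_sub_C _),
      prod_X_sub_C_nextCoeff, prod_X_sub_C_nextCoeff]
    rw [Finset.sum_add_distrib, Finset.sum_const, sum_range_cast, sum_range_cast]
    push_cast [Finset.card_range]
    ring
  have h2 := nextCoeff_of_natDegree_pos (by rw [PP_natDegree]; exact h) (p := PP r a b)
  rw [PP_natDegree] at h2
  rw [← h2, h1]

lemma PP_eval (r : ℤ) (a b : ℕ) (x : ℝ) :
    (PP r a b).eval x = (∏ i ∈ Finset.range a, (x - (r : ℝ) - i)) *
      ∏ i ∈ Finset.range b, (x - (i : ℝ)) := by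
  simp [PP, eval_prod, sub_sub]

end EllAux
open Finset


lemma cast_choose_prod (a n : ℕ) (h : a ≤ n) :
    (n.choose a : ℝ) * a.factorial = ∏ i ∈ Finset.range a, ((n : ℝ) - i) := by
  have h1 : ((n.descFactorial a : ℕ) : ℝ) = ∏ i ∈ Finset.range a, ((n : ℝ) - i) := by
    rw [Nat.descFactorial_eq_prod_range]
    push_cast
    refine Finset.prod_congr rfl fun i hi => ?_
    rw [Nat.cast_sub (le_of_lt (lt_of_lt_of_le (Finset.mem_range.mp hi) h))]
  rw [← h1, Nat.descFactorial_eq_factorial_mul_choose]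
  push_cast; ring

lemma fac1 (k : ℕ) (r : ℤ) (M M' l : ℕ) (hr : (M : ℤ) - M' = r) (hk : M + M' ≤ k) :
    invfac ((M' : ℤ) - l) * zbinom k ((M : ℤ) - l) *
        ((((k : ℤ) - r).toNat.factorial : ℝ) / (k.factorial : ℝ))
      = if l ≤ M ∧ l ≤ M' then
          (∏ i ∈ Finset.range (M' - l), ((k : ℝ) - (r : ℝ) - i)) /
            ((M - l).factorial * (M' - l).factorial)
        else 0 := by
  by_cases hc : l ≤ M ∧ l ≤ M'
  · obtain ⟨h1, h2⟩ := hc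
    rw [if_pos ⟨h1, h2⟩]
    set j := ((k : ℤ) - r).toNat with hj
    have hjz : (j : ℤ) = (k : ℤ) - r := Int.toNat_of_nonneg (by omega)
    have hjr : (j : ℝ) = (k : ℝ) - (r : ℝ) := by exact_mod_cast congrArg (Int.cast : ℤ → ℝ) hjz
    have e1 : invfac ((M' : ℤ) - l) = ((M' - l).factorial : ℝ)⁻¹ := by
      rw [invfac, if_pos (by omega : (0:ℤ) ≤ (M' : ℤ) - l)]
      have : ((M' : ℤ) - l).toNat = M' - l := by omega
      rw [this]
    have e2 : zbinom k ((M : ℤ) - l) = (k.choose (M - l) : ℝ) := by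
      rw [zbinom, if_pos ⟨by omega, by omega⟩]
      congr 2; omega
    have hml : M - l ≤ k := by omega
    have hml' : M' - l ≤ j := by omega
    have e3 : (∏ i ∈ Finset.range (M' - l), ((k : ℝ) - (r : ℝ) - i))
        = (j.choose (M' - l) : ℝ) * (M' - l).factorial := by
      rw [cast_choose_prod _ _ hml']
      exact Finset.prod_congr rfl fun i _ => by rw [hjr]
    rw [e1, e2, e3, Nat.cast_choose ℝ hml, Nat.cast_choose ℝ hml']
    have hsub : k - (M - l) = j - (M' - l) := by omega
    rw [hsub]
    have f1 : ((M - l).factorial : ℝ) ≠ 0 := Nat.cast_ne_zero.mpr (Nat.factorial_ne_zero _)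
    have f2 : ((M' - l).factorial : ℝ) ≠ 0 := Nat.cast_ne_zero.mpr (Nat.factorial_ne_zero _)
    have f3 : ((j - (M' - l)).factorial : ℝ) ≠ 0 := Nat.cast_ne_zero.mpr (Nat.factorial_ne_zero _)
    have f4 : (k.factorial : ℝ) ≠ 0 := Nat.cast_ne_zero.mpr (Nat.factorial_ne_zero _)
    field_simp
  · rw [if_neg hc]
    rcases Nat.lt_or_ge M' l with h | h
    · have : invfac ((M' : ℤ) - l) = 0 := by rw [invfac, if_neg (by omega)]
      rw [this]; ring
    · have hM : M < l := by omega
      have : zbinom k ((M : ℤ) - l) = 0 := by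
        rw [zbinom, if_neg (by omega)]
      rw [this]; ring

lemma fac2 (k : ℕ) (M M' l : ℕ) (hk : M ≤ k) :
    invfac ((M' : ℤ) - l) * zbinom k ((M : ℤ) - l)
      = if l ≤ M ∧ l ≤ M' then
          (∏ i ∈ Finset.range (M - l), ((k : ℝ) - i)) /
            ((M - l).factorial * (M' - l).factorial)
        else 0 := by
  by_cases hc : l ≤ M ∧ l ≤ M'
  · obtain ⟨h1, h2⟩ := hc
    rw [if_pos ⟨h1, h2⟩]
    have e1 : invfac ((M' : ℤ) - l) = ((M' - l).factorial : ℝ)⁻¹ := by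
      rw [invfac, if_pos (by omega : (0:ℤ) ≤ (M' : ℤ) - l)]
      have : ((M' : ℤ) - l).toNat = M' - l := by omega
      rw [this]
    have e2 : zbinom k ((M : ℤ) - l) = (k.choose (M - l) : ℝ) := by
      rw [zbinom, if_pos ⟨by omega, by omega⟩]
      congr 2; omega
    have e3 : (∏ i ∈ Finset.range (M - l), ((k : ℝ) - i))
        = (k.choose (M - l) : ℝ) * (M - l).factorial := by
      rw [cast_choose_prod _ _ (by omega)]
    rw [e1, e2, e3]
    have f1 : ((M - l).factorial : ℝ) ≠ 0 := Nat.cast_ne_zero.mpr (Nat.factorial_ne_zero _)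
    have f2 : ((M' - l).factorial : ℝ) ≠ 0 := Nat.cast_ne_zero.mpr (Nat.factorial_ne_zero _)
    field_simp
  · rw [if_neg hc]
    rcases Nat.lt_or_ge M' l with h | h
    · have : invfac ((M' : ℤ) - l) = 0 := by rw [invfac, if_neg (by omega)]
      rw [this]; ring
    · have : zbinom k ((M : ℤ) - l) = 0 := by rw [zbinom, if_neg (by omega)]
      rw [this]; ring
namespace EllAux

/-- the coefficient in the polynomial expansion -/
noncomputable def Cc (τ : ℝ) (p1 p2 : ℕ) (r : ℤ) (l1 l2 : ℕ) : ℝ :=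
  if (l1:ℤ) ≤ ((p1:ℤ)+r)/2 ∧ (l1:ℤ) ≤ ((p1:ℤ)-r)/2 ∧ (l2:ℤ) ≤ ((p2:ℤ)+r)/2 ∧ (l2:ℤ) ≤ ((p2:ℤ)-r)/2 then
    τ ^ ((((p1:ℤ)+(p2:ℤ))/2 + r).toNat) *
      ((p1.factorial : ℝ) / (2^l1 * l1.factorial * (((((p1:ℤ)+r)/2 - l1).toNat.factorial : ℕ) : ℝ) * (((((p1:ℤ)-r)/2 - l1).toNat.factorial : ℕ) : ℝ))) *
      ((p2.factorial : ℝ) / (2^l2 * l2.factorial * (((((p2:ℤ)+r)/2 - l2).toNat.factorial : ℕ) : ℝ) * (((((p2:ℤ)-r)/2 - l2).toNat.factorial : ℕ) : ℝ)))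
  else 0

lemma Cc_eq (τ : ℝ) (p1 p2 : ℕ) (r : ℤ) (l1 l2 M1 M1' M2 M2' : ℕ)
    (h1 : M1 + M1' = p1) (h2 : M2 + M2' = p2)
    (hr1 : (M1:ℤ) - M1' = r) (hr2 : (M2:ℤ) - M2' = r) :
    Cc τ p1 p2 r l1 l2 =
      if l1 ≤ M1 ∧ l1 ≤ M1' ∧ l2 ≤ M2 ∧ l2 ≤ M2' then
        τ ^ (M1 + M2) *
          ((p1.factorial : ℝ) / (2^l1 * l1.factorial * ((M1 - l1).factorial : ℝ) * ((M1' - l1).factorial : ℝ))) *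
          ((p2.factorial : ℝ) / (2^l2 * l2.factorial * ((M2 - l2).factorial : ℝ) * ((M2' - l2).factorial : ℝ)))
      else 0 := by
  have e1 : ((p1:ℤ)+r)/2 = (M1:ℤ) := by omega
  have e2 : ((p1:ℤ)-r)/2 = (M1':ℤ) := by omega
  have e3 : ((p2:ℤ)+r)/2 = (M2:ℤ) := by omega
  have e4 : ((p2:ℤ)-r)/2 = (M2':ℤ) := by omega
  have e5 : (((p1:ℤ)+(p2:ℤ))/2 + r).toNat = M1 + M2 := by omega
  have f1 : ((M1:ℤ) - l1).toNat = M1 - l1 := by omega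
  have f2 : ((M1':ℤ) - l1).toNat = M1' - l1 := by omega
  have f3 : ((M2:ℤ) - l2).toNat = M2 - l2 := by omega
  have f4 : ((M2':ℤ) - l2).toNat = M2' - l2 := by omega
  rw [Cc, e1, e2, e3, e4, e5, f1, f2, f3, f4]
  simp only [Nat.cast_le]

lemma term_pt (τ : ℝ) (k M1 M1' M2 M2' l1 l2 : ℕ) (r : ℤ)
    (hr1 : (M1:ℤ) - M1' = r) (hr2 : (M2:ℤ) - M2' = r) (hk : M1 + M1' + M2 + M2' ≤ k) :
    ((((k : ℤ) - r).toNat.factorial : ℝ) / (k.factorial : ℝ)) * (τ ^ M1 * τ ^ M2) *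
      (((M1+M1').factorial : ℝ) * ((2:ℝ)^l1 * l1.factorial)⁻¹ * invfac ((M1':ℤ) - l1) * zbinom k ((M1:ℤ) - l1)) *
      (((M2+M2').factorial : ℝ) * ((2:ℝ)^l2 * l2.factorial)⁻¹ * invfac ((M2':ℤ) - l2) * zbinom k ((M2:ℤ) - l2))
    = (if l1 ≤ M1 ∧ l1 ≤ M1' ∧ l2 ≤ M2 ∧ l2 ≤ M2' then
        τ ^ (M1 + M2) *
          (((M1+M1').factorial : ℝ) / (2^l1 * l1.factorial * ((M1 - l1).factorial : ℝ) * ((M1' - l1).factorial : ℝ))) *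
          (((M2+M2').factorial : ℝ) / (2^l2 * l2.factorial * ((M2 - l2).factorial : ℝ) * ((M2' - l2).factorial : ℝ)))
      else 0) *
      ((∏ i ∈ Finset.range (M1' - l1), ((k:ℝ) - (r:ℝ) - i)) * ∏ i ∈ Finset.range (M2 - l2), ((k:ℝ) - (i:ℝ))) := by
  have hA := fac1 k r M1 M1' l1 hr1 (by omega)
  have hB := fac2 k M2 M2' l2 (by omega)
  have lhs_eq : ((((k : ℤ) - r).toNat.factorial : ℝ) / (k.factorial : ℝ)) * (τ ^ M1 * τ ^ M2) *
      (((M1+M1').factorial : ℝ) * ((2:ℝ)^l1 * l1.factorial)⁻¹ * invfac ((M1':ℤ) - l1) * zbinom k ((M1:ℤ) - l1)) *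
      (((M2+M2').factorial : ℝ) * ((2:ℝ)^l2 * l2.factorial)⁻¹ * invfac ((M2':ℤ) - l2) * zbinom k ((M2:ℤ) - l2))
      = (τ ^ M1 * τ ^ M2) * (((M1+M1').factorial : ℝ) * ((2:ℝ)^l1 * l1.factorial)⁻¹) *
        (((M2+M2').factorial : ℝ) * ((2:ℝ)^l2 * l2.factorial)⁻¹) *
        (invfac ((M1':ℤ) - l1) * zbinom k ((M1:ℤ) - l1) * ((((k : ℤ) - r).toNat.factorial : ℝ) / (k.factorial : ℝ))) *
        (invfac ((M2':ℤ) - l2) * zbinom k ((M2:ℤ) - l2)) := by ring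
  rw [lhs_eq, hA, hB]
  by_cases c1 : l1 ≤ M1 ∧ l1 ≤ M1'
  · by_cases c2 : l2 ≤ M2 ∧ l2 ≤ M2'
    · rw [if_pos c1, if_pos c2, if_pos ⟨c1.1, c1.2, c2.1, c2.2⟩, pow_add]
      have f1 : ((M1 - l1).factorial : ℝ) ≠ 0 := Nat.cast_ne_zero.mpr (Nat.factorial_ne_zero _)
      have f2 : ((M1' - l1).factorial : ℝ) ≠ 0 := Nat.cast_ne_zero.mpr (Nat.factorial_ne_zero _)
      have f3 : ((M2 - l2).factorial : ℝ) ≠ 0 := Nat.cast_ne_zero.mpr (Nat.factorial_ne_zero _)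
      have f4 : ((M2' - l2).factorial : ℝ) ≠ 0 := Nat.cast_ne_zero.mpr (Nat.factorial_ne_zero _)
      have g1 : ((2:ℝ)^l1) ≠ 0 := by positivity
      have g2 : ((2:ℝ)^l2) ≠ 0 := by positivity
      have g3 : ((l1.factorial : ℕ) : ℝ) ≠ 0 := Nat.cast_ne_zero.mpr (Nat.factorial_ne_zero _)
      have g4 : ((l2.factorial : ℕ) : ℝ) ≠ 0 := Nat.cast_ne_zero.mpr (Nat.factorial_ne_zero _)
      field_simp
    · rw [if_neg c2, if_neg (show ¬(l1 ≤ M1 ∧ l1 ≤ M1' ∧ l2 ≤ M2 ∧ l2 ≤ M2') from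
        fun h => c2 ⟨h.2.2.1, h.2.2.2⟩)]
      ring
  · rw [if_neg c1, if_neg (show ¬(l1 ≤ M1 ∧ l1 ≤ M1' ∧ l2 ≤ M2 ∧ l2 ≤ M2') from
        fun h => c1 ⟨h.1, h.2.1⟩)]
    ring

end EllAux
namespace EllAux

lemma Aher_eq (τ : ℝ) (p : ℕ) (r : ℤ) (k M M' : ℕ)
    (h1 : M + M' = p) (hr : (M:ℤ) - M' = r) (hk : M ≤ k) :
    Aher τ p ((k:ℤ) - r) k
      = τ ^ M * ∑ l ∈ Finset.range (p / 2 + 1),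
          (p.factorial : ℝ) * ((2:ℝ)^l * (l.factorial : ℝ))⁻¹ *
            invfac ((M':ℤ) - l) * zbinom k ((M:ℤ) - l) := by
  rw [Aher, if_pos]
  · have e0 : ((p:ℤ) + (k:ℤ) - ((k:ℤ) - r)) / 2 = (M:ℤ) := by omega
    have e1 : (((p:ℤ) + (k:ℤ) - ((k:ℤ) - r)) / 2).toNat = M := by omega
    have e2 : ∀ l : ℕ, ((p:ℤ) - (k:ℤ) + ((k:ℤ) - r)) / 2 - l = (M':ℤ) - l := by
      intro l; omega
    rw [e1]
    congr 1
    refine Finset.sum_congr rfl fun l _ => ?_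
    rw [e0, e2 l]
  · refine ⟨by omega, ?_, by omega⟩
    have : (k:ℤ) - r - (k:ℤ) = -r := by ring
    rw [this]
    rw [abs_le]
    omega

lemma term_eq (τ : ℝ) (p1 p2 : ℕ) (r : ℤ) (k M1 M1' M2 M2' : ℕ)
    (h1 : M1 + M1' = p1) (h2 : M2 + M2' = p2)
    (hr1 : (M1:ℤ) - M1' = r) (hr2 : (M2:ℤ) - M2' = r) (hk : p1 + p2 ≤ k) :
    ((((k : ℤ) - r).toNat.factorial : ℝ) / (k.factorial : ℝ)) *
        Aher τ p1 ((k:ℤ) - r) k * Aher τ p2 ((k:ℤ) - r) k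
      = ∑ l1 ∈ Finset.range (p1 / 2 + 1), ∑ l2 ∈ Finset.range (p2 / 2 + 1),
          Cc τ p1 p2 r l1 l2 * (PP r (M1' - l1) (M2 - l2)).eval (k:ℝ) := by
  rw [Aher_eq τ p1 r k M1 M1' h1 hr1 (by omega), Aher_eq τ p2 r k M2 M2' h2 hr2 (by omega)]
  have expand : ((((k : ℤ) - r).toNat.factorial : ℝ) / (k.factorial : ℝ)) *
      (τ ^ M1 * ∑ l1 ∈ Finset.range (p1 / 2 + 1),
          (p1.factorial : ℝ) * ((2:ℝ)^l1 * (l1.factorial : ℝ))⁻¹ *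
            invfac ((M1':ℤ) - l1) * zbinom k ((M1:ℤ) - l1)) *
      (τ ^ M2 * ∑ l2 ∈ Finset.range (p2 / 2 + 1),
          (p2.factorial : ℝ) * ((2:ℝ)^l2 * (l2.factorial : ℝ))⁻¹ *
            invfac ((M2':ℤ) - l2) * zbinom k ((M2:ℤ) - l2))
      = ∑ l1 ∈ Finset.range (p1 / 2 + 1), ∑ l2 ∈ Finset.range (p2 / 2 + 1),
          ((((k : ℤ) - r).toNat.factorial : ℝ) / (k.factorial : ℝ)) * (τ ^ M1 * τ ^ M2) *
            ((p1.factorial : ℝ) * ((2:ℝ)^l1 * (l1.factorial : ℝ))⁻¹ *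
              invfac ((M1':ℤ) - l1) * zbinom k ((M1:ℤ) - l1)) *
            ((p2.factorial : ℝ) * ((2:ℝ)^l2 * (l2.factorial : ℝ))⁻¹ *
              invfac ((M2':ℤ) - l2) * zbinom k ((M2:ℤ) - l2)) := by
    have e0 : ∀ (a b c S1 S2 : ℝ), a * (b * S1) * (c * S2) = S1 * S2 * (a * (b * c)) := by
      intros; ring
    rw [e0, Finset.sum_mul_sum, Finset.sum_mul]
    refine Finset.sum_congr rfl fun l1 _ => ?_
    rw [Finset.sum_mul]
    refine Finset.sum_congr rfl fun l2 _ => by ring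
  rw [expand]
  refine Finset.sum_congr rfl fun l1 _ => Finset.sum_congr rfl fun l2 _ => ?_
  have := term_pt τ k M1 M1' M2 M2' l1 l2 r hr1 hr2 (by omega)
  rw [h1, h2] at this
  rw [this, PP_eval, Cc_eq τ p1 p2 r l1 l2 M1 M1' M2 M2' h1 h2 hr1 hr2]

end EllAux
namespace EllAux

lemma mem_Ip {p : ℕ} {r : ℤ} : r ∈ Ip p ↔ (-(p:ℤ) ≤ r ∧ r ≤ p ∧ r % 2 = (p:ℤ) % 2) := by
  simp [Ip, Finset.mem_filter, Finset.mem_Icc, and_assoc]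

lemma exists_decomp {p1 p2 : ℕ} (hpar : p1 % 2 = p2 % 2) {r : ℤ} (hr : r ∈ Ip (min p1 p2)) :
    ∃ M1 M1' M2 M2' : ℕ, M1 + M1' = p1 ∧ M2 + M2' = p2 ∧ (M1:ℤ) - M1' = r ∧ (M2:ℤ) - M2' = r := by
  rw [mem_Ip] at hr
  obtain ⟨ha, hb, hc⟩ := hr
  refine ⟨((p1:ℤ)+r).toNat / 2, ((p1:ℤ)-r).toNat / 2, ((p2:ℤ)+r).toNat / 2,
    ((p2:ℤ)-r).toNat / 2, ?_, ?_, ?_, ?_⟩ <;> omega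

end EllAux

open Polynomial in
noncomputable def Qpoly (τ : ℝ) (p1 p2 : ℕ) : Polynomial ℝ :=
  ∑ r ∈ Ip (min p1 p2), ∑ l1 ∈ Finset.range (p1 / 2 + 1), ∑ l2 ∈ Finset.range (p2 / 2 + 1),
    C (EllAux.Cc τ p1 p2 r l1 l2) *
      PP r ((((p1:ℤ) - r)/2 - l1).toNat) ((((p2:ℤ) + r)/2 - l2).toNat)

noncomputable def gEll (τ : ℝ) (p1 p2 : ℕ) (k : ℕ) : ℝ :=
  ∑ r ∈ (Ip (min p1 p2)).filter (fun r => r ≤ (k : ℤ)),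
    ((((k : ℤ) - r).toNat.factorial : ℝ) / (k.factorial : ℝ)) *
      Aher τ p1 ((k : ℤ) - r) k * Aher τ p2 ((k : ℤ) - r) k

lemma Mell_eq (τ : ℝ) (p1 p2 N : ℕ) :
    Mell τ p1 p2 N = ∑ k ∈ Finset.range N, gEll τ p1 p2 k := rfl

namespace EllAux

lemma gEll_eq_eval (τ : ℝ) (p1 p2 : ℕ) (hpar : p1 % 2 = p2 % 2) (k : ℕ) (hk : p1 + p2 ≤ k) :
    gEll τ p1 p2 k = (Qpoly τ p1 p2).eval (k:ℝ) := by
  rw [gEll, Qpoly]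
  rw [Finset.filter_true_of_mem (fun r hr => by rw [mem_Ip] at hr; omega)]
  rw [Polynomial.eval_finset_sum]
  refine Finset.sum_congr rfl fun r hr => ?_
  obtain ⟨M1, M1', M2, M2', h1, h2, hr1, hr2⟩ := exists_decomp hpar hr
  rw [Polynomial.eval_finset_sum]
  rw [term_eq τ p1 p2 r k M1 M1' M2 M2' h1 h2 hr1 hr2 hk]
  refine Finset.sum_congr rfl fun l1 _ => ?_
  rw [Polynomial.eval_finset_sum]
  refine Finset.sum_congr rfl fun l2 _ => ?_
  rw [Polynomial.eval_mul, Polynomial.eval_C]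
  have e1 : (((p1:ℤ) - r)/2 - l1).toNat = M1' - l1 := by omega
  have e2 : (((p2:ℤ) + r)/2 - l2).toNat = M2 - l2 := by omega
  rw [e1, e2]

end EllAux
noncomputable def tR (τ : ℝ) (p1 p2 : ℕ) (r : ℤ) : ℝ :=
  τ ^ (((((p1 : ℤ) + p2) / 2) + r).toNat) *
    zbinom p1 (((p1 : ℤ) + r) / 2) * zbinom p2 (((p2 : ℤ) + r) / 2)

namespace EllAux

lemma C1_eq (τ : ℝ) (p1 p2 : ℕ) :
    C1 τ p1 p2 = (((p1 + p2) / 2 + 1 : ℕ) : ℝ)⁻¹ * ∑ r ∈ Ip (min p1 p2), tR τ p1 p2 r := rfl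

lemma C2_eq (τ : ℝ) (p1 p2 : ℕ) :
    C2 τ p1 p2 = - ∑ r ∈ Ip (min p1 p2), tR τ p1 p2 r * ((r : ℝ) / 2) := rfl

lemma tR_eq (τ : ℝ) (p1 p2 : ℕ) (r : ℤ) (M1 M1' M2 M2' : ℕ)
    (h1 : M1 + M1' = p1) (h2 : M2 + M2' = p2)
    (hr1 : (M1:ℤ) - M1' = r) (hr2 : (M2:ℤ) - M2' = r) :
    tR τ p1 p2 r = τ ^ (M1 + M2) *
      ((p1.factorial : ℝ) / ((M1.factorial : ℝ) * (M1'.factorial : ℝ))) *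
      ((p2.factorial : ℝ) / ((M2.factorial : ℝ) * (M2'.factorial : ℝ))) := by
  rw [tR]
  have e5 : ((((p1 : ℤ) + p2) / 2) + r).toNat = M1 + M2 := by omega
  have z1 : zbinom p1 (((p1 : ℤ) + r) / 2) = (p1.choose M1 : ℝ) := by
    rw [zbinom, if_pos ⟨by omega, by omega⟩]
    congr 2
    omega
  have z2 : zbinom p2 (((p2 : ℤ) + r) / 2) = (p2.choose M2 : ℝ) := by
    rw [zbinom, if_pos ⟨by omega, by omega⟩]
    congr 2
    omega
  rw [e5, z1, z2, Nat.cast_choose ℝ (by omega : M1 ≤ p1), Nat.cast_choose ℝ (by omega : M2 ≤ p2)]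
  have d1 : p1 - M1 = M1' := by omega
  have d2 : p2 - M2 = M2' := by omega
  rw [d1, d2]

lemma Cc00 (τ : ℝ) (p1 p2 : ℕ) (r : ℤ) (M1 M1' M2 M2' : ℕ)
    (h1 : M1 + M1' = p1) (h2 : M2 + M2' = p2)
    (hr1 : (M1:ℤ) - M1' = r) (hr2 : (M2:ℤ) - M2' = r) :
    Cc τ p1 p2 r 0 0 = tR τ p1 p2 r := by
  rw [Cc_eq τ p1 p2 r 0 0 M1 M1' M2 M2' h1 h2 hr1 hr2,
    if_pos ⟨Nat.zero_le _, Nat.zero_le _, Nat.zero_le _, Nat.zero_le _⟩,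
    tR_eq τ p1 p2 r M1 M1' M2 M2' h1 h2 hr1 hr2]
  simp [Nat.sub_zero, Nat.factorial_zero]

lemma Cc10 (τ : ℝ) (p1 p2 : ℕ) (r : ℤ) (M1 M1' M2 M2' : ℕ)
    (h1 : M1 + M1' = p1) (h2 : M2 + M2' = p2)
    (hr1 : (M1:ℤ) - M1' = r) (hr2 : (M2:ℤ) - M2' = r)
    (hg : 1 ≤ M1 ∧ 1 ≤ M1') :
    Cc τ p1 p2 r 1 0 = tR τ p1 p2 r * (M1 : ℝ) * (M1' : ℝ) / 2 := by
  rw [Cc_eq τ p1 p2 r 1 0 M1 M1' M2 M2' h1 h2 hr1 hr2,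
    if_pos ⟨hg.1, hg.2, Nat.zero_le _, Nat.zero_le _⟩,
    tR_eq τ p1 p2 r M1 M1' M2 M2' h1 h2 hr1 hr2]
  have f1 : (M1:ℝ) * ((M1-1).factorial : ℝ) = (M1.factorial : ℝ) := by
    exact_mod_cast congrArg (Nat.cast : ℕ → ℝ) (Nat.mul_factorial_pred (by omega))
  have f2 : (M1':ℝ) * ((M1'-1).factorial : ℝ) = (M1'.factorial : ℝ) := by
    exact_mod_cast congrArg (Nat.cast : ℕ → ℝ) (Nat.mul_factorial_pred (by omega))
  have n1 : ((M1-1).factorial : ℝ) ≠ 0 := Nat.cast_ne_zero.mpr (Nat.factorial_ne_zero _)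
  have n2 : ((M1'-1).factorial : ℝ) ≠ 0 := Nat.cast_ne_zero.mpr (Nat.factorial_ne_zero _)
  have n3 : (M1.factorial : ℝ) ≠ 0 := Nat.cast_ne_zero.mpr (Nat.factorial_ne_zero _)
  have n4 : (M1'.factorial : ℝ) ≠ 0 := Nat.cast_ne_zero.mpr (Nat.factorial_ne_zero _)
  have n5 : (M2.factorial : ℝ) ≠ 0 := Nat.cast_ne_zero.mpr (Nat.factorial_ne_zero _)
  have n6 : (M2'.factorial : ℝ) ≠ 0 := Nat.cast_ne_zero.mpr (Nat.factorial_ne_zero _)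
  have m1 : (M1:ℝ) ≠ 0 := Nat.cast_ne_zero.mpr (by omega)
  have m2 : (M1':ℝ) ≠ 0 := Nat.cast_ne_zero.mpr (by omega)
  simp only [Nat.sub_zero, Nat.factorial_zero, Nat.factorial_one, pow_one, pow_zero]
  rw [← f1, ← f2]
  field_simp
  ring

lemma Cc01 (τ : ℝ) (p1 p2 : ℕ) (r : ℤ) (M1 M1' M2 M2' : ℕ)
    (h1 : M1 + M1' = p1) (h2 : M2 + M2' = p2)
    (hr1 : (M1:ℤ) - M1' = r) (hr2 : (M2:ℤ) - M2' = r)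
    (hg : 1 ≤ M2 ∧ 1 ≤ M2') :
    Cc τ p1 p2 r 0 1 = tR τ p1 p2 r * (M2 : ℝ) * (M2' : ℝ) / 2 := by
  rw [Cc_eq τ p1 p2 r 0 1 M1 M1' M2 M2' h1 h2 hr1 hr2,
    if_pos ⟨Nat.zero_le _, Nat.zero_le _, hg.1, hg.2⟩,
    tR_eq τ p1 p2 r M1 M1' M2 M2' h1 h2 hr1 hr2]
  have f1 : (M2:ℝ) * ((M2-1).factorial : ℝ) = (M2.factorial : ℝ) := by
    exact_mod_cast congrArg (Nat.cast : ℕ → ℝ) (Nat.mul_factorial_pred (by omega))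
  have f2 : (M2':ℝ) * ((M2'-1).factorial : ℝ) = (M2'.factorial : ℝ) := by
    exact_mod_cast congrArg (Nat.cast : ℕ → ℝ) (Nat.mul_factorial_pred (by omega))
  have n1 : ((M2-1).factorial : ℝ) ≠ 0 := Nat.cast_ne_zero.mpr (Nat.factorial_ne_zero _)
  have n2 : ((M2'-1).factorial : ℝ) ≠ 0 := Nat.cast_ne_zero.mpr (Nat.factorial_ne_zero _)
  have n3 : (M1.factorial : ℝ) ≠ 0 := Nat.cast_ne_zero.mpr (Nat.factorial_ne_zero _)
  have n4 : (M1'.factorial : ℝ) ≠ 0 := Nat.cast_ne_zero.mpr (Nat.factorial_ne_zero _)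
  have n5 : (M2.factorial : ℝ) ≠ 0 := Nat.cast_ne_zero.mpr (Nat.factorial_ne_zero _)
  have n6 : (M2'.factorial : ℝ) ≠ 0 := Nat.cast_ne_zero.mpr (Nat.factorial_ne_zero _)
  have m1 : (M2:ℝ) ≠ 0 := Nat.cast_ne_zero.mpr (by omega)
  have m2 : (M2':ℝ) ≠ 0 := Nat.cast_ne_zero.mpr (by omega)
  simp only [Nat.sub_zero, Nat.factorial_zero, Nat.factorial_one, pow_one, pow_zero]
  rw [← f1, ← f2]
  field_simp
  ring

lemma Cc_zero (τ : ℝ) (p1 p2 : ℕ) (r : ℤ) (l1 l2 M1 M1' M2 M2' : ℕ)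
    (h1 : M1 + M1' = p1) (h2 : M2 + M2' = p2)
    (hr1 : (M1:ℤ) - M1' = r) (hr2 : (M2:ℤ) - M2' = r)
    (hg : ¬(l1 ≤ M1 ∧ l1 ≤ M1' ∧ l2 ≤ M2 ∧ l2 ≤ M2')) :
    Cc τ p1 p2 r l1 l2 = 0 := by
  rw [Cc_eq τ p1 p2 r l1 l2 M1 M1' M2 M2' h1 h2 hr1 hr2, if_neg hg]

end EllAux
namespace EllAux
open Polynomial

lemma Qpoly_natDegree_le (τ : ℝ) (p1 p2 : ℕ) (hpar : p1 % 2 = p2 % 2) :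
    (Qpoly τ p1 p2).natDegree ≤ (p1 + p2) / 2 := by
  refine natDegree_sum_le_of_forall_le _ _ fun r hr => ?_
  rw [mem_Ip] at hr
  refine natDegree_sum_le_of_forall_le _ _ fun l1 _ => ?_
  refine natDegree_sum_le_of_forall_le _ _ fun l2 _ => ?_
  refine (natDegree_C_mul_le _ _).trans ?_
  rw [PP_natDegree]
  omega

lemma Qpoly_coeff_top (τ : ℝ) (p1 p2 : ℕ) (hpar : p1 % 2 = p2 % 2) :
    (Qpoly τ p1 p2).coeff ((p1 + p2) / 2) = ∑ r ∈ Ip (min p1 p2), tR τ p1 p2 r := by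
  rw [Qpoly, finset_sum_coeff]
  refine Finset.sum_congr rfl fun r hr => ?_
  obtain ⟨M1, M1', M2, M2', h1, h2, hr1, hr2⟩ := exists_decomp hpar hr
  have hs : (p1 + p2) / 2 = M1' + M2 := by omega
  have e1 : ∀ l1 : ℕ, (((p1:ℤ) - r)/2 - l1).toNat = M1' - l1 := fun l1 => by omega
  have e2 : ∀ l2 : ℕ, (((p2:ℤ) + r)/2 - l2).toNat = M2 - l2 := fun l2 => by omega
  simp only [finset_sum_coeff, coeff_C_mul, e1, e2]
  rw [Finset.sum_eq_single_of_mem 0 (Finset.mem_range.mpr (Nat.succ_pos _))]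
  · rw [Finset.sum_eq_single_of_mem 0 (Finset.mem_range.mpr (Nat.succ_pos _))]
    · rw [Nat.sub_zero, Nat.sub_zero, hs, PP_coeff_top,
        Cc00 τ p1 p2 r M1 M1' M2 M2' h1 h2 hr1 hr2, mul_one]
    · intro l2 _ hl2
      by_cases hg : (0:ℕ) ≤ M1 ∧ (0:ℕ) ≤ M1' ∧ l2 ≤ M2 ∧ l2 ≤ M2'
      · rw [PP_coeff_gt _ _ _ _ (by omega), mul_zero]
      · rw [Cc_zero τ p1 p2 r 0 l2 M1 M1' M2 M2' h1 h2 hr1 hr2 hg, zero_mul]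
  · intro l1 _ hl1
    refine Finset.sum_eq_zero fun l2 _ => ?_
    by_cases hg : l1 ≤ M1 ∧ l1 ≤ M1' ∧ l2 ≤ M2 ∧ l2 ≤ M2'
    · rw [PP_coeff_gt _ _ _ _ (by omega), mul_zero]
    · rw [Cc_zero τ p1 p2 r l1 l2 M1 M1' M2 M2' h1 h2 hr1 hr2 hg, zero_mul]

lemma Qpoly_coeff_sub1 (τ : ℝ) (p1 p2 : ℕ) (hpar : p1 % 2 = p2 % 2)
    (hs1 : 1 ≤ (p1 + p2) / 2) :
    (Qpoly τ p1 p2).coeff ((p1 + p2) / 2 - 1)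
      = ∑ r ∈ Ip (min p1 p2), tR τ p1 p2 r *
          ((((p1 + p2) / 2 : ℕ) : ℝ) * (1 - (r : ℝ)) / 2) := by
  rw [Qpoly, finset_sum_coeff]
  refine Finset.sum_congr rfl fun r hr => ?_
  obtain ⟨M1, M1', M2, M2', h1, h2, hr1, hr2⟩ := exists_decomp hpar hr
  have hs : (p1 + p2) / 2 = M1' + M2 := by omega
  have e1 : ∀ l1 : ℕ, (((p1:ℤ) - r)/2 - l1).toNat = M1' - l1 := fun l1 => by omega
  have e2 : ∀ l2 : ℕ, (((p2:ℤ) + r)/2 - l2).toNat = M2 - l2 := fun l2 => by omega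
  simp only [finset_sum_coeff, coeff_C_mul, e1, e2]
  -- the generic vanishing fact
  have hvan : ∀ l1 l2 : ℕ, 2 ≤ l1 + l2 →
      Cc τ p1 p2 r l1 l2 * (PP r (M1' - l1) (M2 - l2)).coeff ((p1 + p2) / 2 - 1) = 0 := by
    intro l1 l2 hl
    by_cases hg : l1 ≤ M1 ∧ l1 ≤ M1' ∧ l2 ≤ M2 ∧ l2 ≤ M2'
    · rw [PP_coeff_gt _ _ _ _ (by omega), mul_zero]
    · rw [Cc_zero τ p1 p2 r l1 l2 M1 M1' M2 M2' h1 h2 hr1 hr2 hg, zero_mul]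
  -- extend ranges by one
  have hext : ∀ (n m : ℕ) (f : ℕ → ℕ → ℝ),
      (∀ l1 l2, Cc τ p1 p2 r l1 l2 = 0 → f l1 l2 = 0) → True := fun _ _ _ _ => trivial
  -- extend outer range
  have big1 : ∀ l1, p1 / 2 < l1 → ∀ l2, Cc τ p1 p2 r l1 l2 = 0 := by
    intro l1 hl1 l2
    refine Cc_zero τ p1 p2 r l1 l2 M1 M1' M2 M2' h1 h2 hr1 hr2 (fun hg => by omega)
  have big2 : ∀ l2, p2 / 2 < l2 → ∀ l1, Cc τ p1 p2 r l1 l2 = 0 := by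
    intro l2 hl2 l1
    refine Cc_zero τ p1 p2 r l1 l2 M1 M1' M2 M2' h1 h2 hr1 hr2 (fun hg => by omega)
  set F : ℕ → ℕ → ℝ := fun l1 l2 =>
    Cc τ p1 p2 r l1 l2 * (PP r (M1' - l1) (M2 - l2)).coeff ((p1 + p2) / 2 - 1) with hF
  have inner_ext : ∀ l1, ∑ l2 ∈ Finset.range (p2 / 2 + 1), F l1 l2
      = ∑ l2 ∈ Finset.range (p2 / 2 + 2), F l1 l2 := by
    intro l1
    refine (Finset.sum_subset (Finset.range_subset_range.mpr
      (by omega : p2 / 2 + 1 ≤ p2 / 2 + 2)) ?_)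
    intro l2 _ hl2
    rw [hF]
    simp only []
    rw [big2 l2 (by simp only [Finset.mem_range] at hl2; omega) l1, zero_mul]
  have outer_ext : ∑ l1 ∈ Finset.range (p1 / 2 + 1), ∑ l2 ∈ Finset.range (p2 / 2 + 2), F l1 l2
      = ∑ l1 ∈ Finset.range (p1 / 2 + 2), ∑ l2 ∈ Finset.range (p2 / 2 + 2), F l1 l2 := by
    refine (Finset.sum_subset (Finset.range_subset_range.mpr
      (by omega : p1 / 2 + 1 ≤ p1 / 2 + 2)) ?_)
    intro l1 _ hl1
    refine Finset.sum_eq_zero fun l2 _ => ?_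
    rw [hF]
    simp only []
    rw [big1 l1 (by simp only [Finset.mem_range] at hl1; omega) l2, zero_mul]
  calc ∑ l1 ∈ Finset.range (p1 / 2 + 1), ∑ l2 ∈ Finset.range (p2 / 2 + 1), F l1 l2
      = ∑ l1 ∈ Finset.range (p1 / 2 + 2), ∑ l2 ∈ Finset.range (p2 / 2 + 2), F l1 l2 := by
        rw [← outer_ext]
        exact Finset.sum_congr rfl fun l1 _ => inner_ext l1
    _ = F 0 0 + F 1 0 + F 0 1 := by
        have peel : ∀ (n : ℕ) (f : ℕ → ℝ), ∑ i ∈ Finset.range (n + 2), f i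
            = (∑ i ∈ Finset.range n, f (i + 2)) + f 1 + f 0 := by
          intro n f
          rw [Finset.sum_range_succ' f (n + 1), Finset.sum_range_succ' (fun i => f (i + 1)) n]
        rw [peel]
        have tail0 : ∑ l1 ∈ Finset.range (p1 / 2), (fun l1 => ∑ l2 ∈ Finset.range (p2 / 2 + 2), F l1 l2) (l1 + 2) = 0 := by
          refine Finset.sum_eq_zero fun l1 _ => ?_
          exact Finset.sum_eq_zero fun l2 _ => hvan _ _ (by omega)
        rw [tail0, zero_add]
        rw [peel, peel]
        have t1 : ∑ l2 ∈ Finset.range (p2 / 2), F 1 (l2 + 2) = 0 :=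
          Finset.sum_eq_zero fun l2 _ => hvan _ _ (by omega)
        have t2 : F 1 1 = 0 := hvan 1 1 (by omega)
        have t3 : ∑ l2 ∈ Finset.range (p2 / 2), F 0 (l2 + 2) = 0 :=
          Finset.sum_eq_zero fun l2 _ => hvan _ _ (by omega)
        rw [t1, t2, t3]
        ring
    _ = tR τ p1 p2 r * ((((p1 + p2) / 2 : ℕ) : ℝ) * (1 - (r : ℝ)) / 2) := by
        -- compute the three terms
        have hF00 : F 0 0 = tR τ p1 p2 r *
            (-((M1' : ℝ) * (r : ℝ) + (M1' : ℝ) * ((M1' : ℝ) - 1) / 2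
              + (M2 : ℝ) * ((M2 : ℝ) - 1) / 2)) := by
          rw [hF]
          simp only [Nat.sub_zero]
          rw [show (p1 + p2) / 2 - 1 = M1' + M2 - 1 from by omega,
            PP_nextCoeff r M1' M2 (by omega),
            Cc00 τ p1 p2 r M1 M1' M2 M2' h1 h2 hr1 hr2]
        have hF10 : F 1 0 = tR τ p1 p2 r * ((M1 : ℝ) * (M1' : ℝ) / 2) := by
          rw [hF]
          simp only [Nat.sub_zero]
          by_cases hg : 1 ≤ M1 ∧ 1 ≤ M1'
          · rw [show (p1 + p2) / 2 - 1 = (M1' - 1) + M2 from by omega, PP_coeff_top,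
              Cc10 τ p1 p2 r M1 M1' M2 M2' h1 h2 hr1 hr2 hg]
            ring
          · rw [Cc_zero τ p1 p2 r 1 0 M1 M1' M2 M2' h1 h2 hr1 hr2
              (fun hgg => hg ⟨hgg.1, hgg.2.1⟩), zero_mul]
            have : (M1 : ℝ) * (M1' : ℝ) = 0 := by
              have h0 : M1 = 0 ∨ M1' = 0 := by omega
              rcases h0 with h0 | h0 <;> simp [h0]
            rw [this]
            ring
        have hF01 : F 0 1 = tR τ p1 p2 r * ((M2 : ℝ) * (M2' : ℝ) / 2) := by
          rw [hF]
          simp only [Nat.sub_zero]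
          by_cases hg : 1 ≤ M2 ∧ 1 ≤ M2'
          · rw [show (p1 + p2) / 2 - 1 = M1' + (M2 - 1) from by omega, PP_coeff_top,
              Cc01 τ p1 p2 r M1 M1' M2 M2' h1 h2 hr1 hr2 hg]
            ring
          · rw [Cc_zero τ p1 p2 r 0 1 M1 M1' M2 M2' h1 h2 hr1 hr2
              (fun hgg => hg ⟨hgg.2.2.1, hgg.2.2.2⟩), zero_mul]
            have : (M2 : ℝ) * (M2' : ℝ) = 0 := by
              have h0 : M2 = 0 ∨ M2' = 0 := by omega
              rcases h0 with h0 | h0 <;> simp [h0]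
            rw [this]
            ring
        rw [hF00, hF10, hF01]
        have c1 : (r : ℝ) = (M1 : ℝ) - (M1' : ℝ) := by exact_mod_cast congrArg (Int.cast : ℤ → ℝ) hr1.symm
        have c2 : (M2' : ℝ) = (M2 : ℝ) - (M1 : ℝ) + (M1' : ℝ) := by
          have : (M2' : ℤ) = (M2 : ℤ) - (M1 : ℤ) + (M1' : ℤ) := by omega
          exact_mod_cast congrArg (Int.cast : ℤ → ℝ) this
        have c3 : (((p1 + p2) / 2 : ℕ) : ℝ) = (M1' : ℝ) + (M2 : ℝ) := by
          rw [hs]; push_cast; ring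
        rw [c1, c2, c3]
        ring
end EllAux
namespace EllAux
open Polynomial

lemma sum_pow_real (n d : ℕ) :
    ∑ k ∈ Finset.range n, (k : ℝ) ^ d
      = ∑ i ∈ Finset.range (d + 1),
          (((bernoulli i : ℚ) : ℝ) * ((d + 1).choose i : ℝ) / ((d : ℝ) + 1)) * (n : ℝ) ^ (d + 1 - i) := by
  have h := sum_range_pow n d
  have h2 := congrArg (fun q : ℚ => (q : ℝ)) h
  push_cast at h2
  rw [h2]
  refine Finset.sum_congr rfl fun i _ => by ring

/-- Faulhaber polynomial -/
noncomputable def Wd (d : ℕ) : Polynomial ℝ :=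
  ∑ i ∈ Finset.range (d + 1),
    C (((bernoulli i : ℚ) : ℝ) * ((d + 1).choose i : ℝ) / ((d : ℝ) + 1)) * X ^ (d + 1 - i)

lemma Wd_eval (d n : ℕ) : (Wd d).eval (n : ℝ) = ∑ k ∈ Finset.range n, (k : ℝ) ^ d := by
  rw [sum_pow_real, Wd, eval_finset_sum]
  refine Finset.sum_congr rfl fun i _ => by simp [eval_mul, eval_pow]

lemma Wd_natDegree_le (d : ℕ) : (Wd d).natDegree ≤ d + 1 := by
  refine natDegree_sum_le_of_forall_le _ _ fun i _ => ?_
  refine (natDegree_C_mul_le _ _).trans ?_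
  simpa using Nat.sub_le (d+1) i

lemma Wd_coeff_top (d : ℕ) : (Wd d).coeff (d + 1) = 1 / ((d : ℝ) + 1) := by
  rw [Wd, finset_sum_coeff]
  rw [Finset.sum_eq_single_of_mem 0 (Finset.mem_range.mpr (Nat.succ_pos _))]
  · simp [coeff_C_mul, coeff_X_pow]
  · intro i _ hi
    rw [coeff_C_mul, coeff_X_pow, if_neg (by omega), mul_zero]

lemma Wd_coeff_d (d : ℕ) (hd : 1 ≤ d) : (Wd d).coeff d = -(1/2 : ℝ) := by
  rw [Wd, finset_sum_coeff]
  rw [Finset.sum_eq_single_of_mem 1 (Finset.mem_range.mpr (by omega))]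
  · rw [coeff_C_mul, coeff_X_pow, if_pos (by omega)]
    rw [_root_.bernoulli_one]
    push_cast
    rw [Nat.choose_one_right]
    push_cast
    field_simp
  · intro i hi hi1
    rw [Finset.mem_range] at hi
    rw [coeff_C_mul, coeff_X_pow, if_neg (by omega), mul_zero]

lemma Wd_coeff_lt (d j : ℕ) (hj : d + 1 < j) : (Wd d).coeff j = 0 :=
  coeff_eq_zero_of_natDegree_lt (lt_of_le_of_lt (Wd_natDegree_le d) hj)

/-- generic polynomial eval bound -/
lemma eval_abs_le (P : Polynomial ℝ) (d : ℕ) (hd : P.natDegree ≤ d) (n : ℕ) (hn : 1 ≤ n) :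
    |P.eval (n : ℝ)| ≤ (∑ i ∈ Finset.range (d + 1), |P.coeff i|) * (n : ℝ) ^ d := by
  rw [eval_eq_sum_range' (lt_of_le_of_lt hd (Nat.lt_succ_self d))]
  refine (Finset.abs_sum_le_sum_abs _ _).trans ?_
  rw [Finset.sum_mul]
  refine Finset.sum_le_sum fun i hi => ?_
  rw [abs_mul]
  have h1 : |(n:ℝ) ^ i| = (n:ℝ) ^ i := abs_of_nonneg (by positivity)
  rw [h1]
  have hid := Finset.mem_range.mp hi
  have h2 : (n:ℝ) ^ i ≤ (n:ℝ) ^ d :=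
    pow_le_pow_right₀ (by exact_mod_cast hn) (by omega)
  nlinarith [abs_nonneg (P.coeff i), pow_nonneg (by positivity : (0:ℝ) ≤ (n:ℝ)) i]

end EllAux
namespace EllAux
open Polynomial

lemma exists_sum_poly (Q : Polynomial ℝ) (s : ℕ) (hQ : Q.natDegree ≤ s) :
    ∃ W : Polynomial ℝ,
      (∀ N : ℕ, W.eval (N : ℝ) = ∑ k ∈ Finset.range N, Q.eval (k : ℝ)) ∧
      W.natDegree ≤ s + 1 ∧
      W.coeff (s + 1) = Q.coeff s / ((s : ℝ) + 1) ∧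
      (1 ≤ s → W.coeff s = -(Q.coeff s) / 2 + Q.coeff (s - 1) / (s : ℝ)) := by
  refine ⟨∑ d ∈ Finset.range (s + 1), C (Q.coeff d) * Wd d, ?_, ?_, ?_, ?_⟩
  · intro N
    rw [eval_finset_sum]
    have h1 : ∀ d ∈ Finset.range (s+1), (C (Q.coeff d) * Wd d).eval (N:ℝ)
        = ∑ k ∈ Finset.range N, Q.coeff d * (k:ℝ)^d := by
      intro d _
      rw [eval_mul, eval_C, Wd_eval, Finset.mul_sum]
    rw [Finset.sum_congr rfl h1, Finset.sum_comm]
    refine Finset.sum_congr rfl fun k _ => ?_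
    rw [eval_eq_sum_range' (lt_of_le_of_lt hQ (Nat.lt_succ_self s))]
  · refine natDegree_sum_le_of_forall_le _ _ fun d hd => ?_
    refine (natDegree_C_mul_le _ _).trans ((Wd_natDegree_le d).trans ?_)
    have := Finset.mem_range.mp hd
    omega
  · rw [finset_sum_coeff]
    rw [Finset.sum_eq_single_of_mem s (Finset.mem_range.mpr (Nat.lt_succ_self s))]
    · rw [coeff_C_mul, Wd_coeff_top]
      ring
    · intro d hd hds
      have := Finset.mem_range.mp hd
      rw [coeff_C_mul, Wd_coeff_lt d _ (by omega), mul_zero]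
  · intro hs
    rw [finset_sum_coeff]
    have hss : s + 1 = s - 1 + 1 + 1 := by omega
    rw [hss, Finset.sum_range_succ, Finset.sum_range_succ]
    have e1 : s - 1 + 1 = s := by omega
    rw [e1]
    have tail : ∑ d ∈ Finset.range (s-1), (C (Q.coeff d) * Wd d).coeff s = 0 := by
      refine Finset.sum_eq_zero fun d hd => ?_
      have := Finset.mem_range.mp hd
      rw [coeff_C_mul, Wd_coeff_lt d _ (by omega), mul_zero]
    rw [tail, zero_add, coeff_C_mul, coeff_C_mul, Wd_coeff_d s hs]
    have e2 : (Wd (s-1)).coeff s = 1 / (((s-1 : ℕ) : ℝ) + 1) := by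
      have := Wd_coeff_top (s-1)
      rwa [e1] at this
    rw [e2]
    have e3 : ((s - 1 : ℕ) : ℝ) + 1 = (s : ℝ) := by
      have : ((s - 1 : ℕ) : ℝ) = (s : ℝ) - 1 := by
        have : (s : ℝ) - 1 = ((s : ℤ) - 1 : ℤ) := by push_cast; ring
        rw [this]
        exact_mod_cast congrArg (Int.cast : ℤ → ℝ) (by omega : ((s - 1 : ℕ) : ℤ) = (s : ℤ) - 1)
      rw [this]; ring
    rw [e3]
    ring

end EllAux
open EllAux Polynomial in
/-- For `τ ∈ (0,1)` and `p1 ≡ p2 (mod 2)` with `s = (p1+p2)/2`, there is a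
constant `K > 0` such that for all `N ≥ 1`,
`|M_τ(p1,p2,N) − C1(p1,p2) N^{s+1} − C2(p1,p2) N^s| ≤ K N^{s−1}`. -/
theorem elliptic_moment_expansion (τ : ℝ) (hτ0 : 0 < τ) (hτ1 : τ < 1)
    (p1 p2 : ℕ) (hpar : p1 % 2 = p2 % 2) :
    ∃ K > 0, ∀ N : ℕ, 1 ≤ N →
      |Mell τ p1 p2 N - C1 τ p1 p2 * (N : ℝ) ^ ((p1 + p2) / 2 + 1)
          - C2 τ p1 p2 * (N : ℝ) ^ ((p1 + p2) / 2)|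
        ≤ K * (N : ℝ) ^ ((((p1 + p2) / 2 : ℕ) : ℤ) - 1) := by
  rcases Nat.eq_zero_or_pos ((p1 + p2) / 2) with hs0 | hs
  · -- degenerate case s = 0, i.e. p1 = p2 = 0
    have hp1 : p1 = 0 := by omega
    have hp2 : p2 = 0 := by omega
    subst hp1; subst hp2
    refine ⟨1, one_pos, fun N hN => ?_⟩
    have hIp : Ip (min 0 0) = {0} := by
      ext r
      simp only [Ip, Finset.mem_filter, Finset.mem_Icc, Finset.mem_singleton]
      omega
    have hA : ∀ k : ℕ, Aher τ 0 ((k : ℤ) - 0) k = 1 := by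
      intro k
      rw [Aher_eq τ 0 0 k 0 0 rfl (by simp) (Nat.zero_le _)]
      simp only [pow_zero, one_mul, Nat.zero_div, zero_add, Finset.sum_range_one]
      have h1 : invfac (((0:ℕ):ℤ) - ((0:ℕ):ℤ)) = 1 := by
        rw [invfac, if_pos (by omega)]
        simp
      have h2 : zbinom k (((0:ℕ):ℤ) - ((0:ℕ):ℤ)) = 1 := by
        rw [zbinom, if_pos ⟨by omega, by omega⟩]
        simp
      rw [h1, h2]
      simp
    have hM : Mell τ 0 0 N = N := by
      rw [Mell, hIp]
      have : ∀ k ∈ Finset.range N,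
          (∑ r ∈ ({0} : Finset ℤ).filter (fun r => r ≤ (k : ℤ)),
            ((((k : ℤ) - r).toNat.factorial : ℝ) / (k.factorial : ℝ)) *
              Aher τ 0 ((k : ℤ) - r) k * Aher τ 0 ((k : ℤ) - r) k) = 1 := by
        intro k _
        rw [Finset.filter_singleton, if_pos (by exact_mod_cast Nat.zero_le k), Finset.sum_singleton,
          hA k]
        have : ((k.factorial : ℝ)) ≠ 0 := Nat.cast_ne_zero.mpr (Nat.factorial_ne_zero _)
        field_simp
        simp
      rw [Finset.sum_congr rfl this]
      simp
    have hC1 : C1 τ 0 0 = 1 := by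
      rw [C1, hIp]
      norm_num
      rw [zbinom, if_pos ⟨le_refl _, by norm_num⟩]
      norm_num
    have hC2 : C2 τ 0 0 = 0 := by
      rw [C2, hIp]
      norm_num
    rw [hM, hC1, hC2]
    have e : ((0 + 0) / 2 : ℕ) = 0 := rfl
    rw [e]
    have hNpos : (0:ℝ) < (N:ℝ) := by exact_mod_cast hN
    have : |(N:ℝ) - 1 * (N:ℝ) ^ (0 + 1) - 0 * (N:ℝ) ^ 0| = 0 := by
      rw [abs_eq_zero]; ring
    rw [this]
    positivity
  · -- main case: s ≥ 1
    set s : ℕ := (p1 + p2) / 2 with hsdef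
    obtain ⟨W, hWeval, hWdeg, hWtop, hWs⟩ :=
      exists_sum_poly (Qpoly τ p1 p2) s (Qpoly_natDegree_le τ p1 p2 hpar)
    have hsne : (s : ℝ) ≠ 0 := Nat.cast_ne_zero.mpr (by omega)
    have hC1W : W.coeff (s + 1) = C1 τ p1 p2 := by
      rw [hWtop, Qpoly_coeff_top τ p1 p2 hpar, C1_eq]
      push_cast
      ring
    have hC2W : W.coeff s = C2 τ p1 p2 := by
      rw [hWs hs, Qpoly_coeff_top τ p1 p2 hpar, Qpoly_coeff_sub1 τ p1 p2 hpar hs, C2_eq]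
      rw [neg_div, Finset.sum_div, Finset.sum_div, ← Finset.sum_neg_distrib,
        ← Finset.sum_neg_distrib, ← Finset.sum_add_distrib]
      refine Finset.sum_congr rfl fun r _ => ?_
      field_simp
      ring
    set Dp : Polynomial ℝ :=
      W - Polynomial.C (C1 τ p1 p2) * Polynomial.X ^ (s + 1)
        - Polynomial.C (C2 τ p1 p2) * Polynomial.X ^ s with hDp
    have hcD : ∀ m, Dp.coeff m = W.coeff m - (if m = s + 1 then C1 τ p1 p2 else 0)
        - (if m = s then C2 τ p1 p2 else 0) := by
      intro m
      rw [hDp]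
      simp only [coeff_sub, coeff_C_mul, coeff_X_pow, mul_ite, mul_one, mul_zero]
    have hDdeg : Dp.natDegree ≤ s - 1 := by
      rw [Polynomial.natDegree_le_iff_coeff_eq_zero]
      intro m hm
      rw [hcD]
      have : m = s ∨ m = s + 1 ∨ s + 1 < m := by omega
      rcases this with h | h | h
      · subst h
        rw [if_neg (by omega), if_pos rfl, hC2W]
        ring
      · subst h
        rw [if_pos rfl, if_neg (by omega), hC1W]
        ring
      · rw [if_neg (by omega), if_neg (by omega),
          coeff_eq_zero_of_natDegree_lt (lt_of_le_of_lt hWdeg h)]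
        ring
    set KJ : ℝ := ∑ i ∈ Finset.range (s - 1 + 1), |Dp.coeff i| with hKJ
    set D0 : ℝ := ∑ k ∈ Finset.range (p1 + p2),
      |gEll τ p1 p2 k - (Qpoly τ p1 p2).eval (k : ℝ)| with hD0
    have hKJ0 : 0 ≤ KJ := Finset.sum_nonneg fun i _ => abs_nonneg _
    have hD00 : 0 ≤ D0 := Finset.sum_nonneg fun i _ => abs_nonneg _
    refine ⟨KJ + D0 + 1, by positivity, fun N hN => ?_⟩
    have hN1 : (1:ℝ) ≤ (N:ℝ) := by exact_mod_cast hN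
    -- remainder bound
    have hzero : ∀ k, p1 + p2 ≤ k → gEll τ p1 p2 k - (Qpoly τ p1 p2).eval (k : ℝ) = 0 :=
      fun k hk => by rw [gEll_eq_eval τ p1 p2 hpar k hk]; ring
    have hremsum : ∑ k ∈ Finset.range N, (gEll τ p1 p2 k - (Qpoly τ p1 p2).eval (k : ℝ))
        = ∑ k ∈ Finset.range (min N (p1 + p2)),
            (gEll τ p1 p2 k - (Qpoly τ p1 p2).eval (k : ℝ)) := by
      refine (Finset.sum_subset (Finset.range_subset_range.mpr (min_le_left _ _)) ?_).symm
      intro k hk hk2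
      simp only [Finset.mem_range] at hk hk2
      exact hzero k (by omega)
    have hrem : |∑ k ∈ Finset.range N, (gEll τ p1 p2 k - (Qpoly τ p1 p2).eval (k : ℝ))| ≤ D0 := by
      rw [hremsum]
      refine (Finset.abs_sum_le_sum_abs _ _).trans ?_
      rw [hD0]
      refine Finset.sum_le_sum_of_subset_of_nonneg
        (Finset.range_subset_range.mpr (min_le_right _ _)) fun k _ _ => abs_nonneg _
    -- decomposition of Mell
    have hMell : Mell τ p1 p2 N = W.eval (N : ℝ)
        + ∑ k ∈ Finset.range N, (gEll τ p1 p2 k - (Qpoly τ p1 p2).eval (k : ℝ)) := by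
      rw [Mell_eq, hWeval N, ← Finset.sum_add_distrib]
      exact Finset.sum_congr rfl fun k _ => by ring
    have hDeval : Dp.eval (N : ℝ)
        = W.eval (N : ℝ) - C1 τ p1 p2 * (N : ℝ) ^ (s + 1) - C2 τ p1 p2 * (N : ℝ) ^ s := by
      rw [hDp]
      simp [eval_sub, eval_mul, eval_pow]
    have hDbound : |Dp.eval (N : ℝ)| ≤ KJ * (N : ℝ) ^ (s - 1) :=
      eval_abs_le Dp (s - 1) hDdeg N hN
    have hpow1 : (1:ℝ) ≤ (N:ℝ) ^ (s - 1) := one_le_pow₀ hN1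
    have hexp : ((s : ℕ) : ℤ) - 1 = ((s - 1 : ℕ) : ℤ) := by omega
    rw [hexp, zpow_natCast]
    have key : Mell τ p1 p2 N - C1 τ p1 p2 * (N : ℝ) ^ (s + 1) - C2 τ p1 p2 * (N : ℝ) ^ s
        = Dp.eval (N : ℝ)
          + ∑ k ∈ Finset.range N, (gEll τ p1 p2 k - (Qpoly τ p1 p2).eval (k : ℝ)) := by
      rw [hMell, hDeval]
      ring
    rw [key]
    refine (abs_add_le _ _).trans ?_
    have : D0 ≤ D0 * (N : ℝ) ^ (s - 1) := by nlinarith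
    calc |Dp.eval (N : ℝ)|
        + |∑ k ∈ Finset.range N, (gEll τ p1 p2 k - (Qpoly τ p1 p2).eval (k : ℝ))|
        ≤ KJ * (N : ℝ) ^ (s - 1) + D0 := by linarith
      _ ≤ (KJ + D0 + 1) * (N : ℝ) ^ (s - 1) := by nlinarith
end
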